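/- arXiv:0901.2291 — 7 statements merged into one kernel-verified Lean document; each statement's English description precedes it below -/
import Mathlib

section
/- Let B be an abelian group, δ an ordinal, and ⟨A_α : α ≤ δ⟩ a continuous increasing chain of subgroups of B with A_δ = B, such that A_0 is cotorsionfree and for every α < δ the quotient group A_{α+1}/A_α is cotorsionfree. Then B is cotorsionfree. -/
open Function

/-- An abelian group is cotorsionfree if it has no subgroup isomorphic to `ℚ`,
to `ℤ/pℤ` for a prime `p`, or to the additive group of the `p`-adic integers. -/
def Cotorsionfree (G : Type*) [AddCommGroup G] : Prop :=
  (¬ ∃ H : AddSubgroup G, Nonempty (H ≃+ ℚ)) ∧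
  (∀ p : ℕ, p.Prime → ¬ ∃ H : AddSubgroup G, Nonempty (H ≃+ ZMod p)) ∧
  (∀ (p : ℕ) [Fact p.Prime], ¬ ∃ H : AddSubgroup G, Nonempty (H ≃+ PadicInt p))

section Helpers

variable {G : Type*} [AddCommGroup G]

lemma cf_noQ (h : Cotorsionfree G) (g : ℚ →+ G) (hg : Injective g) : False :=
  h.1 ⟨g.range, ⟨(AddMonoidHom.ofInjective hg).symm⟩⟩

lemma cf_noZMod (h : Cotorsionfree G) {q : ℕ} (hq : q.Prime) (g : ZMod q →+ G)
    (hg : Injective g) : False :=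
  h.2.1 q hq ⟨g.range, ⟨(AddMonoidHom.ofInjective hg).symm⟩⟩

lemma cf_noPadic (h : Cotorsionfree G) {q : ℕ} [Fact q.Prime] (g : PadicInt q →+ G)
    (hg : Injective g) : False :=
  h.2.2 q ⟨g.range, ⟨(AddMonoidHom.ofInjective hg).symm⟩⟩

lemma cf_mk (h1 : ∀ g : ℚ →+ G, ¬ Injective g)
    (h2 : ∀ q : ℕ, q.Prime → ∀ g : ZMod q →+ G, ¬ Injective g)
    (h3 : ∀ (q : ℕ) [Fact q.Prime], ∀ g : PadicInt q →+ G, ¬ Injective g) :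
    Cotorsionfree G := by
  refine ⟨?_, ?_, ?_⟩
  · rintro ⟨H, ⟨e⟩⟩
    exact h1 (H.subtype.comp e.symm.toAddMonoidHom)
      (Subtype.coe_injective.comp e.symm.injective)
  · rintro q hq ⟨H, ⟨e⟩⟩
    exact h2 q hq (H.subtype.comp e.symm.toAddMonoidHom)
      (Subtype.coe_injective.comp e.symm.injective)
  · rintro q hq ⟨H, ⟨e⟩⟩
    exact h3 q (H.subtype.comp e.symm.toAddMonoidHom)
      (Subtype.coe_injective.comp e.symm.injective)

lemma exists_zmod_inj {x : G} (hx : x ≠ 0) {n : ℤ} (hn : n ≠ 0) (hnx : n • x = 0) :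
    ∃ q : ℕ, q.Prime ∧ ∃ g : ZMod q →+ G, Injective g := by
  have hord : (addOrderOf x : ℤ) ∣ n := addOrderOf_dvd_iff_zsmul_eq_zero.mpr hnx
  have hm0 : addOrderOf x ≠ 0 := by
    rintro h
    rw [h] at hord
    exact hn (by simpa using hord)
  have hm1 : addOrderOf x ≠ 1 := fun h => hx (AddMonoid.addOrderOf_eq_one_iff.mp h)
  obtain ⟨q, hq, hdvd⟩ := Nat.exists_prime_and_dvd hm1
  set y : G := (addOrderOf x / q) • x with hy
  have hd0 : addOrderOf x / q ≠ 0 := by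
    have := Nat.div_pos (Nat.le_of_dvd (Nat.pos_of_ne_zero hm0) hdvd) hq.pos
    omega
  have horder : addOrderOf y = q := by
    rw [hy, addOrderOf_nsmul_of_dvd hd0 (Nat.div_dvd_of_dvd hdvd), Nat.div_div_self hdvd hm0]
  have hqy : (zmultiplesHom G y) (q : ℤ) = 0 := by
    show (q : ℤ) • y = 0
    rw [← horder]
    exact addOrderOf_dvd_iff_zsmul_eq_zero.mp (by exact_mod_cast dvd_refl _)
  refine ⟨q, hq, ZMod.lift q ⟨zmultiplesHom G y, hqy⟩, ?_⟩
  rw [injective_iff_map_eq_zero]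
  intro a ha
  obtain ⟨k, rfl⟩ := ZMod.intCast_surjective a
  rw [ZMod.lift_coe] at ha
  have hky : k • y = 0 := ha
  have : (q : ℤ) ∣ k := by
    rw [← horder]
    exact addOrderOf_dvd_iff_zsmul_eq_zero.mpr hky
  exact (ZMod.intCast_zmod_eq_zero_iff_dvd k q).mpr this

lemma cf_tf (h : Cotorsionfree G) : ∀ (x : G) (n : ℤ), n ≠ 0 → n • x = 0 → x = 0 := by
  intro x n hn hnx
  by_contra hx
  obtain ⟨q, hq, g, hg⟩ := exists_zmod_inj hx hn hnx
  exact cf_noZMod h hq g hg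

lemma exists_rat_inj {w₀ : G}
    (htf : ∀ (x : G) (n : ℤ), n ≠ 0 → n • x = 0 → x = 0)
    (hw : w₀ ≠ 0)
    (hdiv : ∀ m n : ℤ, n ≠ 0 → ∃ u : G, n • u = m • w₀) :
    ∃ g : ℚ →+ G, Injective g := by
  have hden : ∀ q : ℚ, ((q.den : ℤ)) ≠ 0 := fun q => by exact_mod_cast q.den_ne_zero
  choose F hF using hdiv
  set f : ℚ → G := fun q => F q.num (q.den : ℤ) (hden q) with hf
  have hkey : ∀ q : ℚ, (q.den : ℤ) • f q = q.num • w₀ := fun q => hF _ _ _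
  have hratid : ∀ q : ℚ, (q.den : ℚ) * q = (q.num : ℚ) := by
    intro q
    have h1 : (q.den : ℚ) ≠ 0 := by exact_mod_cast q.den_ne_zero
    rw [mul_comm]
    exact ((div_eq_iff h1).mp (Rat.num_div_den q)).symm
  have hadd : ∀ q r : ℚ, f (q + r) = f q + f r := by
    intro q r
    have hQid : ((q+r).num : ℚ) * ((q.den : ℚ) * (r.den : ℚ)) =
        ((q.num : ℚ) * (r.den : ℚ) + (r.num : ℚ) * (q.den : ℚ)) * ((q+r).den : ℚ) := by
      rw [← hratid (q+r), ← hratid q, ← hratid r]; ring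
    have hidZ : (q+r).num * ((q.den : ℤ) * (r.den : ℤ)) =
        (q.num * (r.den : ℤ) + r.num * (q.den : ℤ)) * ((q+r).den : ℤ) := by
      exact_mod_cast hQid
    set d : ℤ := ((q + r).den : ℤ) with hd
    set n : ℤ := (q + r).num
    set d1 : ℤ := (q.den : ℤ); set n1 : ℤ := q.num
    set d2 : ℤ := (r.den : ℤ); set n2 : ℤ := r.num
    have hcalc : (d * (d1 * d2)) • (f (q + r) - f q - f r) = 0 := by
      rw [zsmul_sub, zsmul_sub]
      have c0 : (d * (d1 * d2)) • f (q + r) = ((d1 * d2) * n) • w₀ := by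
        rw [mul_comm d (d1 * d2), mul_zsmul, hkey (q + r), ← mul_zsmul]
      have c1 : (d * (d1 * d2)) • f q = ((d * d2) * n1) • w₀ := by
        rw [show d * (d1 * d2) = (d * d2) * d1 by ring, mul_zsmul, hkey q, ← mul_zsmul]
      have c2 : (d * (d1 * d2)) • f r = ((d * d1) * n2) • w₀ := by
        rw [show d * (d1 * d2) = (d * d1) * d2 by ring, mul_zsmul, hkey r, ← mul_zsmul]
      rw [c0, c1, c2]
      have h9 : (d1 * d2) * n = (d * d2) * n1 + (d * d1) * n2 := by linarith [hidZ]
      rw [h9, add_zsmul]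
      abel
    have hne : d * (d1 * d2) ≠ 0 :=
      mul_ne_zero (hden (q+r)) (mul_ne_zero (hden q) (hden r))
    have := htf _ _ hne hcalc
    have h10 : f (q + r) - f q - f r = 0 := this
    have := sub_eq_zero.mp (by rwa [sub_sub] at h10)
    rw [this]
  set g : ℚ →+ G := AddMonoidHom.mk' f hadd with hg
  refine ⟨g, ?_⟩
  rw [injective_iff_map_eq_zero]
  intro a ha
  have h1 : (a.den : ℤ) • f a = a.num • w₀ := hkey a
  have h2 : f a = 0 := ha
  rw [h2, smul_zero] at h1
  have h3 : a.num = 0 := by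
    by_contra h
    exact hw (htf w₀ a.num h h1.symm)
  exact Rat.num_eq_zero.mp h3

end Helpers

section Padic

variable {p : ℕ} [Fact p.Prime]

lemma padic_prime_step {q : ℕ} (hq : q.Prime) {k₀ : PadicInt p} (hk : IsUnit k₀)
    (z : PadicInt p) : ∃ w : PadicInt p, ∃ m : ℤ, (q : ℤ) • w = z + m • k₀ := by
  by_cases hqp : q = p
  · subst hqp
    obtain ⟨u, hu⟩ := hk
    set t : PadicInt q := (↑u⁻¹ : PadicInt q) * z with ht
    have hsp := PadicInt.appr_spec 1 t
    rw [Ideal.mem_span_singleton, pow_one] at hsp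
    obtain ⟨c, hc⟩ := hsp
    refine ⟨k₀ * c, -(t.appr 1 : ℤ), ?_⟩
    have hk₀t : k₀ * t = z := by
      rw [ht, ← hu, ← mul_assoc, Units.mul_inv, one_mul]
    have h2 : ((q : ℕ) : PadicInt q) * (k₀ * c) = z - ((t.appr 1 : ℕ) : PadicInt q) * k₀ := by
      calc ((q : ℕ) : PadicInt q) * (k₀ * c) = k₀ * (((q : ℕ) : PadicInt q) * c) := by ring
        _ = k₀ * (t - ((t.appr 1 : ℕ) : PadicInt q)) := by rw [← hc]
        _ = z - ((t.appr 1 : ℕ) : PadicInt q) * k₀ := by rw [mul_sub, hk₀t]; ring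
    rw [zsmul_eq_mul, zsmul_eq_mul]
    push_cast
    push_cast at h2
    rw [h2]
    ring
  · have hnd : ¬ ((p : ℤ) ∣ (q : ℤ)) := by
      rw [Int.natCast_dvd_natCast]
      intro hdvd
      rcases (Nat.Prime.eq_one_or_self_of_dvd hq p hdvd) with h | h
      · exact (Fact.out : p.Prime).ne_one h
      · exact hqp h.symm
    have hnorm : ‖((q : ℤ) : PadicInt p)‖ = 1 := by
      refine le_antisymm (PadicInt.norm_le_one _) ?_
      by_contra hlt
      push_neg at hlt
      exact hnd ((PadicInt.norm_int_lt_one_iff_dvd _).mp hlt)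
    have hu : IsUnit ((q : ℤ) : PadicInt p) := PadicInt.isUnit_iff.mpr hnorm
    obtain ⟨u, hu⟩ := hu
    refine ⟨(↑u⁻¹ : PadicInt p) * z, 0, ?_⟩
    rw [zsmul_eq_mul, zero_zsmul, add_zero, ← hu, ← mul_assoc, Units.mul_inv, one_mul]

lemma padic_pure_div (K : AddSubgroup (PadicInt p))
    (hKne : ∃ y ∈ K, y ≠ (0 : PadicInt p))
    (hpure : ∀ (x : PadicInt p) (n : ℤ), n ≠ 0 → n • x ∈ K → x ∈ K) :
    ∀ (z : PadicInt p) (n : ℤ), n ≠ 0 → ∃ w, n • w - z ∈ K := by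
  obtain ⟨y, hyK, hy0⟩ := hKne
  set k₀ : PadicInt p := ((PadicInt.unitCoeff hy0 : (PadicInt p)ˣ) : PadicInt p) with hk₀
  have hk₀K : k₀ ∈ K := by
    apply hpure k₀ ((p : ℤ) ^ (y.valuation))
      (pow_ne_zero _ (by exact_mod_cast (Fact.out : p.Prime).ne_zero))
    have heq : ((p : ℤ) ^ (y.valuation)) • k₀ = y := by
      rw [zsmul_eq_mul]
      push_cast
      rw [mul_comm]
      exact (PadicInt.unitCoeff_spec hy0).symm
    rw [heq]; exact hyK
  have hk₀unit : IsUnit k₀ := (PadicInt.unitCoeff hy0).isUnit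
  have hstep : ∀ (q : ℕ), q.Prime → ∀ z : PadicInt p, ∃ w, (q : ℤ) • w - z ∈ K := by
    intro q hq z
    obtain ⟨w, m, hw⟩ := padic_prime_step hq hk₀unit z
    refine ⟨w, ?_⟩
    rw [hw]
    simpa using K.zsmul_mem hk₀K m
  suffices h : ∀ N : ℕ, ∀ n : ℤ, n.natAbs = N → n ≠ 0 → ∀ z : PadicInt p, ∃ w, n • w - z ∈ K by
    intro z n hn
    exact h n.natAbs n rfl hn z
  intro N
  induction N using Nat.strong_induction_on with
  | _ N ih =>
    intro n hN hn z
    rcases eq_or_ne n 1 with rfl | h1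
    · exact ⟨z, by simpa using K.zero_mem⟩
    rcases eq_or_ne n (-1) with rfl | hm1
    · exact ⟨-z, by simpa using K.zero_mem⟩
    have hnab : n.natAbs ≠ 1 := by
      intro h
      rcases Int.natAbs_eq_iff.mp h with h' | h' <;> simp_all
    obtain ⟨q, hq, hdvd⟩ := Nat.exists_prime_and_dvd hnab
    have hqn : (q : ℤ) ∣ n := by
      have h1 : (q : ℤ) ∣ (n.natAbs : ℤ) := Int.natCast_dvd_natCast.mpr hdvd
      exact h1.trans (Int.natAbs_dvd.mpr dvd_rfl)
    obtain ⟨n', rfl⟩ := hqn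
    have hn' : n' ≠ 0 := by rintro rfl; simp at hn
    have hlt : n'.natAbs < N := by
      rw [← hN, Int.natAbs_mul, Int.natAbs_natCast]
      have h2 : 2 ≤ q := hq.two_le
      have h3 : 1 ≤ n'.natAbs := Int.natAbs_pos.mpr hn'
      nlinarith
    obtain ⟨w1, hw1⟩ := hstep q hq z
    obtain ⟨w, hw⟩ := ih n'.natAbs hlt n' rfl hn' w1
    refine ⟨w, ?_⟩
    have hsplit : ((q : ℤ) * n') • w - z = (q : ℤ) • (n' • w - w1) + ((q : ℤ) • w1 - z) := by
      rw [mul_zsmul, zsmul_sub]; abel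
    rw [hsplit]
    exact K.add_mem (K.zsmul_mem hw _) hw1

lemma cf_padic_hom_zero {H : Type*} [AddCommGroup H] (hcf : Cotorsionfree H)
    (f : PadicInt p →+ H) : ∀ z, f z = 0 := by
  have htf := cf_tf hcf
  by_contra hcon
  push_neg at hcon
  obtain ⟨x₀, hx₀⟩ := hcon
  by_cases hker : ∀ z : PadicInt p, f z = 0 → z = 0
  · exact cf_noPadic hcf f ((injective_iff_map_eq_zero f).mpr hker)
  · push_neg at hker
    obtain ⟨y, hy0, hyne⟩ := hker
    have hpure : ∀ (x : PadicInt p) (n : ℤ), n ≠ 0 → n • x ∈ f.ker → x ∈ f.ker := by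
      intro x n hn hx
      rw [AddMonoidHom.mem_ker] at hx ⊢
      rw [map_zsmul] at hx
      exact htf _ n hn hx
    have hdiv := padic_pure_div f.ker ⟨y, AddMonoidHom.mem_ker.mpr hy0, hyne⟩ hpure
    have hdiv' : ∀ m n : ℤ, n ≠ 0 → ∃ u : H, n • u = m • (f x₀) := by
      intro m n hn
      obtain ⟨w, hw⟩ := hdiv (m • x₀) n hn
      rw [AddMonoidHom.mem_ker, map_sub, sub_eq_zero, map_zsmul, map_zsmul] at hw
      exact ⟨f w, hw⟩
    obtain ⟨g, hg⟩ := exists_rat_inj htf hx₀ hdiv'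
    exact cf_noQ hcf g hg

end Padic

lemma rat_den_smul (q : ℚ) : ((q.den : ℤ)) • q = q.num • (1 : ℚ) := by
  rw [zsmul_eq_mul, zsmul_eq_mul, mul_one]
  exact_mod_cast (show ((q.den : ℚ)) * q = (q.num : ℚ) from by
    rw [mul_comm]
    exact ((div_eq_iff (by exact_mod_cast q.den_ne_zero)).mp (Rat.num_div_den q)).symm)

/-- if `⟨A_α : α ≤ δ⟩` is a continuous increasing chain of subgroups of `B`
with `A_δ = B`, `A_0` cotorsionfree, and each successor quotient `A_{α+1}/A_α`
cotorsionfree, then `B` is cotorsionfree. -/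
theorem statement1 (B : Type*) [AddCommGroup B] (δ : Ordinal)
    (A : Ordinal → AddSubgroup B)
    (hmono : ∀ α β : Ordinal, α ≤ β → β ≤ δ → A α ≤ A β)
    (hcont : ∀ ξ ≤ δ, Order.IsSuccLimit ξ → ((A ξ : Set B) = ⋃ ζ ∈ Set.Iio ξ, (A ζ : Set B)))
    (htop : A δ = ⊤)
    (h0 : Cotorsionfree (A 0))
    (hquot : ∀ α < δ, Cotorsionfree (A (α + 1) ⧸ (A α).addSubgroupOf (A (α + 1)))) :
    Cotorsionfree B := by
  classical
  -- torsion-freeness of successor quotients, stated in `B`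
  have qtf : ∀ γ, γ < δ → ∀ (x : B), x ∈ A (γ + 1) → ∀ n : ℤ, n ≠ 0 →
      n • x ∈ A γ → x ∈ A γ := by
    intro γ hγ x hx n hn hnx
    have h1 : n • (QuotientAddGroup.mk' ((A γ).addSubgroupOf (A (γ + 1))) ⟨x, hx⟩) = 0 := by
      rw [← map_zsmul, QuotientAddGroup.mk'_apply, QuotientAddGroup.eq_zero_iff,
        AddSubgroup.mem_addSubgroupOf]
      show ((n • (⟨x, hx⟩ : A (γ + 1)) : A (γ + 1)) : B) ∈ A γ
      have : ((n • (⟨x, hx⟩ : A (γ + 1)) : A (γ + 1)) : B) = n • x := by push_cast; ring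
      rw [this]; exact hnx
    have h2 := cf_tf (hquot γ hγ) _ n hn h1
    rw [QuotientAddGroup.mk'_apply, QuotientAddGroup.eq_zero_iff,
      AddSubgroup.mem_addSubgroupOf] at h2
    exact h2
  -- purity of the chain
  have pure_chain : ∀ γ, γ ≤ δ → ∀ ζ, ζ ≤ γ → ∀ x : B, x ∈ A γ → ∀ n : ℤ, n ≠ 0 →
      n • x ∈ A ζ → x ∈ A ζ := by
    intro γ
    induction γ using Ordinal.induction with
    | h γ IH =>
      intro hγδ ζ hζγ x hxγ n hn hnx
      rcases eq_or_lt_of_le hζγ with rfl | hζlt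
      · exact hxγ
      rcases Ordinal.zero_or_succ_or_isSuccLimit γ with rfl | ⟨γ', rfl⟩ | hlim
      · exact absurd hζlt (fun h => not_lt_zero h)
      · have he : Order.succ γ' = γ' + 1 := (Ordinal.add_one_eq_succ γ').symm
        have hζγ' : ζ ≤ γ' := Order.lt_succ_iff.mp hζlt
        have hγ'δ : γ' < δ := lt_of_lt_of_le (Order.lt_succ γ') hγδ
        rw [he] at hxγ
        have hx' : x ∈ A γ' := qtf γ' hγ'δ x hxγ n hn (hmono ζ γ' hζγ' hγ'δ.le hnx)
        exact IH γ' (Order.lt_succ γ') hγ'δ.le ζ hζγ' x hx' n hn hnx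
      · have hU := hcont γ hγδ hlim
        have hxU : x ∈ ⋃ ρ ∈ Set.Iio γ, (A ρ : Set B) := by rw [← hU]; exact hxγ
        simp only [Set.mem_iUnion, SetLike.mem_coe, Set.mem_Iio, exists_prop] at hxU
        obtain ⟨ρ, hργ, hxρ⟩ := hxU
        have hρ'γ : max ρ ζ < γ := max_lt hργ hζlt
        have hxρ' : x ∈ A (max ρ ζ) :=
          hmono ρ (max ρ ζ) (le_max_left _ _) (hρ'γ.le.trans hγδ) hxρ
        exact IH (max ρ ζ) hρ'γ (hρ'γ.le.trans hγδ) ζ (le_max_right _ _) x hxρ' n hn hnx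
  -- main transfinite induction
  have main : ∀ β, β ≤ δ →
      (∀ g : ℚ →+ B, Injective g → ¬ (∀ z, g z ∈ A β)) ∧
      (∀ q : ℕ, q.Prime → ∀ g : ZMod q →+ B, Injective g → ¬ (∀ z, g z ∈ A β)) ∧
      (∀ (q : ℕ) [Fact q.Prime], ∀ g : PadicInt q →+ B, Injective g →
        ¬ (∀ z, g z ∈ A β)) := by
    intro β
    induction β using Ordinal.induction with
    | h β IH =>
      intro hβδ
      rcases Ordinal.zero_or_succ_or_isSuccLimit β with rfl | ⟨γ, rfl⟩ | hlim
      · -- base case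
        refine ⟨?_, ?_, ?_⟩
        · intro g hg hr
          exact cf_noQ h0 (g.codRestrict (A 0) hr)
            (fun a b hab => hg (congrArg Subtype.val hab))
        · intro q hq g hg hr
          exact cf_noZMod h0 hq (g.codRestrict (A 0) hr)
            (fun a b hab => hg (congrArg Subtype.val hab))
        · intro q hq g hg hr
          exact cf_noPadic h0 (g.codRestrict (A 0) hr)
            (fun a b hab => hg (congrArg Subtype.val hab))
      · -- successor case
        have he : Order.succ γ = γ + 1 := (Ordinal.add_one_eq_succ γ).symm
        rw [he]
        rw [he] at hβδ
        have hγδ : γ < δ := by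
          rw [Ordinal.add_one_eq_succ] at hβδ
          exact Order.succ_le_iff.mp hβδ
        have IHγ := IH γ (by rw [he]; rw [Ordinal.add_one_eq_succ]; exact Order.lt_succ γ) hγδ.le
        refine ⟨?_, ?_, ?_⟩
        · -- ℚ
          intro g hg hr
          by_cases h1 : g 1 ∈ A γ
          · apply IHγ.1 g hg
            intro z
            have h2 : ((z.den : ℤ)) • g z ∈ A γ := by
              rw [← map_zsmul, rat_den_smul, map_zsmul]
              exact (A γ).zsmul_mem h1 _
            exact qtf γ hγδ (g z) (hr z) _ (by exact_mod_cast z.den_ne_zero) h2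
          · set φ := (QuotientAddGroup.mk' ((A γ).addSubgroupOf (A (γ + 1)))).comp
              (g.codRestrict (A (γ + 1)) hr) with hφ
            have hφinj : Injective φ := by
              rw [injective_iff_map_eq_zero]
              intro a ha
              by_contra ha0
              have haγ : g a ∈ A γ := by
                rw [hφ] at ha
                simpa [QuotientAddGroup.eq_zero_iff, AddSubgroup.mem_addSubgroupOf] using ha
              have hnum : a.num ≠ 0 := fun h => ha0 (Rat.num_eq_zero.mp h)
              have h2 : a.num • g 1 ∈ A γ := by
                rw [← map_zsmul, ← rat_den_smul a, map_zsmul]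
                exact (A γ).zsmul_mem haγ _
              exact h1 (qtf γ hγδ (g 1) (hr 1) a.num hnum h2)
            exact cf_noQ (hquot γ hγδ) φ hφinj
        · -- ZMod
          intro q hq g hg hr
          by_cases h1 : g 1 ∈ A γ
          · apply IHγ.2.1 q hq g hg
            intro z
            obtain ⟨k, rfl⟩ := ZMod.intCast_surjective z
            have hk1 : ((k : ℤ) • (1 : ZMod q)) = (k : ZMod q) := by rw [zsmul_eq_mul, mul_one]
            rw [← hk1, map_zsmul]
            exact (A γ).zsmul_mem h1 k
          · set ξ := (QuotientAddGroup.mk' ((A γ).addSubgroupOf (A (γ + 1)))) ⟨g 1, hr 1⟩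
              with hξ
            have hξ0 : ξ ≠ 0 := by
              rw [hξ, QuotientAddGroup.mk'_apply, Ne, QuotientAddGroup.eq_zero_iff,
                AddSubgroup.mem_addSubgroupOf]
              exact h1
            have hg10 : (q : ℤ) • g 1 = 0 := by
              have hz : ((q : ℤ) • (1 : ZMod q)) = 0 := by
                rw [zsmul_eq_mul, mul_one]
                exact_mod_cast ZMod.natCast_self q
              rw [← map_zsmul, hz, map_zero]
            have hqξ : (q : ℤ) • ξ = 0 := by
              rw [hξ, ← map_zsmul, QuotientAddGroup.mk'_apply, QuotientAddGroup.eq_zero_iff,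
                AddSubgroup.mem_addSubgroupOf]
              show ((((q : ℤ) • (⟨g 1, hr 1⟩ : A (γ + 1))) : A (γ + 1)) : B) ∈ A γ
              have : ((((q : ℤ) • (⟨g 1, hr 1⟩ : A (γ + 1))) : A (γ + 1)) : B) = (q : ℤ) • g 1 := by
                push_cast; ring
              rw [this, hg10]
              exact (A γ).zero_mem
            obtain ⟨l, hl, g', hg'⟩ := exists_zmod_inj hξ0
              (by exact_mod_cast hq.ne_zero : (q : ℤ) ≠ 0) hqξ
            exact cf_noZMod (hquot γ hγδ) hl g' hg'
        · -- Padic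
          intro q hq g hg hr
          set φ := (QuotientAddGroup.mk' ((A γ).addSubgroupOf (A (γ + 1)))).comp
            (g.codRestrict (A (γ + 1)) hr) with hφ
          have h0' := cf_padic_hom_zero (hquot γ hγδ) φ
          apply IHγ.2.2 q g hg
          intro z
          have := h0' z
          rw [hφ] at this
          simpa [QuotientAddGroup.eq_zero_iff, AddSubgroup.mem_addSubgroupOf] using this
      · -- limit case
        have hgetζ : ∀ (x : B), x ∈ A β → ∃ ζ, ζ < β ∧ x ∈ A ζ := by
          intro x hx
          have hU := hcont β hβδ hlim
          have hxU : x ∈ ⋃ ρ ∈ Set.Iio β, (A ρ : Set B) := by rw [← hU]; exact hx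
          simp only [Set.mem_iUnion, SetLike.mem_coe, Set.mem_Iio, exists_prop] at hxU
          exact hxU
        refine ⟨?_, ?_, ?_⟩
        · intro g hg hr
          obtain ⟨ζ, hζβ, h1ζ⟩ := hgetζ (g 1) (hr 1)
          apply (IH ζ hζβ (hζβ.le.trans hβδ)).1 g hg
          intro z
          have h2 : ((z.den : ℤ)) • g z ∈ A ζ := by
            rw [← map_zsmul, rat_den_smul, map_zsmul]
            exact (A ζ).zsmul_mem h1ζ _
          exact pure_chain β hβδ ζ hζβ.le (g z) (hr z) _ (by exact_mod_cast z.den_ne_zero) h2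
        · intro q hq g hg hr
          obtain ⟨ζ, hζβ, h1ζ⟩ := hgetζ (g 1) (hr 1)
          apply (IH ζ hζβ (hζβ.le.trans hβδ)).2.1 q hq g hg
          intro z
          obtain ⟨k, rfl⟩ := ZMod.intCast_surjective z
          have hk1 : ((k : ℤ) • (1 : ZMod q)) = (k : ZMod q) := by rw [zsmul_eq_mul, mul_one]
          rw [← hk1, map_zsmul]
          exact (A ζ).zsmul_mem h1ζ k
        · -- Padic limit case
          intro q hq g hg hr
          obtain ⟨ζ0, hζ0β, h1ζ0⟩ := hgetζ (g 1) (hr 1)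
          have Kpure : ∀ ζ, ζ < β → ∀ (z : PadicInt q) (n : ℤ), n ≠ 0 →
              g (n • z) ∈ A ζ → g z ∈ A ζ := by
            intro ζ hζ z n hn hz
            rw [map_zsmul] at hz
            exact pure_chain β hβδ ζ hζ.le (g z) (hr z) n hn hz
          set K0 : AddSubgroup (PadicInt q) := (A ζ0).comap g with hK0
          have hdiv0 : ∀ (z : PadicInt q) (n : ℤ), n ≠ 0 → ∃ w, n • w - z ∈ K0 := by
            apply padic_pure_div K0 ⟨1, ?_, one_ne_zero⟩ ?_
            · exact AddSubgroup.mem_comap.mpr h1ζ0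
            · intro z n hn hz
              exact AddSubgroup.mem_comap.mpr
                (Kpure ζ0 hζ0β z n hn (AddSubgroup.mem_comap.mp hz))
          have hex₀ : ∃ x₀ : PadicInt q, g x₀ ∉ A ζ0 := by
            by_contra hcon
            push_neg at hcon
            exact (IH ζ0 hζ0β (hζ0β.le.trans hβδ)).2.2 q g hg hcon
          obtain ⟨x₀, hx₀⟩ := hex₀
          set R : Set (PadicInt q) := {x | ∃ m n : ℤ, n ≠ 0 ∧ n • x - m • x₀ ∈ K0} with hR
          have hx₀R : x₀ ∈ R := ⟨1, 1, one_ne_zero, by simpa using K0.zero_mem⟩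
          have hRsmul : ∀ x ∈ R, ∀ m : ℤ, m • x ∈ R := by
            rintro x ⟨mx, nx, hnx, hmem⟩ m
            refine ⟨m * mx, nx, hnx, ?_⟩
            have : nx • (m • x) - (m * mx) • x₀ = m • (nx • x - mx • x₀) := by
              have e1 : nx • (m • x) = m • (nx • x) := by
                rw [← mul_zsmul x nx m, mul_comm, mul_zsmul]
              rw [zsmul_sub, mul_zsmul x₀ m mx, e1]
            rw [this]
            exact K0.zsmul_mem hmem m
          set T : Set Ordinal := {ζ | ζ < β ∧ ∃ y ∈ R, g y ∈ A ζ ∧ g y ∉ A ζ0} with hT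
          have hTne : T.Nonempty := by
            obtain ⟨ζ', hζ'β, hx₀ζ'⟩ := hgetζ (g x₀) (hr x₀)
            exact ⟨ζ', hζ'β, x₀, hx₀R, hx₀ζ', hx₀⟩
          have hζ2T : sInf T ∈ T := csInf_mem hTne
          obtain ⟨hζ2β, y, hyR, hyζ2, hyζ0⟩ := hζ2T
          have hζ0ζ2 : ζ0 < sInf T := by
            by_contra hcon
            push_neg at hcon
            exact hyζ0 (hmono (sInf T) ζ0 hcon (hζ0β.le.trans hβδ) hyζ2)
          have hζ2nl : ¬ Order.IsSuccLimit (sInf T) := by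
            intro hl
            have hU := hcont (sInf T) (hζ2β.le.trans hβδ) hl
            have h5 : g y ∈ ⋃ ρ ∈ Set.Iio (sInf T), (A ρ : Set B) := by
              rw [← hU]; exact hyζ2
            simp only [Set.mem_iUnion, SetLike.mem_coe, Set.mem_Iio, exists_prop] at h5
            obtain ⟨ζ', hζ'ζ2, hζ'⟩ := h5
            have hmemT : ζ' ∈ T := ⟨hζ'ζ2.trans hζ2β, y, hyR, hζ', hyζ0⟩
            exact absurd (csInf_le' hmemT) (not_le.mpr hζ'ζ2)
          rcases Ordinal.zero_or_succ_or_isSuccLimit (sInf T) with h00 | ⟨η, hη⟩ | hl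
          · exact absurd (h00 ▸ hζ0ζ2) (fun h => not_lt_zero h)
          swap
          · exact absurd hl hζ2nl
          rw [← Ordinal.add_one_eq_succ, eq_comm] at hη
          have hηζ2 : η < sInf T := by
            rw [hη, Ordinal.add_one_eq_succ]; exact Order.lt_succ η
          have hηβ : η < β := hηζ2.trans hζ2β
          have hηδ : η < δ := lt_of_lt_of_le hηβ hβδ
          have hζ0η : ζ0 ≤ η := by
            have h6 := hζ0ζ2
            rw [hη, Ordinal.add_one_eq_succ] at h6
            exact Order.lt_succ_iff.mp h6
          have hmin : ∀ z ∈ R, g z ∈ A η → g z ∈ A ζ0 := by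
            intro z hz hzη
            by_contra hcon
            have hmemT : η ∈ T := ⟨hηβ, z, hz, hzη, hcon⟩
            exact absurd (csInf_le' hmemT) (not_le.mpr hηζ2)
          have hη1β : η + 1 < β := by rw [← hη]; exact hζ2β
          have hyη1 : g y ∈ A (η + 1) := by rw [← hη]; exact hyζ2
          have hw₀ne : (QuotientAddGroup.mk' ((A η).addSubgroupOf (A (η + 1))))
              ⟨g y, hyη1⟩ ≠ 0 := by
            rw [QuotientAddGroup.mk'_apply, Ne, QuotientAddGroup.eq_zero_iff,
              AddSubgroup.mem_addSubgroupOf]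
            intro h
            exact hyζ0 (hmin y hyR h)
          have htfQ := cf_tf (hquot η hηδ)
          have hdivW : ∀ m n : ℤ, n ≠ 0 → ∃ u, n • u =
              m • ((QuotientAddGroup.mk' ((A η).addSubgroupOf (A (η + 1)))) ⟨g y, hyη1⟩) := by
            intro m n hn
            have hmyR : m • y ∈ R := hRsmul y hyR m
            have hmyη1 : g (m • y) ∈ A (η + 1) := by
              rw [map_zsmul]; exact (A (η + 1)).zsmul_mem hyη1 m
            obtain ⟨w, hw⟩ := hdiv0 (m • y) n hn
            have hw' : g (n • w - m • y) ∈ A ζ0 := AddSubgroup.mem_comap.mp hw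
            have hgw : g w ∈ A (η + 1) := by
              apply Kpure (η + 1) hη1β w n hn
              have hsplit : n • w = (m • y) + (n • w - m • y) := by abel
              rw [hsplit, map_add]
              exact (A (η + 1)).add_mem hmyη1
                (hmono ζ0 (η + 1) (hζ0η.trans (le_self_add (a := η) (b := 1)))
                  (le_of_lt (lt_of_lt_of_le hη1β hβδ)) hw')
            refine ⟨(QuotientAddGroup.mk' ((A η).addSubgroupOf (A (η + 1)))) ⟨g w, hgw⟩, ?_⟩
            have hzero : n • ((QuotientAddGroup.mk' ((A η).addSubgroupOf (A (η + 1)))) ⟨g w, hgw⟩)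
                - m • ((QuotientAddGroup.mk' ((A η).addSubgroupOf (A (η + 1)))) ⟨g y, hyη1⟩)
                = 0 := by
              rw [← map_zsmul, ← map_zsmul, ← map_sub, QuotientAddGroup.mk'_apply,
                QuotientAddGroup.eq_zero_iff, AddSubgroup.mem_addSubgroupOf]
              show (((n • (⟨g w, hgw⟩ : A (η + 1)) - m • (⟨g y, hyη1⟩ : A (η + 1))) :
                A (η + 1)) : B) ∈ A η
              have hcoe : (((n • (⟨g w, hgw⟩ : A (η + 1)) - m • (⟨g y, hyη1⟩ : A (η + 1))) :
                  A (η + 1)) : B) = g (n • w - m • y) := by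
                push_cast
                rw [map_sub, map_zsmul, map_zsmul]
              rw [hcoe]
              exact hmono ζ0 η hζ0η hηδ.le hw'
            exact sub_eq_zero.mp hzero
          obtain ⟨gq, hgq⟩ := exists_rat_inj htfQ hw₀ne hdivW
          exact cf_noQ (hquot η hηδ) gq hgq
  have mainδ := main δ le_rfl
  apply cf_mk
  · intro g hg
    exact mainδ.1 g hg (fun z => by rw [htop]; exact AddSubgroup.mem_top _)
  · intro q hq g hg
    exact mainδ.2.1 q hq g hg (fun z => by rw [htop]; exact AddSubgroup.mem_top _)
  · intro q hq g hg
    haveI := hq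
    exact mainδ.2.2 q g hg (fun z => by rw [htop]; exact AddSubgroup.mem_top _)
end

section
/- Let B be an abelian group, δ an ordinal, and ⟨A_α : α ≤ δ⟩ a continuous increasing chain of subgroups of B with A_δ = B, such that A_0 is cotorsionfree and for every α < δ the quotient group A_{α+1}/A_α is cotorsionfree. Then for every α < δ, the quotient group B/A_α is cotorsionfree. -/
section Aux
variable {G : Type*} [AddCommGroup G]

variable {G : Type*} [AddCommGroup G]

lemma ctf_congr {G' : Type*} [AddCommGroup G'] (e : G ≃+ G')
    (h : Cotorsionfree G) : Cotorsionfree G' := by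
  obtain ⟨h1, h2, h3⟩ := h
  refine ⟨?_, ?_, ?_⟩
  · rintro ⟨H, ⟨i⟩⟩
    exact h1 ⟨H.map e.symm.toAddMonoidHom, ⟨((e.symm.addSubgroupMap H).symm.trans i)⟩⟩
  · rintro p hp ⟨H, ⟨i⟩⟩
    exact h2 p hp ⟨H.map e.symm.toAddMonoidHom, ⟨((e.symm.addSubgroupMap H).symm.trans i)⟩⟩
  · rintro p hp ⟨H, ⟨i⟩⟩
    exact h3 p ⟨H.map e.symm.toAddMonoidHom, ⟨((e.symm.addSubgroupMap H).symm.trans i)⟩⟩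

lemma ctf_noQ (h : Cotorsionfree G) (ψ : ℚ →+ G) (hψ : Function.Injective ψ) : False :=
  h.1 ⟨ψ.range, ⟨(AddMonoidHom.ofInjective hψ).symm⟩⟩

lemma ctf_noPadic (p : ℕ) [Fact p.Prime] (h : Cotorsionfree G) (ψ : PadicInt p →+ G)
    (hψ : Function.Injective ψ) : False :=
  h.2.2 p ⟨ψ.range, ⟨(AddMonoidHom.ofInjective hψ).symm⟩⟩

lemma ctf_tf (h : Cotorsionfree G) : ∀ (n : ℤ) (x : G), n ≠ 0 → n • x = 0 → x = 0 := by
  intro n x hn hnx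
  by_contra hx
  have hfin : IsOfFinAddOrder x := by
    rw [isOfFinAddOrder_iff_nsmul_eq_zero]
    refine ⟨n.natAbs, Int.natAbs_pos.mpr hn, ?_⟩
    rcases Int.natAbs_eq n with h' | h'
    · rw [← natCast_zsmul, ← h', hnx]
    · rw [← natCast_zsmul, ← neg_neg ((n.natAbs : ℤ)), ← h', neg_zsmul, hnx, neg_zero]
  set o := addOrderOf x with ho
  have ho0 : o ≠ 0 := hfin.addOrderOf_pos.ne'
  have ho1 : o ≠ 1 := by
    simpa [ho, AddMonoid.addOrderOf_eq_one_iff] using hx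
  set q := o.minFac with hq
  have hqp : q.Prime := Nat.minFac_prime ho1
  set y := (o / q) • x with hy
  have hqy : q • y = 0 := by
    rw [hy, ← mul_nsmul']
    rw [Nat.mul_div_cancel' (Nat.minFac_dvd o)]
    exact addOrderOf_nsmul_eq_zero x
  have hyne : y ≠ 0 := by
    intro h0
    have : o ∣ o / q := addOrderOf_dvd_of_nsmul_eq_zero (by rw [← hy, h0])
    have hlt : o / q < o := Nat.div_lt_self (Nat.pos_of_ne_zero ho0) hqp.one_lt
    have : o ≤ o / q := Nat.le_of_dvd (by
      have := Nat.div_pos (Nat.le_of_dvd (Nat.pos_of_ne_zero ho0) (Nat.minFac_dvd o)) hqp.pos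
      exact this) this
    omega
  -- build ZMod q →+ G
  have hfq : (zmultiplesHom G y) q = 0 := by
    simp only [zmultiplesHom_apply]
    rw [natCast_zsmul]
    exact hqy
  set ψ : ZMod q →+ G := ZMod.lift q ⟨zmultiplesHom G y, hfq⟩ with hψ
  haveI : NeZero q := ⟨hqp.ne_zero⟩
  haveI : Fact q.Prime := ⟨hqp⟩
  have hinj : Function.Injective ψ := by
    rw [injective_iff_map_eq_zero]
    intro z hz
    have hzval : ((z.val : ℤ) : ZMod q) = z := by
      simp [ZMod.intCast_cast, ZMod.natCast_val]
    have : ψ ((z.val : ℤ) : ZMod q) = (z.val : ℤ) • y := by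
      rw [ZMod.lift_coe]; rfl
    rw [hzval, hz] at this
    have horder : addOrderOf y = q := by
      have hdvd : addOrderOf y ∣ q := addOrderOf_dvd_of_nsmul_eq_zero hqy
      rcases (Nat.Prime.eq_one_or_self_of_dvd hqp _ hdvd) with h' | h'
      · exact absurd (AddMonoid.addOrderOf_eq_one_iff.mp h') hyne
      · exact h'
    have h3 : z.val • y = 0 := by
      have h2 : (z.val : ℤ) • y = 0 := this.symm
      rwa [natCast_zsmul] at h2
    have hdq : q ∣ z.val := by
      have h4 := addOrderOf_dvd_of_nsmul_eq_zero h3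
      rwa [horder] at h4
    have hlt : z.val < q := ZMod.val_lt z
    have hz0 : z.val = 0 := Nat.eq_zero_of_dvd_of_lt hdq hlt
    rw [← hzval, hz0]
    simp
  exact h.2.1 q hqp ⟨ψ.range, ⟨(AddMonoidHom.ofInjective hinj).symm⟩⟩


variable {G : Type*} [AddCommGroup G]

lemma tf_cancel (tf : ∀ (n : ℤ) (x : G), n ≠ 0 → n • x = 0 → x = 0) :
    ∀ (n : ℤ) (x z : G), n ≠ 0 → n • x = n • z → x = z := by
  intro n x z hn h
  have := tf n (x - z) hn (by rw [smul_sub, h, sub_self])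
  exact sub_eq_zero.mp this

lemma ratSub (tf : ∀ (n : ℤ) (x : G), n ≠ 0 → n • x = 0 → x = 0)
    (a : G) (ha : a ≠ 0) (hdiv : ∀ n : ℕ, 0 < n → ∃ y : G, n • y = a) :
    ∃ ψ : ℚ →+ G, Function.Injective ψ := by
  have cancel := tf_cancel tf
  set y : ℕ → G := fun n => if h : 0 < n then Classical.choose (hdiv n h) else 0 with hy
  have hyspec : ∀ n : ℕ, 0 < n → n • y n = a := by
    intro n hn
    rw [hy]
    simp only [hn, dif_pos]
    exact Classical.choose_spec (hdiv n hn)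
  set φ : ℚ → G := fun q => q.num • y q.den with hφ
  have hφspec : ∀ q : ℚ, (q.den : ℤ) • φ q = q.num • a := by
    intro q
    rw [hφ]
    dsimp only
    rw [smul_comm, natCast_zsmul, hyspec q.den q.pos]
  have char : ∀ (q : ℚ) (m n : ℤ), n ≠ 0 → q * n = m → ∀ x : G, n • x = m • a → x = φ q := by
    intro q m n hn hqn x hx
    have hden : (q.den : ℤ) ≠ 0 := Int.natCast_ne_zero.mpr q.den_nz
    have hdQ : (q.den : ℚ) ≠ 0 := by exact_mod_cast q.den_nz
    apply cancel ((q.den : ℤ) * n) _ _ (mul_ne_zero hden hn)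
    have hcross : (q.den : ℤ) * m = n * q.num := by
      have h1 : (q.num : ℚ) * n = m * q.den := by
        rw [← Rat.num_div_den q] at hqn
        field_simp at hqn
        exact_mod_cast hqn.trans (mul_comm _ _)
      have h2 : q.num * n = m * (q.den : ℤ) := by exact_mod_cast h1
      linarith [h2]
    calc ((q.den : ℤ) * n) • x = (q.den : ℤ) • (n • x) := mul_smul _ _ _
      _ = (q.den : ℤ) • (m • a) := by rw [hx]
      _ = ((q.den : ℤ) * m) • a := (mul_smul _ _ _).symm
      _ = (n * q.num) • a := by rw [hcross]
      _ = n • (q.num • a) := mul_smul _ _ _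
      _ = n • ((q.den : ℤ) • φ q) := by rw [hφspec]
      _ = ((q.den : ℤ) * n) • φ q := by rw [← mul_smul, mul_comm]
  have hadd : ∀ q r : ℚ, φ (q + r) = φ q + φ r := by
    intro q r
    have hdq : (q.den : ℤ) ≠ 0 := Int.natCast_ne_zero.mpr q.den_nz
    have hdr : (r.den : ℤ) ≠ 0 := Int.natCast_ne_zero.mpr r.den_nz
    have hdqQ : (q.den : ℚ) ≠ 0 := by exact_mod_cast q.den_nz
    have hdrQ : (r.den : ℚ) ≠ 0 := by exact_mod_cast r.den_nz
    symm
    apply char (q + r) (q.num * r.den + r.num * q.den) ((q.den : ℤ) * (r.den : ℤ))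
      (mul_ne_zero hdq hdr)
    · have e1 : q * (q.den : ℚ) = q.num := by
        nth_rewrite 1 [← Rat.num_div_den q]
        exact div_mul_cancel₀ _ hdqQ
      have e2 : r * (r.den : ℚ) = r.num := by
        nth_rewrite 1 [← Rat.num_div_den r]
        exact div_mul_cancel₀ _ hdrQ
      push_cast
      linear_combination (r.den : ℚ) * e1 + (q.den : ℚ) * e2
    · rw [smul_add, add_smul]
      congr 1
      · calc ((q.den : ℤ) * (r.den : ℤ)) • φ q
            = ((r.den : ℤ) * (q.den : ℤ)) • φ q := by rw [mul_comm]
          _ = (r.den : ℤ) • ((q.den : ℤ) • φ q) := mul_smul _ _ _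
          _ = (r.den : ℤ) • (q.num • a) := by rw [hφspec]
          _ = ((r.den : ℤ) * q.num) • a := (mul_smul _ _ _).symm
          _ = (q.num * (r.den : ℤ)) • a := by rw [mul_comm]
      · calc ((q.den : ℤ) * (r.den : ℤ)) • φ r
            = (q.den : ℤ) • ((r.den : ℤ) • φ r) := mul_smul _ _ _
          _ = (q.den : ℤ) • (r.num • a) := by rw [hφspec]
          _ = ((q.den : ℤ) * r.num) • a := (mul_smul _ _ _).symm
          _ = (r.num * (q.den : ℤ)) • a := by rw [mul_comm]
  refine ⟨AddMonoidHom.mk' φ hadd, ?_⟩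
  rw [injective_iff_map_eq_zero]
  intro q hq
  by_contra hq0
  have h1 := hφspec q
  have hq' : φ q = 0 := hq
  rw [hq', smul_zero] at h1
  have hnum : q.num ≠ 0 := Rat.num_ne_zero.mpr hq0
  exact ha (tf q.num a hnum h1.symm)


variable {G : Type*} [AddCommGroup G]

lemma padicHomZero (p : ℕ) [hp : Fact p.Prime]
    (tf : ∀ (n : ℤ) (x : G), n ≠ 0 → n • x = 0 → x = 0)
    (noQ : ∀ ψ : ℚ →+ G, Function.Injective ψ → False)
    (f : PadicInt p →+ G) (c : PadicInt p) (hc : c ≠ 0) (hfc : f c = 0) :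
    ∀ b, f b = 0 := by
  have cancel := tf_cancel tf
  have claim1 : ∀ (b : PadicInt p) (n : ℕ), ∃ y : G, (p ^ n) • y = f b := by
    intro b n
    set m := c.valuation with hm
    set u := PadicInt.unitCoeff hc with hu
    have hcu : c = (u : PadicInt p) * (p : PadicInt p) ^ m := PadicInt.unitCoeff_spec hc
    set w := ((u⁻¹ : (PadicInt p)ˣ) : PadicInt p) * b with hw
    obtain ⟨v, hv⟩ : ∃ v : PadicInt p,
        w - (PadicInt.appr w (n + m) : PadicInt p) = (p : PadicInt p) ^ (n + m) * v := by
      have h := PadicInt.appr_spec (n + m) w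
      rw [Ideal.mem_span_singleton] at h
      obtain ⟨v, hv⟩ := h
      exact ⟨v, hv⟩
    set t := PadicInt.appr w (n + m) with ht
    have h1 : c * w = (p : PadicInt p) ^ m * b := by
      rw [hcu, hw]
      have huu : ((u : PadicInt p)) * ((u⁻¹ : (PadicInt p)ˣ) : PadicInt p) = 1 := by
        exact_mod_cast u.mul_inv
      calc (u : PadicInt p) * (p : PadicInt p) ^ m * (((u⁻¹ : (PadicInt p)ˣ) : PadicInt p) * b)
          = ((u : PadicInt p) * ((u⁻¹ : (PadicInt p)ˣ) : PadicInt p))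
            * ((p : PadicInt p) ^ m * b) := by ring
        _ = (p : PadicInt p) ^ m * b := by rw [huu, one_mul]
    have hwt : w = (t : PadicInt p) + (p : PadicInt p) ^ (n + m) * v := by
      have := eq_add_of_sub_eq hv
      rw [this]; ring
    have h2 : (p : PadicInt p) ^ m * b = (t : PadicInt p) * c + (p : PadicInt p) ^ (n + m) * (c * v) := by
      rw [← h1, hwt]; ring
    have harg : (p ^ m : ℕ) • b = t • c + (p ^ (n + m) : ℕ) • (c * v) := by
      simp only [nsmul_eq_mul]
      push_cast
      rw [h2]
    have h3 := congrArg f harg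
    rw [map_add, map_nsmul, map_nsmul, map_nsmul, hfc, smul_zero, zero_add] at h3
    have h4 : (p ^ m : ℕ) • f b = (p ^ m : ℕ) • ((p ^ n : ℕ) • f (c * v)) := by
      rw [h3, ← mul_nsmul, ← pow_add, add_comm n m]
    refine ⟨f (c * v), ?_⟩
    have hne : ((p ^ m : ℕ) : ℤ) ≠ 0 := by
      have := hp.out.pos
      positivity
    have := cancel ((p ^ m : ℕ) : ℤ) (f b) ((p ^ n : ℕ) • f (c * v)) hne (by
      rw [natCast_zsmul, natCast_zsmul]; exact h4)
    rw [this]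
  have claim2 : ∀ (b : PadicInt p) (n : ℕ), 0 < n → ∃ y : G, n • y = f b := by
    intro b n hn
    set k := n.factorization p with hk
    set s := n / p ^ k with hs
    have hks : p ^ k * s = n := Nat.ordProj_mul_ordCompl_eq_self n p
    have hnd : ¬ (p ∣ s) := Nat.not_dvd_ordCompl hp.out hn.ne'
    have hsu : IsUnit (s : PadicInt p) := by
      rw [PadicInt.isUnit_iff]
      have h1 : ‖((s : ℕ) : PadicInt p)‖ ≤ 1 := PadicInt.norm_le_one _
      have h2 : ¬ (‖((s : ℕ) : PadicInt p)‖ < 1) := by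
        have := PadicInt.norm_int_lt_one_iff_dvd (p := p) (s : ℤ)
        push_cast at this
        rw [this]
        exact_mod_cast hnd
      exact le_antisymm h1 (not_lt.mp h2)
    obtain ⟨su, hsueq⟩ := hsu
    obtain ⟨y, hy⟩ := claim1 (((su⁻¹ : (PadicInt p)ˣ) : PadicInt p) * b) k
    refine ⟨y, ?_⟩
    have hfb : (s : ℕ) • f (((su⁻¹ : (PadicInt p)ˣ) : PadicInt p) * b) = f b := by
      rw [← map_nsmul]
      congr 1
      rw [nsmul_eq_mul, ← mul_assoc, ← hsueq]
      have : (su : PadicInt p) * ((su⁻¹ : (PadicInt p)ˣ) : PadicInt p) = 1 := by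
        exact_mod_cast su.mul_inv
      rw [this, one_mul]
    calc n • y = (p ^ k * s) • y := by rw [hks]
      _ = (s * p ^ k) • y := by rw [mul_comm]
      _ = s • ((p ^ k) • y) := mul_nsmul' _ _ _
      _ = s • f (((su⁻¹ : (PadicInt p)ˣ) : PadicInt p) * b) := by rw [hy]
      _ = f b := hfb
  intro b
  by_contra hb
  obtain ⟨ψ, hψ⟩ := ratSub tf (f b) hb (claim2 b)
  exact noQ ψ hψ


end Aux

def addSubgroupEquivOfEq {G : Type*} [AddCommGroup G] {H K : AddSubgroup G} (h : H = K) :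
    H ≃+ K := by subst h; exact AddEquiv.refl _

/-- if `⟨A_α : α ≤ δ⟩` is a continuous increasing chain of subgroups of `B`
with `A_δ = B`, `A_0` cotorsionfree, and each successor quotient `A_{α+1}/A_α`
cotorsionfree, then every quotient `B/A_α` (for `α < δ`) is cotorsionfree. -/
theorem statement2 (B : Type*) [AddCommGroup B] (δ : Ordinal)
    (A : Ordinal → AddSubgroup B)
    (hmono : ∀ α β : Ordinal, α ≤ β → β ≤ δ → A α ≤ A β)
    (hcont : ∀ ξ ≤ δ, Order.IsSuccLimit ξ → ((A ξ : Set B) = ⋃ ζ ∈ Set.Iio ξ, (A ζ : Set B)))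
    (htop : A δ = ⊤)
    (h0 : Cotorsionfree (A 0))
    (hquot : ∀ α < δ, Cotorsionfree (A (α + 1) ⧸ (A α).addSubgroupOf (A (α + 1)))) :
    ∀ α < δ, Cotorsionfree (B ⧸ A α) := by
  intro α hα
  have hαδ : α ≤ δ := le_of_lt hα
  -- cotorsionfreeness of the successor subquotients, realized as subgroups of B ⧸ A τ
  have hS : ∀ τ : Ordinal, τ < δ →
      Cotorsionfree ((A (τ+1)).map (QuotientAddGroup.mk' (A τ))) := by
    intro τ hτ
    set φ := (QuotientAddGroup.mk' (A τ)).comp (A (τ+1)).subtype with hφ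
    have hker : φ.ker = (A τ).addSubgroupOf (A (τ+1)) := by
      ext x
      simp only [hφ, AddMonoidHom.mem_ker, AddMonoidHom.comp_apply, AddSubgroup.coe_subtype,
        QuotientAddGroup.mk'_apply, QuotientAddGroup.eq_zero_iff, AddSubgroup.mem_addSubgroupOf]
    have hrange : φ.range = (A (τ+1)).map (QuotientAddGroup.mk' (A τ)) := by
      ext x
      constructor
      · rintro ⟨⟨b, hb⟩, rfl⟩
        exact ⟨b, hb, rfl⟩
      · rintro ⟨b, hb, rfl⟩
        exact ⟨⟨b, hb⟩, rfl⟩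
    have e1 := QuotientAddGroup.quotientKerEquivRange φ
    have e2 := QuotientAddGroup.quotientAddEquivOfEq hker.symm
    exact ctf_congr ((e2.trans e1).trans (addSubgroupEquivOfEq hrange)) (hquot τ hτ)
  -- torsion in a successor step is impossible
  have hSuccTor : ∀ τ : Ordinal, τ < δ → ∀ b : B, b ∈ A (τ+1) → b ∉ A τ →
      ∀ n : ℤ, n ≠ 0 → n • b ∈ A τ → False := by
    intro τ hτ b hb hbτ n hn hnb
    have hmem : QuotientAddGroup.mk' (A τ) b ∈ (A (τ+1)).map (QuotientAddGroup.mk' (A τ)) :=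
      ⟨b, hb, rfl⟩
    set z : ((A (τ+1)).map (QuotientAddGroup.mk' (A τ))) := ⟨_, hmem⟩ with hz
    have hz0 : z ≠ 0 := by
      intro h
      have h2 : QuotientAddGroup.mk' (A τ) b = 0 := congrArg Subtype.val h
      rw [QuotientAddGroup.mk'_apply, QuotientAddGroup.eq_zero_iff] at h2
      exact hbτ h2
    have hnz : n • z = 0 := by
      apply Subtype.ext
      have h1 : ((n • z : _) : B ⧸ A τ) = n • (QuotientAddGroup.mk' (A τ) b) := rfl
      have h2 : n • (QuotientAddGroup.mk' (A τ) b) = QuotientAddGroup.mk' (A τ) (n • b) :=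
        (map_zsmul _ _ _).symm
      have h3 : QuotientAddGroup.mk' (A τ) (n • b) = 0 := by
        rw [QuotientAddGroup.mk'_apply, QuotientAddGroup.eq_zero_iff]
        exact hnb
      rw [h1, h2, h3]
      rfl
    exact hz0 (ctf_tf (hS τ hτ) n z hn hnz)
  -- the least stage of a nonzero element is a successor above the base
  have hstage : ∀ β : Ordinal, β ≤ δ → ∀ x : B ⧸ A β, x ≠ 0 →
      ∃ τ, β ≤ τ ∧ τ < δ ∧ x ∈ (A (τ+1)).map (QuotientAddGroup.mk' (A β)) ∧
        x ∉ (A τ).map (QuotientAddGroup.mk' (A β)) := by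
    intro β hβ x hx
    set s : Set Ordinal := {γ | γ ≤ δ ∧ x ∈ (A γ).map (QuotientAddGroup.mk' (A β))} with hs
    have hne : s.Nonempty := by
      obtain ⟨b, rfl⟩ := QuotientAddGroup.mk'_surjective (A β) x
      exact ⟨δ, le_refl δ, ⟨b, by rw [htop]; trivial, rfl⟩⟩
    set γ := sInf s with hγ
    have hγs : γ ∈ s := csInf_mem hne
    have hmin : ∀ γ' < γ, x ∉ (A γ').map (QuotientAddGroup.mk' (A β)) := by
      intro γ' hγ' hx'
      have hle : γ ≤ γ' := csInf_le' ⟨le_of_lt (lt_of_lt_of_le hγ' hγs.1), hx'⟩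
      exact absurd hle (not_le.mpr hγ')
    have hβγ : β < γ := by
      by_contra h
      push_neg at h
      obtain ⟨b, hb, hbx⟩ := hγs.2
      apply hx
      rw [← hbx, QuotientAddGroup.mk'_apply, QuotientAddGroup.eq_zero_iff]
      exact hmono γ β h hβ hb
    rcases (Ordinal.zero_or_succ_or_isSuccLimit γ).imp_right (Or.imp_left (c := Order.IsSuccLimit γ) (b := ∃ a, γ = Order.succ a) fun ⟨a, h⟩ => ⟨a, h.symm⟩) with h0 | ⟨τ, hτ⟩ | hlim
    · exact absurd h0 (pos_iff_ne_zero.mp (lt_of_le_of_lt (zero_le (a := β)) hβγ))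
    · refine ⟨τ, Order.lt_succ_iff.mp (hτ ▸ hβγ), Order.succ_le_iff.mp (hτ ▸ hγs.1), ?_, ?_⟩
      · rw [Ordinal.add_one_eq_succ, ← hτ]
        exact hγs.2
      · exact hmin τ (by rw [hτ]; exact Order.lt_succ τ)
    · exfalso
      obtain ⟨b, hb, hbx⟩ := hγs.2
      have hbU : b ∈ ⋃ ζ ∈ Set.Iio γ, (A ζ : Set B) := by
        rw [← hcont γ hγs.1 hlim]
        exact hb
      simp only [Set.mem_iUnion, Set.mem_Iio] at hbU
      obtain ⟨ζ, hζ, hbζ⟩ := hbU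
      exact hmin ζ hζ ⟨b, hbζ, hbx⟩
  -- torsion-freeness of all quotients B ⧸ A β
  have hTF : ∀ β : Ordinal, β ≤ δ → ∀ (n : ℤ) (x : B ⧸ A β), n ≠ 0 → n • x = 0 → x = 0 := by
    intro β hβ n x hn hnx
    by_contra hx
    obtain ⟨τ, hβτ, hτδ, hx1, hx0⟩ := hstage β hβ x hx
    obtain ⟨b, hb, hbx⟩ := hx1
    have hbτ : b ∉ A τ := fun h => hx0 ⟨b, h, hbx⟩
    have hnb : n • b ∈ A τ := by
      have h1 : QuotientAddGroup.mk' (A β) (n • b) = 0 := by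
        rw [map_zsmul, hbx, hnx]
      rw [QuotientAddGroup.mk'_apply, QuotientAddGroup.eq_zero_iff] at h1
      exact hmono β τ hβτ (le_of_lt hτδ) h1
    exact hSuccTor τ hτδ b hb hbτ n hn hnb
  -- comparison of stages under nonzero integer multiplication
  have hMulStage : ∀ β : Ordinal, β ≤ δ → ∀ (x : B ⧸ A β) (n : ℤ), n ≠ 0 → x ≠ 0 →
      ∀ τ : Ordinal, τ < δ → n • x ∈ (A (τ+1)).map (QuotientAddGroup.mk' (A β)) →
      n • x ∉ (A τ).map (QuotientAddGroup.mk' (A β)) →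
      x ∈ (A (τ+1)).map (QuotientAddGroup.mk' (A β)) ∧
        x ∉ (A τ).map (QuotientAddGroup.mk' (A β)) := by
    intro β hβ x n hn hx τ hτδ hin hout
    obtain ⟨τ', hβτ', hτ'δ, hx1, hx0⟩ := hstage β hβ x hx
    by_cases hcmp : τ' ≤ τ
    · constructor
      · apply AddSubgroup.map_mono (hmono (τ'+1) (τ+1) ?_ ?_) hx1
        · rw [Ordinal.add_one_eq_succ, Ordinal.add_one_eq_succ]
          exact Order.succ_le_succ hcmp
        · rw [Ordinal.add_one_eq_succ, Order.succ_le_iff]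
          exact hτδ
      · intro hmem
        exact hout (AddSubgroup.zsmul_mem _ hmem n)
    · exfalso
      push_neg at hcmp
      have hsle : τ + 1 ≤ τ' := by
        rw [Ordinal.add_one_eq_succ, Order.succ_le_iff]
        exact hcmp
      have hin' : n • x ∈ (A τ').map (QuotientAddGroup.mk' (A β)) :=
        AddSubgroup.map_mono (hmono (τ+1) τ' hsle (le_of_lt hτ'δ)) hin
      obtain ⟨b, hb, hbx⟩ := hx1
      have hbτ' : b ∉ A τ' := fun h => hx0 ⟨b, h, hbx⟩
      obtain ⟨a, ha, hax⟩ := hin'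
      have hsub : n • b - a ∈ A β := by
        have h1 : QuotientAddGroup.mk' (A β) (n • b - a) = 0 := by
          rw [map_sub, map_zsmul, hbx, hax, sub_self]
        rwa [QuotientAddGroup.mk'_apply, QuotientAddGroup.eq_zero_iff] at h1
      have hnb : n • b ∈ A τ' := by
        have h2 : n • b - a ∈ A τ' := hmono β τ' hβτ' (le_of_lt hτ'δ) hsub
        have h3 := AddSubgroup.add_mem _ h2 ha
        simpa using h3
      exact hSuccTor τ' hτ'δ b hb hbτ' n hn hnb
  -- no copy of ℚ in any quotient B ⧸ A β
  have hNoQ : ∀ β : Ordinal, β ≤ δ → ∀ ψ : ℚ →+ B ⧸ A β, Function.Injective ψ → False := by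
    intro β hβ ψ hψ
    have h1 : ψ 1 ≠ 0 := by
      intro h
      exact one_ne_zero (hψ (h.trans (map_zero ψ).symm))
    obtain ⟨τ, hβτ, hτδ, hin, hout⟩ := hstage β hβ (ψ 1) h1
    have key : ∀ q : ℚ, ψ q ∈ (A (τ+1)).map (QuotientAddGroup.mk' (A β)) ∧
        (q ≠ 0 → ψ q ∉ (A τ).map (QuotientAddGroup.mk' (A β))) := by
      intro q
      by_cases hq : q = 0
      · subst hq
        simp only [map_zero]
        exact ⟨AddSubgroup.zero_mem _, fun h => absurd rfl h⟩
      · have hnum : q.num ≠ 0 := Rat.num_ne_zero.mpr hq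
        have hden : (q.den : ℤ) ≠ 0 := Int.natCast_ne_zero.mpr q.den_nz
        have hdenQ : (q.den : ℚ) ≠ 0 := by exact_mod_cast q.den_nz
        have hrel : (q.den : ℤ) • ψ q = q.num • ψ 1 := by
          rw [← map_zsmul, ← map_zsmul]
          congr 1
          rw [zsmul_eq_mul, zsmul_eq_mul, mul_one, mul_comm]
          push_cast
          nth_rewrite 1 [← Rat.num_div_den q]
          rw [div_mul_cancel₀ _ hdenQ]
        have hn1' : q.num • ψ 1 ∈ (A (τ+1)).map (QuotientAddGroup.mk' (A β)) :=
          AddSubgroup.zsmul_mem _ hin q.num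
        have hn1 : q.num • ψ 1 ∉ (A τ).map (QuotientAddGroup.mk' (A β)) := by
          intro hmem
          obtain ⟨b, hb, hbx⟩ := hin
          have hbτ : b ∉ A τ := fun h => hout ⟨b, h, hbx⟩
          obtain ⟨a, ha, hax⟩ := hmem
          have hsub : q.num • b - a ∈ A β := by
            have h2 : QuotientAddGroup.mk' (A β) (q.num • b - a) = 0 := by
              rw [map_sub, map_zsmul, hbx, hax, sub_self]
            rwa [QuotientAddGroup.mk'_apply, QuotientAddGroup.eq_zero_iff] at h2
          have hnb : q.num • b ∈ A τ := by
            have h2 : q.num • b - a ∈ A τ := hmono β τ hβτ (le_of_lt hτδ) hsub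
            have h3 := AddSubgroup.add_mem _ h2 ha
            simpa using h3
          exact hSuccTor τ hτδ b hb hbτ q.num hnum hnb
        rw [← hrel] at hn1 hn1'
        have hψq0 : ψ q ≠ 0 := fun h => hq (hψ (h.trans (map_zero ψ).symm))
        obtain ⟨hin', hout'⟩ := hMulStage β hβ (ψ q) (q.den : ℤ) hden hψq0 τ hτδ hn1' hn1
        exact ⟨hin', fun _ => hout'⟩
    have hfac : A β ≤ (A τ).comap (AddMonoidHom.id B) :=
      fun x hx => hmono β τ hβτ (le_of_lt hτδ) hx
    set g : B ⧸ A β →+ B ⧸ A τ := QuotientAddGroup.map (A β) (A τ) (AddMonoidHom.id B) hfac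
      with hg
    have hgmk : ∀ b : B, g (QuotientAddGroup.mk' (A β) b) = QuotientAddGroup.mk' (A τ) b :=
      fun b => rfl
    have hrangeS : ∀ q : ℚ, (g.comp ψ) q ∈ (A (τ+1)).map (QuotientAddGroup.mk' (A τ)) := by
      intro q
      obtain ⟨b, hb, hbx⟩ := (key q).1
      rw [AddMonoidHom.comp_apply, ← hbx, hgmk]
      exact ⟨b, hb, rfl⟩
    set χ : ℚ →+ ((A (τ+1)).map (QuotientAddGroup.mk' (A τ))) :=
      AddMonoidHom.codRestrict (g.comp ψ) _ hrangeS with hχ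
    have hχinj : Function.Injective χ := by
      rw [injective_iff_map_eq_zero]
      intro q hq0
      by_contra hq
      have hgq : g (ψ q) = 0 := congrArg Subtype.val hq0
      obtain ⟨b, hb, hbx⟩ := (key q).1
      have hb0 : QuotientAddGroup.mk' (A τ) b = 0 := by
        rw [← hgmk, hbx, hgq]
      rw [QuotientAddGroup.mk'_apply, QuotientAddGroup.eq_zero_iff] at hb0
      exact (key q).2 hq ⟨b, hb0, hbx⟩
    exact ctf_noQ (hS τ hτδ) χ hχinj
  -- no copy of ℤ_p : main transfinite induction
  have hNoZp : ∀ β : Ordinal, β ≤ δ → ∀ (p : ℕ) (hp : Fact p.Prime)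
      (f : PadicInt p →+ B ⧸ A α), (∀ x, f x ∈ (A β).map (QuotientAddGroup.mk' (A α))) →
      Function.Injective f → False := by
    intro β
    induction β using Ordinal.induction with
    | h β IH =>
      intro hβ p hp f hrange hinj
      haveI := hp
      by_cases hβα : β ≤ α
      · have h1 : f 1 = 0 := by
          obtain ⟨b, hb, hbx⟩ := hrange 1
          rw [← hbx, QuotientAddGroup.mk'_apply, QuotientAddGroup.eq_zero_iff]
          exact hmono β α hβα hαδ hb
        exact one_ne_zero (hinj (h1.trans (map_zero f).symm))
      · push_neg at hβα
        rcases (Ordinal.zero_or_succ_or_isSuccLimit β).imp_right (Or.imp_left (c := Order.IsSuccLimit β) (b := ∃ a, β = Order.succ a) fun ⟨a, h⟩ => ⟨a, h.symm⟩) with h0 | ⟨τ, hτ⟩ | hlim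
        · rw [h0] at hβα
          exact absurd hβα (not_lt_zero (a := α))
        · have hβτ1 : β = τ + 1 := by rw [hτ, Ordinal.add_one_eq_succ]
          have hτδ : τ < δ := Order.succ_le_iff.mp (hτ ▸ hβ)
          have hατ : α ≤ τ := Order.lt_succ_iff.mp (hτ ▸ hβα)
          have hτβ : τ < β := by rw [hτ]; exact Order.lt_succ τ
          have hfac : A α ≤ (A τ).comap (AddMonoidHom.id B) :=
            fun x hx => hmono α τ hατ (le_of_lt hτδ) hx
          set g0 : B ⧸ A α →+ B ⧸ A τ := QuotientAddGroup.map (A α) (A τ) (AddMonoidHom.id B) hfac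
            with hg0
          have hgmk : ∀ b : B, g0 (QuotientAddGroup.mk' (A α) b) = QuotientAddGroup.mk' (A τ) b :=
            fun b => rfl
          have hrangeS : ∀ x, (g0.comp f) x ∈ (A (τ+1)).map (QuotientAddGroup.mk' (A τ)) := by
            intro x
            have hx := hrange x
            rw [hβτ1] at hx
            obtain ⟨b, hb, hbx⟩ := hx
            rw [AddMonoidHom.comp_apply, ← hbx, hgmk]
            exact ⟨b, hb, rfl⟩
          set g : PadicInt p →+ ((A (τ+1)).map (QuotientAddGroup.mk' (A τ))) :=
            AddMonoidHom.codRestrict (g0.comp f) _ hrangeS with hgdef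
          by_cases hginj : Function.Injective g
          · exact ctf_noPadic p (hS τ hτδ) g hginj
          · rw [injective_iff_map_eq_zero] at hginj
            push_neg at hginj
            obtain ⟨c, hc, hc0⟩ := hginj
            have hall := padicHomZero p (ctf_tf (hS τ hτδ))
              (fun ψ h => ctf_noQ (hS τ hτδ) ψ h) g c hc0 hc
            apply IH τ hτβ (le_of_lt hτδ) p hp f ?_ hinj
            intro x
            have hgx : g0 (f x) = 0 := congrArg Subtype.val (hall x)
            have hx := hrange x
            rw [hβτ1] at hx
            obtain ⟨b, hb, hbx⟩ := hx
            have hbτ : b ∈ A τ := by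
              have h2 : QuotientAddGroup.mk' (A τ) b = 0 := by
                rw [← hgmk, hbx, hgx]
              rwa [QuotientAddGroup.mk'_apply, QuotientAddGroup.eq_zero_iff] at h2
            exact ⟨b, hbτ, hbx⟩
        · obtain ⟨b1, hb1, hb1x⟩ := hrange 1
          have hb1U : b1 ∈ ⋃ ζ ∈ Set.Iio β, (A ζ : Set B) := by
            rw [← hcont β hβ hlim]
            exact hb1
          simp only [Set.mem_iUnion, Set.mem_Iio] at hb1U
          obtain ⟨ζ0, hζ0, hbζ0⟩ := hb1U
          set ζ := max ζ0 α with hζdef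
          have hζβ : ζ < β := max_lt hζ0 hβα
          have hζδ : ζ ≤ δ := le_of_lt (lt_of_lt_of_le hζβ hβ)
          have hαζ : α ≤ ζ := le_max_right _ _
          have hfac : A α ≤ (A ζ).comap (AddMonoidHom.id B) :=
            fun x hx => hmono α ζ hαζ hζδ hx
          set g : B ⧸ A α →+ B ⧸ A ζ := QuotientAddGroup.map (A α) (A ζ) (AddMonoidHom.id B) hfac
            with hgdef
          have hgmk : ∀ b : B, g (QuotientAddGroup.mk' (A α) b) = QuotientAddGroup.mk' (A ζ) b :=
            fun b => rfl
          have hg1 : (g.comp f) 1 = 0 := by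
            rw [AddMonoidHom.comp_apply, ← hb1x, hgmk, QuotientAddGroup.mk'_apply,
              QuotientAddGroup.eq_zero_iff]
            exact hmono ζ0 ζ (le_max_left _ _) hζδ hbζ0
          have hall := padicHomZero p (hTF ζ hζδ) (hNoQ ζ hζδ) (g.comp f) 1 one_ne_zero hg1
          apply IH ζ hζβ hζδ p hp f ?_ hinj
          intro x
          obtain ⟨b, hbeq⟩ := QuotientAddGroup.mk'_surjective (A α) (f x)
          have h2 : QuotientAddGroup.mk' (A ζ) b = 0 := by
            rw [← hgmk, hbeq]
            exact hall x
          rw [QuotientAddGroup.mk'_apply, QuotientAddGroup.eq_zero_iff] at h2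
          exact ⟨b, h2, hbeq⟩
  -- assemble the three conditions
  refine ⟨?_, ?_, ?_⟩
  · rintro ⟨H, ⟨e⟩⟩
    have hinj : Function.Injective ((AddSubgroup.subtype H).comp e.symm.toAddMonoidHom) :=
      (AddSubgroup.subtype_injective H).comp e.symm.injective
    exact hNoQ α hαδ _ hinj
  · rintro p hp ⟨H, ⟨e⟩⟩
    haveI : Fact p.Prime := ⟨hp⟩
    haveI : Fact (1 < p) := ⟨hp.one_lt⟩
    set h := e.symm 1 with hh
    have hz1 : ((p : ℤ) • (1 : ZMod p)) = 0 := by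
      rw [zsmul_eq_mul, mul_one]
      exact_mod_cast ZMod.natCast_self p
    have hph : (p : ℤ) • h = 0 := by
      rw [hh, ← map_zsmul, hz1, map_zero]
    have hcoe : (p : ℤ) • (h : B ⧸ A α) = 0 := by
      have h1 : (p : ℤ) • (h : B ⧸ A α) = (((p : ℤ) • h : H) : B ⧸ A α) := rfl
      rw [h1, hph]
      rfl
    have hpne : (p : ℤ) ≠ 0 := by exact_mod_cast hp.ne_zero
    have hhz := hTF α hαδ (p : ℤ) (h : B ⧸ A α) hpne hcoe
    have hh0 : h = 0 := Subtype.ext hhz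
    have : (1 : ZMod p) = 0 := by
      have h2 := congrArg e hh0
      rw [hh] at h2
      rw [AddEquiv.apply_symm_apply, map_zero] at h2
      exact h2
    exact one_ne_zero this
  · rintro p hp ⟨H, ⟨e⟩⟩
    have hinj : Function.Injective ((AddSubgroup.subtype H).comp e.symm.toAddMonoidHom) :=
      (AddSubgroup.subtype_injective H).comp e.symm.injective
    apply hNoZp δ (le_refl δ) p hp _ ?_ hinj
    intro x
    obtain ⟨b, hbeq⟩ := QuotientAddGroup.mk'_surjective (A α)
      (((AddSubgroup.subtype H).comp e.symm.toAddMonoidHom) x)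
    exact ⟨b, by rw [htop]; trivial, hbeq⟩
end

section
/- There is no ordinal δ and no increasing chain ⟨A_α : α < δ⟩ of proper subgroups of the Baer-Specker group ℤ^ω such that ℤ^ω/A_α is cotorsionfree for every α < δ and ⋃_{α<δ} A_α = ℤ^ω. (The chain is not assumed continuous.) -/
namespace CTF

abbrev G := ℕ → ℤ

/-- the `k`-th unit vector -/
def e (k : ℕ) : G := Pi.single k 1

/-- Cotorsionfree passes to subgroups via injective homs. -/
theorem ctf_of_injective {H₁ H₂ : Type*} [AddCommGroup H₁] [AddCommGroup H₂]
    (f : H₁ →+ H₂) (hf : Function.Injective f) (h : Cotorsionfree H₂) :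
    Cotorsionfree H₁ := by
  obtain ⟨h1, h2, h3⟩ := h
  have key : ∀ (X : Type) [AddCommGroup X],
      (∃ S : AddSubgroup H₁, Nonempty (S ≃+ X)) → ∃ S : AddSubgroup H₂, Nonempty (S ≃+ X) := by
    intro X _ ⟨S, ⟨eq⟩⟩
    exact ⟨S.map f, ⟨((S.equivMapOfInjective f hf).symm.trans eq)⟩⟩
  refine ⟨fun hx => h1 (key _ hx), fun p hp hx => h2 p hp (key _ hx),
    fun p hp hx => h3 p (key _ hx)⟩

/-- A cotorsionfree group is torsion-free. -/
theorem tf {H : Type*} [AddCommGroup H] (hc : Cotorsionfree H) :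
    ∀ (h : H) (n : ℕ), 0 < n → n • h = 0 → h = 0 := by
  intro h n hn hnh
  by_contra h0
  have hfin : IsOfFinAddOrder h := isOfFinAddOrder_iff_nsmul_eq_zero.mpr ⟨n, hn, hnh⟩
  set o := addOrderOf h with ho
  have hopos : 0 < o := hfin.addOrderOf_pos
  have ho1 : o ≠ 1 := by
    intro h1
    exact h0 (by rwa [ho, AddMonoid.addOrderOf_eq_one_iff] at h1)
  set p := o.minFac with hp
  have hpp : p.Prime := Nat.minFac_prime ho1
  have hpd : p ∣ o := Nat.minFac_dvd o
  set h' := (o / p) • h with hh'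
  have hph' : p • h' = 0 := by
    rw [hh', ← mul_nsmul', Nat.mul_div_cancel' hpd, ho, addOrderOf_nsmul_eq_zero]
  have hne : h' ≠ 0 := by
    intro hz
    have : o ∣ o / p := addOrderOf_dvd_iff_nsmul_eq_zero.mpr (by rw [← hh']; exact hz)
    have hlt : o / p < o := Nat.div_lt_self hopos hpp.one_lt
    have := Nat.le_of_dvd (Nat.div_pos (Nat.le_of_dvd hopos hpd) hpp.pos) this
    omega
  -- build ZMod p ↪ H
  haveI : Fact p.Prime := ⟨hpp⟩
  have hfp : ((zmultiplesHom H) h') p = 0 := by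
    simpa using hph'
  set φ : ZMod p →+ H := ZMod.lift p ⟨(zmultiplesHom H) h', by simpa using hph'⟩ with hφ
  have hφ1 : φ 1 = h' := by
    have : φ ((1 : ℤ) : ZMod p) = ((zmultiplesHom H) h') 1 := ZMod.lift_coe _ _ _
    simpa using this
  have horder : addOrderOf h' = p := by
    have hdvd : addOrderOf h' ∣ p := addOrderOf_dvd_iff_nsmul_eq_zero.mpr hph'
    rcases (Nat.dvd_prime hpp).mp hdvd with h1 | h1
    · exact absurd (AddMonoid.addOrderOf_eq_one_iff.mp h1) hne
    · exact h1
  have hinj : Function.Injective φ := by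
    rw [injective_iff_map_eq_zero]
    intro a ha
    have hval : φ ((a.val : ℤ) : ZMod p) = (a.val : ℤ) • h' := ZMod.lift_coe _ _ _
    haveI : NeZero p := ⟨hpp.ne_zero⟩
    have hcast : ((a.val : ℤ) : ZMod p) = a := by
      push_cast
      exact ZMod.natCast_rightInverse a
    rw [hcast, ha] at hval
    have hsm : a.val • h' = 0 := by
      have := hval.symm
      rwa [natCast_zsmul] at this
    have hdvd : p ∣ a.val := by
      have := addOrderOf_dvd_iff_nsmul_eq_zero.mpr hsm
      rwa [horder] at this
    have hv0 : a.val = 0 := Nat.eq_zero_of_dvd_of_lt hdvd a.val_lt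
    exact (ZMod.val_eq_zero a).mp hv0
  exact hc.2.1 p hpp ⟨φ.range, ⟨(AddMonoidHom.ofInjective hinj).symm⟩⟩




-- torsionfree int version from nat version
theorem tfZ {H : Type*} [AddCommGroup H] (htf : ∀ (h : H) (n : ℕ), 0 < n → n • h = 0 → h = 0)
    (h : H) (n : ℤ) (hn : n ≠ 0) (hnh : n • h = 0) : h = 0 := by
  have habs : (n.natAbs : ℤ) • h = 0 := by
    rcases Int.natAbs_eq n with he | he
    · rw [← he]; exact hnh
    · have : (n.natAbs : ℤ) = -n := by omega
      rw [this, neg_zsmul, hnh, neg_zero]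
  apply htf h n.natAbs (by omega)
  rwa [← natCast_zsmul]

-- Lemma A: divisible nonzero element in torsionfree group gives ℚ subgroup
theorem ratSubgroup {H : Type*} [AddCommGroup H] (htf : ∀ (h : H) (n : ℕ), 0 < n → n • h = 0 → h = 0)
    (h : H) (hne : h ≠ 0) (hdiv : ∀ n : ℕ, 0 < n → ∃ y, n • y = h) :
    ∃ S : AddSubgroup H, Nonempty (S ≃+ ℚ) := by
  classical
  -- choose witnesses
  have hy : ∀ n : ℕ, ∃ y, 0 < n → n • y = h := by
    intro n
    by_cases hn : 0 < n
    · obtain ⟨y, hyy⟩ := hdiv n hn; exact ⟨y, fun _ => hyy⟩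
    · exact ⟨0, fun hc => absurd hc hn⟩
  choose y hyspec using hy
  -- f : ℚ → H
  set f : ℚ → H := fun r => r.num • y r.den with hf
  have key : ∀ (r : ℚ) (a : ℤ) (b : ℕ), 0 < b → r * (b : ℚ) = (a : ℚ) → (b : ℤ) • f r = a • h := by
    intro r a b hb hr
    have hcross : r.num * b = a * r.den := by
      have h1 : (r.num : ℚ) = r * r.den := by
        rw [mul_comm]
        exact_mod_cast (Rat.den_mul_eq_num r).symm
      have : ((r.num * b : ℤ) : ℚ) = ((a * r.den : ℤ) : ℚ) := by
        push_cast
        rw [h1, ← hr]; ring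
      exact_mod_cast this
    calc (b:ℤ) • f r = (b:ℤ) • (r.num • y r.den) := rfl
      _ = (r.num * b) • y r.den := by rw [← mul_zsmul, mul_comm]
      _ = (a * r.den) • y r.den := by rw [hcross]
      _ = a • ((r.den : ℤ) • y r.den) := by rw [← mul_zsmul]
      _ = a • h := by
          rw [natCast_zsmul, hyspec r.den r.den_pos]
  have hcan : ∀ (b : ℤ) (u v : H), b ≠ 0 → b • u = b • v → u = v := by
    intro b u v hb he
    have : b • (u - v) = 0 := by rw [smul_sub, he, sub_self]
    have := tfZ htf (u - v) b hb this
    rwa [sub_eq_zero] at this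
  have hrden : ∀ r : ℚ, r * (r.den : ℚ) = (r.num : ℚ) := by
    intro r
    rw [mul_comm]
    exact_mod_cast Rat.den_mul_eq_num r
  have hadd : ∀ r s : ℚ, f (r + s) = f r + f s := by
    intro r s
    obtain ⟨b, hb⟩ : ∃ b : ℕ, b = r.den * s.den := ⟨_, rfl⟩
    obtain ⟨a, ha⟩ : ∃ a : ℤ, a = r.num * s.den + s.num * r.den := ⟨_, rfl⟩
    have hbpos : 0 < b := hb ▸ Nat.mul_pos r.den_pos s.den_pos
    have h1 : (b : ℤ) • f (r + s) = a • h := by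
      apply key _ _ _ hbpos
      calc (r + s) * ((b : ℕ) : ℚ) = (r * r.den) * s.den + (s * s.den) * r.den := by
            rw [hb]; push_cast; ring
        _ = (r.num : ℚ) * s.den + (s.num : ℚ) * r.den := by rw [hrden, hrden]
        _ = ((a : ℤ) : ℚ) := by rw [ha]; push_cast; ring
    have h2 : (b : ℤ) • (f r + f s) = a • h := by
      have hr : (b : ℤ) • f r = (r.num * s.den) • h := by
        have h3 : ((r.den : ℤ)) • f r = r.num • h := key r r.num r.den r.den_pos (hrden r)
        have hbe : (b : ℤ) = (s.den : ℤ) * (r.den : ℤ) := by rw [hb]; push_cast; ring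
        rw [hbe, mul_zsmul, h3, ← mul_zsmul, mul_comm]
      have hs : (b : ℤ) • f s = (s.num * r.den) • h := by
        have h3 : ((s.den : ℤ)) • f s = s.num • h := key s s.num s.den s.den_pos (hrden s)
        have hbe : (b : ℤ) = (r.den : ℤ) * (s.den : ℤ) := by rw [hb]; push_cast; ring
        rw [hbe, mul_zsmul, h3, ← mul_zsmul, mul_comm]
      rw [smul_add, hr, hs, ← add_zsmul, ← ha]
    exact hcan (b : ℤ) _ _ (by exact_mod_cast hbpos.ne') (by rw [h1, h2])
  set F : ℚ →+ H := AddMonoidHom.mk' f hadd with hF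
  have hinj : Function.Injective F := by
    rw [injective_iff_map_eq_zero]
    intro r hr
    by_contra hrne
    have h1 : (r.den : ℤ) • f r = r.num • h := key r r.num r.den r.den_pos (hrden r)
    have : f r = 0 := hr
    rw [this, smul_zero] at h1
    have hnum : r.num ≠ 0 := Rat.num_ne_zero.mpr hrne
    exact hne (tfZ htf h r.num hnum h1.symm)
  exact ⟨F.range, ⟨(AddMonoidHom.ofInjective hinj).symm⟩⟩




variable {A : AddSubgroup G}

theorem finsupp_mem' :
    ∀ (N : ℕ), (∀ k, k < N → e k ∈ A) → ∀ (v : G), (∀ k, N ≤ k → v k = 0) → v ∈ A := by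
  intro N
  induction N with
  | zero =>
    intro _ v hv
    have : v = 0 := funext fun k => hv k (Nat.zero_le k)
    rw [this]; exact zero_mem A
  | succ N ih =>
    intro he v hv
    have hww : (v - (v N) • e N) ∈ A := by
      apply ih (fun k hk => he k (by omega))
      intro k hk
      rcases eq_or_lt_of_le hk with h | h
      · simp [e, ← h, Pi.single_apply]
      · have : v k = 0 := hv k h
        simp only [Pi.sub_apply, e, Pi.single_apply, this]
        have hne : ¬ (k = N) := by omega
        simp [hne]
    have := A.add_mem hww (A.zsmul_mem (he N (by omega)) (v N))
    simpa using this

theorem finsupp_mem (he : ∀ k, e k ∈ A) (N : ℕ) (v : G)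
    (hv : ∀ k, N ≤ k → v k = 0) : v ∈ A :=
  finsupp_mem' N (fun k _ => he k) v hv
-- divisibility of classes
theorem div_class (he : ∀ k, e k ∈ A) (v : G) (m : ℕ) (K : ℕ)
    (hdvd : ∀ k, K ≤ k → (m : ℤ) ∣ v k) :
    ∃ y : G ⧸ A, (m : ℤ) • y = QuotientAddGroup.mk v := by
  classical
  set w : G := fun k => if K ≤ k then v k / m else 0 with hw
  refine ⟨QuotientAddGroup.mk w, ?_⟩
  have : ((m : ℤ) • w - v) ∈ A := by
    apply finsupp_mem he K
    intro k hk
    have hd := hdvd k hk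
    simp only [Pi.smul_apply, Pi.sub_apply, smul_eq_mul, hw, if_pos hk]
    rw [Int.mul_ediv_cancel' hd]
    ring
  rw [← QuotientAddGroup.mk_zsmul, QuotientAddGroup.eq_iff_sub_mem]
  exact this

-- combine coprime divisibility
theorem combine {H : Type*} [AddCommGroup H] (x : H) (a b : ℤ)
    (hco : IsCoprime a b) (h1 : ∃ y, a • y = x) (h2 : ∃ z, b • z = x) :
    ∃ w, (a * b) • w = x := by
  obtain ⟨u, v, huv⟩ := hco
  obtain ⟨y, hy⟩ := h1
  obtain ⟨z, hz⟩ := h2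
  refine ⟨u • z + v • y, ?_⟩
  have : x = (u * a) • x + (v * b) • x := by
    rw [← add_zsmul, huv, one_zsmul]
  have e1 : (a * b) • (u • z) = (u * a) • (b • z) := by
    rw [← mul_zsmul, ← mul_zsmul]; congr 1; ring
  have e2 : (a * b) • (v • y) = (v * b) • (a • y) := by
    rw [← mul_zsmul, ← mul_zsmul]; congr 1; ring
  rw [smul_add, e1, e2, hy, hz]
  exact this.symm

theorem alldiv {H : Type*} [AddCommGroup H] (x : H)
    (h : ∀ q α : ℕ, q.Prime → ∃ y, ((q : ℤ) ^ α) • y = x) :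
    ∀ m : ℕ, 0 < m → ∃ y, (m : ℤ) • y = x := by
  intro m
  induction m using Nat.strong_induction_on with
  | _ m ih =>
    intro hm
    rcases eq_or_lt_of_le (show 1 ≤ m from hm) with h1 | h1
    · exact ⟨x, by rw [← h1]; simp⟩
    · -- m ≥ 2
      have hm2 : 2 ≤ m := h1
      set q := m.minFac with hq
      have hqp : q.Prime := Nat.minFac_prime (by omega)
      set α := m.factorization q with hα
      set m' := ordCompl[q] m with hm'
      have hmeq : q ^ α * m' = m := Nat.ordProj_mul_ordCompl_eq_self m q
      have hαpos : 0 < α := by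
        rw [hα]
        exact (Nat.Prime.factorization_pos_of_dvd hqp (by omega) (Nat.minFac_dvd m))
      have hm'pos : 0 < m' := Nat.ordCompl_pos q (by omega)
      have hm'lt : m' < m := by
        have hqα : 1 < q ^ α := Nat.one_lt_pow hαpos.ne' hqp.one_lt
        have h2m : 2 * m' ≤ q ^ α * m' := Nat.mul_le_mul_right m' (by omega)
        omega
      have hcop : IsCoprime ((q ^ α : ℕ) : ℤ) ((m' : ℕ) : ℤ) := by
        rw [Nat.isCoprime_iff_coprime]
        exact (Nat.coprime_ordCompl hqp (by omega)).pow_left α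
      have h2 := ih m' hm'lt hm'pos
      have h1' : ∃ y, ((q ^ α : ℕ) : ℤ) • y = x := by
        obtain ⟨y, hy⟩ := h q α hqp
        exact ⟨y, by push_cast; exact hy⟩
      obtain ⟨w, hw⟩ := combine x _ _ hcop h1' h2
      refine ⟨w, ?_⟩
      rw [← hw]
      congr 1
      push_cast [← hmeq]
      ring

-- existence of the CRT-idempotent-like integers u
theorem uexists (q k : ℕ) :
    ∃ u : ℤ, q.Prime →
      ((q : ℤ) ^ k ∣ (u - 1) ∧ ((ordCompl[q] (k.factorial ^ k) : ℕ) : ℤ) ∣ u) := by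
  by_cases hq : q.Prime
  · set R := ordCompl[q] (k.factorial ^ k) with hR
    have hfacpos : k.factorial ^ k ≠ 0 := by positivity
    have hcop : Nat.Coprime (q ^ k) R := (Nat.coprime_ordCompl hq hfacpos).pow_left k
    have hcopZ : IsCoprime ((q ^ k : ℕ) : ℤ) ((R : ℕ) : ℤ) := Nat.isCoprime_iff_coprime.mpr hcop
    obtain ⟨x, y, hxy⟩ := hcopZ
    push_cast at hxy
    refine ⟨y * R, fun _ => ⟨⟨-x, by linear_combination hxy⟩, ⟨y, by ring⟩⟩⟩
  · exact ⟨0, fun h => absurd h hq⟩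


theorem main_lemma (A : AddSubgroup G) (he : ∀ k, e k ∈ A)
    (hct : Cotorsionfree (G ⧸ A)) : A = ⊤ := by
  have htf : ∀ (h : G ⧸ A) (n : ℕ), 0 < n → n • h = 0 → h = 0 := tf hct
  have htfZ : ∀ (h : G ⧸ A) (n : ℤ), n ≠ 0 → n • h = 0 → h = 0 := tfZ htf
  have hUlm : ∀ x : G ⧸ A, (∀ m : ℕ, 0 < m → ∃ y, (m : ℤ) • y = x) → x = 0 := by
    intro x hx
    by_contra hne
    apply hct.1
    apply ratSubgroup htf x hne
    intro n hn
    obtain ⟨y, hy⟩ := hx n hn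
    exact ⟨y, by rwa [natCast_zsmul] at hy⟩
  have hD : ∀ v : G, (∀ m : ℕ, 0 < m → ∃ K, ∀ k, K ≤ k → (m : ℤ) ∣ v k) → v ∈ A := by
    intro v hv
    have : (QuotientAddGroup.mk v : G ⧸ A) = 0 := by
      apply hUlm
      intro m hm
      obtain ⟨K, hK⟩ := hv m hm
      exact div_class he v m K hK
    rwa [QuotientAddGroup.eq_zero_iff] at this
  choose u huspec using uexists
  rw [AddSubgroup.eq_top_iff']
  intro c
  have hdef : ∀ (q : ℕ), q.Prime → ∀ t : ℕ → ℤ, (∀ k, (q : ℤ) ^ k ∣ t k) →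
      (fun k => u q k * t k * c k) ∈ A := by
    intro q hq t ht
    apply hD
    intro m hm
    refine ⟨m + 1, fun k hk => ?_⟩
    obtain ⟨hu1, hu2⟩ := huspec q k hq
    obtain ⟨α, hα⟩ : ∃ α, α = m.factorization q := ⟨_, rfl⟩
    obtain ⟨m', hm'⟩ : ∃ m', m' = ordCompl[q] m := ⟨_, rfl⟩
    have hmeq : q ^ α * m' = m := by rw [hα, hm']; exact Nat.ordProj_mul_ordCompl_eq_self m q
    have hαlt : α < m := by rw [hα]; exact Nat.factorization_lt q (by omega)
    have hm'pos : 0 < m' := by rw [hm']; exact Nat.ordCompl_pos q (by omega)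
    have hm'le : m' ≤ m := by
      rw [hm']; exact Nat.le_of_dvd (by omega) (Nat.ordCompl_dvd m q)
    have h1 : (q : ℤ) ^ α ∣ t k := dvd_trans (pow_dvd_pow _ (by omega)) (ht k)
    have h2 : (m' : ℤ) ∣ u q k := by
      have hd1 : m' ∣ k.factorial ^ k :=
        dvd_pow (Nat.dvd_factorial hm'pos (by omega)) (by omega)
      have hcop : Nat.Coprime m' (q ^ ((k.factorial ^ k).factorization q)) := by
        apply Nat.Coprime.pow_right
        have := Nat.coprime_ordCompl hq (show m ≠ 0 by omega)
        rw [← hm'] at this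
        exact this.symm
      have hsplit : k.factorial ^ k =
          ordCompl[q] (k.factorial ^ k) * q ^ ((k.factorial ^ k).factorization q) := by
        rw [mul_comm]
        exact (Nat.ordProj_mul_ordCompl_eq_self (k.factorial ^ k) q).symm
      have hd2 : m' ∣ ordCompl[q] (k.factorial ^ k) := by
        apply Nat.Coprime.dvd_of_dvd_mul_right hcop
        rw [← hsplit]
        exact hd1
      exact dvd_trans (Int.natCast_dvd_natCast.mpr hd2) hu2
    have hcast : ((m : ℕ) : ℤ) = (q : ℤ) ^ α * (m' : ℤ) := by
      rw [← hmeq]; push_cast; ring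
    rw [hcast]
    have hmul : ((q : ℤ) ^ α * (m' : ℤ)) ∣ (t k * u q k) := mul_dvd_mul h1 h2
    have : (u q k * t k * c k) = (t k * u q k) * c k := by ring
    rw [this]
    exact hmul.mul_right (c k)
  have keyQ : ∀ (q : ℕ), q.Prime → (fun k => u q k * c k) ∈ A := by
    intro q hq
    haveI : Fact q.Prime := ⟨hq⟩
    have hspan : ∀ (a : ℤ) (n : ℕ), ((a : ℤ_[q]) ∈ Ideal.span {((q : ℤ_[q])) ^ n}) →
        (q : ℤ) ^ n ∣ a := by
      intro a n ha
      rw [← PadicInt.norm_le_pow_iff_mem_span_pow] at ha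
      have := (PadicInt.norm_int_le_pow_iff_dvd (k := a) (n := n)).mp ha
      exact_mod_cast this
    have happr : ∀ (π : ℤ_[q]) (k : ℕ),
        π - ((π.appr k : ℤ) : ℤ_[q]) ∈ Ideal.span {((q : ℤ_[q])) ^ k} := by
      intro π k
      have h := PadicInt.appr_spec k π
      have : ((π.appr k : ℤ) : ℤ_[q]) = ((π.appr k : ℕ) : ℤ_[q]) := by push_cast; ring
      rw [this]
      exact h
    set φ : ℤ_[q] → G ⧸ A :=
      fun π => QuotientAddGroup.mk (fun k => u q k * (π.appr k : ℤ) * c k) with hφ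
    have hmk : ∀ t s : ℕ → ℤ, (∀ k, (q : ℤ) ^ k ∣ (t k - s k)) →
        (QuotientAddGroup.mk (fun k => u q k * t k * c k) : G ⧸ A) =
          QuotientAddGroup.mk (fun k => u q k * s k * c k) := by
      intro t s hts
      rw [QuotientAddGroup.eq_iff_sub_mem]
      have hfun : ((fun k => u q k * t k * c k) - (fun k => u q k * s k * c k)) =
          fun k => u q k * (t k - s k) * c k := by
        funext k; simp only [Pi.sub_apply]; ring
      rw [hfun]
      exact hdef q hq _ hts
    have hadd : ∀ π π' : ℤ_[q], φ (π + π') = φ π + φ π' := by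
      intro π π'
      have hsum : φ π + φ π' =
          QuotientAddGroup.mk (fun k => u q k * ((π.appr k : ℤ) + (π'.appr k : ℤ)) * c k) := by
        rw [hφ]
        show QuotientAddGroup.mk _ + QuotientAddGroup.mk _ = _
        rw [← QuotientAddGroup.mk_add]
        congr 1
        funext k
        simp only [Pi.add_apply]
        ring
      rw [hsum, hφ]
      apply hmk
      intro k
      apply hspan
      have h1 := happr (π + π') k
      have h2 := happr π k
      have h3 := happr π' k
      have hexp : (((((π + π').appr k : ℤ) - ((π.appr k : ℤ) + (π'.appr k : ℤ))) : ℤ) : ℤ_[q]) =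
          (π - ((π.appr k : ℤ) : ℤ_[q])) + (π' - ((π'.appr k : ℤ) : ℤ_[q]))
            - ((π + π') - (((π + π').appr k : ℤ) : ℤ_[q])) := by
        push_cast
        ring
      rw [hexp]
      exact Submodule.sub_mem _ (Submodule.add_mem _ h2 h3) h1
    have hint : ∀ (n : ℤ) (π : ℤ_[q]), φ ((n : ℤ_[q]) * π) = n • φ π := by
      intro n π
      have hsm : n • φ π =
          QuotientAddGroup.mk (fun k => u q k * (n * (π.appr k : ℤ)) * c k) := by
        rw [hφ]
        show n • (QuotientAddGroup.mk _ : G ⧸ A) = _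
        rw [← QuotientAddGroup.mk_zsmul]
        congr 1
        funext k
        simp only [Pi.smul_apply, smul_eq_mul]
        ring
      rw [hsm, hφ]
      apply hmk
      intro k
      apply hspan
      have h1 := happr ((n : ℤ_[q]) * π) k
      have h2 := happr π k
      have hexp : ((((((n : ℤ_[q]) * π).appr k : ℤ) - n * (π.appr k : ℤ)) : ℤ) : ℤ_[q]) =
          (n : ℤ_[q]) * (π - ((π.appr k : ℤ) : ℤ_[q]))
            - ((n : ℤ_[q]) * π - ((((n : ℤ_[q]) * π).appr k : ℤ)) ) := by
        push_cast
        ring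
      rw [hexp]
      exact Submodule.sub_mem _ (Ideal.mul_mem_left _ _ h2) h1
    have hqpow : ∀ (j : ℕ) (π : ℤ_[q]), φ ((q : ℤ_[q]) ^ j * π) = ((q : ℤ) ^ j) • φ π := by
      intro j π
      have := hint ((q : ℤ) ^ j) π
      have hcast : (((q : ℤ) ^ j : ℤ) : ℤ_[q]) = (q : ℤ_[q]) ^ j := by push_cast; ring
      rwa [hcast] at this
    have hcop : ∀ (π : ℤ_[q]) (r : ℕ), r.Prime → r ≠ q → ∀ β : ℕ,
        ∃ y, ((r : ℤ) ^ β) • y = φ π := by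
      intro π r hr hrq β
      have hunit : IsUnit ((r : ℤ_[q])) := by
        rw [PadicInt.isUnit_iff]
        have hle : ‖((r : ℤ) : ℤ_[q])‖ ≤ 1 := PadicInt.norm_le_one _
        have hnlt : ¬ ‖((r : ℤ) : ℤ_[q])‖ < 1 := by
          rw [PadicInt.norm_int_lt_one_iff_dvd]
          intro hdvd
          have : (q : ℤ) ∣ (r : ℤ) := hdvd
          rw [Int.natCast_dvd_natCast] at this
          exact hrq ((Nat.prime_dvd_prime_iff_eq hq hr).mp this).symm
        have : ‖((r : ℤ) : ℤ_[q])‖ = 1 := le_antisymm hle (not_lt.mp hnlt)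
        exact_mod_cast this
      obtain ⟨v, hv⟩ := isUnit_iff_exists_inv.mp (hunit.pow β)
      refine ⟨φ (v * π), ?_⟩
      have hcast : (((r : ℤ) ^ β : ℤ) : ℤ_[q]) = (r : ℤ_[q]) ^ β := by push_cast; ring
      rw [← hint ((r : ℤ) ^ β) (v * π), hcast]
      congr 1
      rw [← mul_assoc, hv, one_mul]
    have hmul0 : ∀ π σ : ℤ_[q], φ π = 0 → φ (π * σ) = 0 := by
      intro π σ hπ0
      apply hUlm
      apply alldiv
      intro r β hr
      by_cases hrq : r = q
      · subst hrq
        obtain ⟨τ, hτ⟩ := Ideal.mem_span_singleton'.mp (happr σ β)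
        have hexp : π * σ = ((σ.appr β : ℤ) : ℤ_[r]) * π + (r : ℤ_[r]) ^ β * (τ * π) := by
          linear_combination π * hτ.symm
        refine ⟨φ (τ * π), ?_⟩
        rw [hexp, hadd, hint, hqpow, hπ0, smul_zero, zero_add]
      · exact hcop (π * σ) r hr hrq β
    by_cases hall : ∀ π : ℤ_[q], φ π = 0
    · have h1 := hall 1
      have heq : (QuotientAddGroup.mk (fun k => u q k * c k) : G ⧸ A) = φ 1 := by
        rw [hφ]
        have : (fun k => u q k * c k) = fun k => u q k * (1 : ℤ) * c k := by
          funext k; ring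
        rw [this]
        apply hmk
        intro k
        apply hspan
        have h2 := happr 1 k
        have hexp : ((((1 : ℤ) - ((1 : ℤ_[q]).appr k : ℤ)) : ℤ) : ℤ_[q]) =
            (1 : ℤ_[q]) - (((1 : ℤ_[q]).appr k : ℤ) : ℤ_[q]) := by push_cast; ring
        rw [hexp]
        exact h2
      have hz : (QuotientAddGroup.mk (fun k => u q k * c k) : G ⧸ A) = 0 := by
        rw [heq]; exact h1
      rwa [QuotientAddGroup.eq_zero_iff] at hz
    · push_neg at hall
      obtain ⟨ρ, hρ⟩ := hall
      have hinj0 : ∀ κ : ℤ_[q], φ κ = 0 → κ = 0 := by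
        intro κ hκ0
        by_contra hκ
        have hspec := PadicInt.unitCoeff_spec hκ
        set ε := PadicInt.valuation κ with hε
        set w := PadicInt.unitCoeff hκ with hw
        have huu : (w : ℤ_[q]) * ((w⁻¹ : ℤ_[q]ˣ) : ℤ_[q]) = 1 := by
          exact_mod_cast w.mul_inv
        have hprod : (q : ℤ_[q]) ^ ε * ρ = κ * (((w⁻¹ : ℤ_[q]ˣ) : ℤ_[q]) * ρ) := by
          rw [hspec]
          linear_combination (-((q : ℤ_[q]) ^ ε * ρ)) * huu
        have h0 : φ ((q : ℤ_[q]) ^ ε * ρ) = 0 := by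
          rw [hprod]; exact hmul0 κ _ hκ0
        rw [hqpow] at h0
        have hqne : ((q : ℤ) ^ ε) ≠ 0 := pow_ne_zero _ (by exact_mod_cast hq.pos.ne')
        exact hρ (htfZ _ _ hqne h0)
      have hinj : Function.Injective (AddMonoidHom.mk' φ hadd) := by
        rw [injective_iff_map_eq_zero]
        intro a ha
        exact hinj0 a ha
      exact absurd ⟨(AddMonoidHom.mk' φ hadd).range,
        ⟨(AddMonoidHom.ofInjective hinj).symm⟩⟩ (hct.2.2 q)

  have hpow : ∀ r β : ℕ, r.Prime → ∃ y : G ⧸ A, ((r : ℤ) ^ β) • y = QuotientAddGroup.mk c := by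
    intro r β hr
    have hmem := keyQ r hr
    have hcongr : (QuotientAddGroup.mk c : G ⧸ A) =
        QuotientAddGroup.mk (fun k => (1 - u r k) * c k) := by
      rw [QuotientAddGroup.eq_iff_sub_mem]
      have hfun : (c - fun k => (1 - u r k) * c k) = fun k => u r k * c k := by
        funext k; simp only [Pi.sub_apply]; ring
      rw [hfun]; exact hmem
    rw [hcongr]
    have hdvd : ∀ k, β ≤ k → ((r ^ β : ℕ) : ℤ) ∣ (1 - u r k) * c k := by
      intro k hk
      obtain ⟨h1, _⟩ := huspec r k hr
      have h2 : (r : ℤ) ^ k ∣ (1 - u r k) := by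
        rw [show (1 - u r k) = -(u r k - 1) by ring]
        exact dvd_neg.mpr h1
      have h3 : (r : ℤ) ^ β ∣ (1 - u r k) := dvd_trans (pow_dvd_pow _ hk) h2
      have := h3.mul_right (c k)
      rwa [show ((r ^ β : ℕ) : ℤ) = (r : ℤ) ^ β by push_cast; ring]
    obtain ⟨y, hy⟩ := div_class he _ (r ^ β) β hdvd
    refine ⟨y, ?_⟩
    rwa [show ((r ^ β : ℕ) : ℤ) = (r : ℤ) ^ β by push_cast; ring] at hy
  have hfin : (QuotientAddGroup.mk c : G ⧸ A) = 0 :=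
    hUlm _ (alldiv _ (fun r β hr => hpow r β hr))
  rwa [QuotientAddGroup.eq_zero_iff] at hfin


theorem closed_lemma (A : AddSubgroup G) (hct : Cotorsionfree (G ⧸ A)) (x : G)
    (hx : ∀ L : ℕ, ∃ a ∈ A, ∀ k, k < L → a k = x k) : x ∈ A := by
  classical
  choose a ha hagree using hx
  set b : ℕ → G := fun K => a (K + 1) - a K with hb
  have hbA : ∀ K, b K ∈ A := fun K => A.sub_mem (ha _) (ha _)
  have hbz : ∀ K j, j < K → b K j = 0 := by
    intro K j hj
    simp only [hb, Pi.sub_apply]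
    rw [hagree (K + 1) j (by omega), hagree K j hj, sub_self]
  set Y : G →+ G := AddMonoidHom.mk'
      (fun ζ => fun j => ∑ K ∈ Finset.range (j + 1), ζ K * b K j)
      (by
        intro ζ ζ'
        funext j
        simp [Pi.add_apply, add_mul, Finset.sum_add_distrib]) with hY
  have hYe : ∀ K, Y (e K) = b K := by
    intro K
    funext j
    show (∑ i ∈ Finset.range (j + 1), e K i * b i j) = b K j
    have hcongr : ∀ i ∈ Finset.range (j + 1), e K i * b i j = if i = K then b K j else 0 := by
      intro i _
      by_cases h : i = K
      · subst h; simp [e, Pi.single_apply]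
      · simp [e, Pi.single_apply, h]
    rw [Finset.sum_congr rfl hcongr, Finset.sum_ite_eq' (Finset.range (j + 1)) K fun _ => b K j]
    by_cases hKj : K ∈ Finset.range (j + 1)
    · rw [if_pos hKj]
    · rw [if_neg hKj]
      have : j < K := by
        by_contra hc
        exact hKj (Finset.mem_range.mpr (by omega))
      exact (hbz K j this).symm
  have hY1 : Y (fun _ => (1 : ℤ)) = x - a 0 := by
    funext j
    show (∑ K ∈ Finset.range (j + 1), 1 * b K j) = x j - a 0 j
    have : ∀ K ∈ Finset.range (j + 1), 1 * b K j = a (K + 1) j - a K j := by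
      intro K _
      rw [one_mul, hb]
      rfl
    rw [Finset.sum_congr rfl this, Finset.sum_range_sub (fun K => a K j) (j + 1)]
    rw [hagree (j + 1) j (by omega)]
  set A' : AddSubgroup G := A.comap Y with hA'
  have he' : ∀ k, e k ∈ A' := by
    intro k
    show Y (e k) ∈ A
    rw [hYe]
    exact hbA k
  have hle : A' ≤ A.comap Y := le_of_eq rfl
  set f : G ⧸ A' →+ G ⧸ A := QuotientAddGroup.map A' A Y hle with hf
  have hinjf : Function.Injective f := by
    rw [injective_iff_map_eq_zero]
    intro g hg
    induction g using QuotientAddGroup.induction_on with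
    | H z =>
      rw [hf, QuotientAddGroup.map_mk] at hg
      rw [QuotientAddGroup.eq_zero_iff] at hg ⊢
      exact hg
  have hct' : Cotorsionfree (G ⧸ A') := ctf_of_injective f hinjf hct
  have htop : A' = ⊤ := main_lemma A' he' hct'
  have h1 : (fun _ => (1 : ℤ)) ∈ A' := by rw [htop]; trivial
  have h2 : x - a 0 ∈ A := by
    have : Y (fun _ => (1 : ℤ)) ∈ A := h1
    rwa [hY1] at this
  have := A.add_mem h2 (ha 0)
  simpa using this

end CTF


/-- the Baer-Specker group `ℤ^ω` is never the union of an increasing chain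
(not assumed continuous) `⟨A_α : α < δ⟩` of proper subgroups with all quotients
`ℤ^ω/A_α` cotorsionfree. -/
theorem statement3 :
    ¬ ∃ (δ : Ordinal) (A : Ordinal → AddSubgroup (ℕ → ℤ)),
      (∀ α β : Ordinal, α ≤ β → β < δ → A α ≤ A β) ∧
      (∀ α < δ, A α ≠ ⊤) ∧
      (∀ α < δ, Cotorsionfree ((ℕ → ℤ) ⧸ A α)) ∧
      (⋃ α ∈ Set.Iio δ, (A α : Set (ℕ → ℤ))) = Set.univ := by
  classical
  rintro ⟨δ, A, hinc, hproper, hctf, hcover⟩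
  have hmem : ∀ x : ℕ → ℤ, ∃ β, β < δ ∧ x ∈ A β := by
    intro x
    have hx : x ∈ ⋃ α ∈ Set.Iio δ, (A α : Set (ℕ → ℤ)) := by rw [hcover]; trivial
    simpa using hx
  by_cases hcase : ∃ α, α < δ ∧ ∀ k, CTF.e k ∈ A α
  · obtain ⟨α, hα, hek⟩ := hcase
    exact hproper α hα (CTF.main_lemma (A α) hek (hctf α hα))
  · push_neg at hcase
    choose βo hβo hmemo using hmem
    set β : ℕ → Ordinal := fun k => βo (CTF.e k) with hβ
    have hunb : ∀ α, α < δ → ∃ k, α < β k := by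
      intro α hα
      obtain ⟨k, hk⟩ := hcase α hα
      refine ⟨k, ?_⟩
      by_contra hc
      push_neg at hc
      exact hk (hinc (β k) α hc hα (hmemo (CTF.e k)))
    set γ : ℕ → Ordinal := fun n => Nat.rec (β 0) (fun n g => max g (β (n + 1))) n with hγ
    have hγsucc : ∀ n, γ (n + 1) = max (γ n) (β (n + 1)) := fun n => rfl
    have hγlt : ∀ n, γ n < δ := by
      intro n
      induction n with
      | zero => exact hβo (CTF.e 0)
      | succ n ih => rw [hγsucc]; exact max_lt ih (hβo (CTF.e (n + 1)))
    have hγmono : ∀ m n, m ≤ n → γ m ≤ γ n := by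
      intro m n h
      induction n with
      | zero => have : m = 0 := by omega
                rw [this]
      | succ n ih =>
        rcases Nat.lt_or_ge m (n + 1) with h1 | h1
        · exact le_trans (ih (by omega)) (by rw [hγsucc]; exact le_max_left _ _)
        · have : m = n + 1 := by omega
          rw [this]
    have hβγ : ∀ k, β k ≤ γ k := by
      intro k
      cases k with
      | zero => exact le_refl _
      | succ n => rw [hγsucc]; exact le_max_right _ _
    set B : ℕ → AddSubgroup (ℕ → ℤ) := fun n => A (γ n) with hB
    have hBmono : ∀ m n, m ≤ n → B m ≤ B n := fun m n h => hinc _ _ (hγmono m n h) (hγlt n)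
    have hBe : ∀ k, CTF.e k ∈ B k := fun k => hinc (β k) (γ k) (hβγ k) (hγlt k) (hmemo (CTF.e k))
    have hBcover : ∀ x, ∃ n, x ∈ B n := by
      intro x
      obtain ⟨k, hk⟩ := hunb (βo x) (hβo x)
      exact ⟨k, hinc (βo x) (γ k) (le_trans hk.le (hβγ k)) (hγlt k) (hmemo x)⟩
    have hBproper : ∀ n, B n ≠ ⊤ := fun n => hproper _ (hγlt n)
    have hBctf : ∀ n, Cotorsionfree ((ℕ → ℤ) ⧸ B n) := fun n => hctf _ (hγlt n)
    by_cases hopen : ∃ (n : ℕ) (K : ℕ) (v : ℕ → ℤ), ∀ y : ℕ → ℤ, (∀ k, k < K → y k = v k) → y ∈ B n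
    · obtain ⟨n, K, v, hT⟩ := hopen
      obtain ⟨M, hM1, hM2⟩ : ∃ M, n ≤ M ∧ K ≤ M := ⟨max n K, le_max_left _ _, le_max_right _ _⟩
      apply hBproper M
      rw [AddSubgroup.eq_top_iff']
      intro x
      have hTK : ∀ t : ℕ → ℤ, (∀ k, k < K → t k = 0) → t ∈ B n := by
        intro t ht
        have hy1 : (fun k => if k < K then v k else 0) ∈ B n :=
          hT _ (fun k hk => by simp [hk])
        have hy2 : ((fun k => if k < K then v k else 0) + t) ∈ B n :=
          hT _ (fun k hk => by simp [hk, ht k hk])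
        have := (B n).sub_mem hy2 hy1
        simpa using this
      set hd : ℕ → ℤ := fun k => if k < K then x k else 0 with hhd
      set tl : ℕ → ℤ := fun k => if k < K then 0 else x k with htl
      have hxsum : x = hd + tl := by
        funext k
        by_cases h : k < K <;> simp [hhd, htl, h]
      have htlmem : tl ∈ B M := hBmono n M hM1 (hTK tl (fun k hk => by simp [htl, hk]))
      have hhdmem : hd ∈ B M := by
        apply CTF.finsupp_mem' K (fun k hk => hBmono k M (by omega) (hBe k))
        intro k hk
        simp only [hhd]
        rw [if_neg (by omega)]
      rw [hxsum]
      exact (B M).add_mem hhdmem htlmem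
    · push_neg at hopen
      -- recursion step
      have hstep : ∀ (n : ℕ) (s : (ℕ → ℤ) × ℕ), ∃ s' : (ℕ → ℤ) × ℕ,
          (∀ k, k < s.2 → s'.1 k = s.1 k) ∧ s.2 < s'.2 ∧
          ∀ a ∈ B n, ∃ k, k < s'.2 ∧ a k ≠ s'.1 k := by
        intro n s
        obtain ⟨y, hy1, hy2⟩ := hopen n s.2 s.1
        have hL : ∃ L : ℕ, ∀ a ∈ B n, ∃ k, k < L ∧ a k ≠ y k := by
          by_contra hc
          push_neg at hc
          apply hy2
          apply CTF.closed_lemma (B n) (hBctf n) y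
          intro L
          obtain ⟨a, ha, hagr⟩ := hc L
          exact ⟨a, ha, fun k hk => hagr k hk⟩
        obtain ⟨L, hLspec⟩ := hL
        refine ⟨(y, max (s.2 + 1) L), hy1, by show s.2 < max (s.2 + 1) L; omega, ?_⟩
        intro a ha
        obtain ⟨k, hk1, hk2⟩ := hLspec a ha
        exact ⟨k, lt_of_lt_of_le hk1 (le_max_right _ _), hk2⟩
      choose step hstep1 hstep2 hstep3 using hstep
      set S : ℕ → (ℕ → ℤ) × ℕ := fun n => Nat.rec ((fun _ => 0), 0) (fun n s => step n s) n
        with hS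
      have hSsucc : ∀ n, S (n + 1) = step n (S n) := fun n => rfl
      set v : ℕ → ℕ → ℤ := fun n => (S n).1 with hv
      set K : ℕ → ℕ := fun n => (S n).2 with hK
      have hKlt : ∀ n, K n < K (n + 1) := by
        intro n
        have := hstep2 n (S n)
        rwa [← hSsucc] at this
      have hagree : ∀ n k, k < K n → v (n + 1) k = v n k := by
        intro n k hk
        have := hstep1 n (S n) k hk
        rwa [← hSsucc] at this
      have hwitness : ∀ n, ∀ a ∈ B n, ∃ k, k < K (n + 1) ∧ a k ≠ v (n + 1) k := by
        intro n
        have := hstep3 n (S n)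
        rwa [← hSsucc] at this
      have hKmono : ∀ m n, m ≤ n → K m ≤ K n := by
        intro m n h
        induction n with
        | zero => have : m = 0 := by omega
                  rw [this]
        | succ n ih =>
          rcases Nat.lt_or_ge m (n + 1) with h1 | h1
          · exact le_trans (ih (by omega)) (le_of_lt (hKlt n))
          · have : m = n + 1 := by omega
            rw [this]
      have hKge : ∀ n, n ≤ K n := by
        intro n
        induction n with
        | zero => omega
        | succ n ih => have := hKlt n; omega
      have hstab : ∀ m n, m ≤ n → ∀ k, k < K m → v n k = v m k := by
        intro m n h
        induction n with
        | zero => have : m = 0 := by omega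
                  rw [this]
                  exact fun k _ => rfl
        | succ n ih =>
          rcases Nat.lt_or_ge m (n + 1) with h1 | h1
          · intro k hk
            have h2 : k < K n := lt_of_lt_of_le hk (hKmono m n (by omega))
            rw [hagree n k h2]
            exact ih (by omega) k hk
          · have : m = n + 1 := by omega
            rw [this]
            exact fun k _ => rfl
      set x : ℕ → ℤ := fun k => v (k + 1) k with hx
      have hxv : ∀ n k, k < K n → x k = v n k := by
        intro n k hk
        rcases Nat.lt_or_ge (k + 1) n with h1 | h1
        · exact (hstab (k + 1) n (by omega) k (by have := hKge (k + 1); omega)).symm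
        · exact (hstab n (k + 1) (by omega) k hk)
      obtain ⟨n, hn⟩ := hBcover x
      obtain ⟨k, hk1, hk2⟩ := hwitness n x hn
      exact hk2 (hxv (n + 1) k hk1)
end

section
/- If A is a subgroup of the Baer-Specker group ℤ^ω that contains the subgroup ℤ^(ω) of finitely supported functions, and the quotient ℤ^ω/A is cotorsionfree, then A = ℤ^ω. -/
/-- The subgroup `ℤ^(ω)` of finitely supported functions in the Baer-Specker group `ℤ^ω`. -/
def finSuppSubgroup : AddSubgroup (ℕ → ℤ) where
  carrier := {x | (Function.support x).Finite}
  zero_mem' := by simp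
  add_mem' := by
    intro a b ha hb
    exact Set.Finite.subset (ha.union hb) (Function.support_add a b)
  neg_mem' := by
    intro a ha
    simpa [Function.support_neg] using ha

section Helpers

open Finset

lemma specker_complete (A : AddSubgroup (ℕ → ℤ)) (hA : finSuppSubgroup ≤ A)
    (g : ℕ → (ℕ → ℤ) ⧸ A) :
    ∃ s : (ℕ → ℤ) ⧸ A, ∀ N : ℕ, ∃ u : (ℕ → ℤ) ⧸ A,
      s - ∑ n ∈ range N, (n.factorial : ℤ) • g n = (N.factorial : ℤ) • u := by
  have hsur : ∀ n, ∃ x : ℕ → ℤ, (QuotientAddGroup.mk' A) x = g n := fun n =>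
    QuotientAddGroup.mk'_surjective A (g n)
  choose G hG using hsur
  set mk := QuotientAddGroup.mk' A with hmk
  refine ⟨mk (fun k => ∑ n ∈ range (k+1), (n.factorial : ℤ) * G n k), fun N => ?_⟩
  refine ⟨mk (fun k => ∑ n ∈ Ico N (k+1), ((n.factorial / N.factorial : ℕ) : ℤ) * G n k), ?_⟩
  have key : (fun k => ∑ n ∈ range (k+1), (n.factorial : ℤ) * G n k)
      - (∑ n ∈ range N, (n.factorial : ℤ) • G n)
      - (N.factorial : ℤ) • (fun k => ∑ n ∈ Ico N (k+1), ((n.factorial / N.factorial : ℕ) : ℤ) * G n k) ∈ A := by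
    apply hA
    show (Function.support _).Finite
    apply Set.Finite.subset (Set.finite_Iio N)
    rw [Function.support_subset_iff']
    intro k hk
    have hNk : N ≤ k := le_of_not_gt hk
    have h1 : ∑ n ∈ range N, (n.factorial : ℤ) * G n k + ∑ n ∈ Ico N (k+1), (n.factorial : ℤ) * G n k
        = ∑ n ∈ range (k+1), (n.factorial : ℤ) * G n k :=
      Finset.sum_range_add_sum_Ico _ (by omega)
    have h2 : (N.factorial : ℤ) * ∑ n ∈ Ico N (k+1), ((n.factorial / N.factorial : ℕ) : ℤ) * G n k
        = ∑ n ∈ Ico N (k+1), (n.factorial : ℤ) * G n k := by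
      rw [Finset.mul_sum]
      apply Finset.sum_congr rfl
      intro n hn
      have hd : N.factorial ∣ n.factorial :=
        Nat.factorial_dvd_factorial (Finset.mem_Ico.mp hn).1
      rw [← mul_assoc, ← Nat.cast_mul, Nat.mul_div_cancel' hd]
    have h3 : (∑ n ∈ range N, (n.factorial : ℤ) • G n) k
        = ∑ n ∈ range N, (n.factorial : ℤ) * G n k := by
      simp [Finset.sum_apply]
    simp only [Pi.sub_apply, Pi.smul_apply, smul_eq_mul, h3, h2]
    linarith [h1]
  have h0 : mk _ = 0 := (QuotientAddGroup.eq_zero_iff _).mpr key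
  rw [map_sub, map_sub, map_sum, map_zsmul] at h0
  have h4 : ∀ n, mk ((n.factorial : ℤ) • G n) = (n.factorial : ℤ) • g n := by
    intro n; rw [map_zsmul, hG]
  simp only [h4] at h0
  linear_combination (norm := abel) h0

variable {Q : Type*} [AddCommGroup Q]

lemma exists_zmod_subgroup (q : Q) (hq : q ≠ 0) (n : ℕ) (hn : 0 < n) (hnq : n • q = 0) :
    ∃ p : ℕ, p.Prime ∧ ∃ H : AddSubgroup Q, Nonempty (H ≃+ ZMod p) := by
  have hfin : IsOfFinAddOrder q := isOfFinAddOrder_iff_nsmul_eq_zero.mpr ⟨n, hn, hnq⟩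
  set o := addOrderOf q with ho
  have ho1 : o ≠ 1 := fun h => hq (AddMonoid.addOrderOf_eq_one_iff.mp h)
  have hopos : 0 < o := hfin.addOrderOf_pos
  set p := o.minFac with hp
  have hpp : p.Prime := Nat.minFac_prime ho1
  have hpd : p ∣ o := Nat.minFac_dvd o
  set q' : Q := (o / p) • q with hq'
  have hpq' : p • q' = 0 := by
    rw [hq', ← mul_nsmul, Nat.div_mul_cancel hpd]
    exact ho ▸ addOrderOf_nsmul_eq_zero q
  have hq'ne : q' ≠ 0 := by
    intro h
    have hdvd : o ∣ o / p := addOrderOf_dvd_of_nsmul_eq_zero (by rw [← hq', h])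
    have h1 : 0 < o / p := Nat.div_pos (Nat.minFac_le hopos) hpp.pos
    have h2 : o / p < o := Nat.div_lt_self hopos hpp.one_lt
    exact absurd (Nat.le_of_dvd h1 hdvd) (by omega)
  -- order of q' is exactly p
  have hord : addOrderOf q' = p := by
    have hdvd : addOrderOf q' ∣ p := addOrderOf_dvd_of_nsmul_eq_zero hpq'
    rcases (Nat.Prime.eq_one_or_self_of_dvd hpp _ hdvd) with h | h
    · exact absurd (AddMonoid.addOrderOf_eq_one_iff.mp h) hq'ne
    · exact h
  -- build the hom ZMod p →+ Q
  have hfp : (zmultiplesHom Q q') (p : ℤ) = 0 := by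
    simp only [zmultiplesHom_apply, natCast_zsmul]
    exact hpq'
  set f : ZMod p →+ Q := ZMod.lift p ⟨zmultiplesHom Q q', hfp⟩ with hf
  have hinj : Function.Injective f := by
    rw [hf, ZMod.lift_injective]
    intro m hm
    simp only [zmultiplesHom_apply] at hm
    have : (addOrderOf q' : ℤ) ∣ m := addOrderOf_dvd_iff_zsmul_eq_zero.mpr hm
    rw [hord] at this
    exact (ZMod.intCast_zmod_eq_zero_iff_dvd m p).mpr this
  exact ⟨p, hpp, f.range, ⟨(AddMonoidHom.ofInjective hinj).symm⟩⟩

variable {Q : Type*} [AddCommGroup Q]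

lemma exists_rat_subgroup (tf : ∀ n : ℤ, n ≠ 0 → ∀ q : Q, n • q = 0 → q = 0)
    (d : Q) (hd : d ≠ 0) (hdiv : ∀ n : ℕ, 0 < n → ∃ r : Q, d = (n : ℤ) • r) :
    ∃ H : AddSubgroup Q, Nonempty (H ≃+ ℚ) := by
  have cancel : ∀ (n : ℤ), n ≠ 0 → ∀ x y : Q, n • x = n • y → x = y := by
    intro n hn x y h
    have : n • (x - y) = 0 := by rw [smul_sub, h, sub_self]
    have := tf n hn _ this
    rwa [sub_eq_zero] at this
  have ex : ∀ r : ℚ, ∃ x : Q, (r.den : ℤ) • x = r.num • d := by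
    intro r
    obtain ⟨e, he⟩ := hdiv r.den r.pos
    refine ⟨r.num • e, ?_⟩
    rw [smul_comm, ← he]
  set F : ℚ → Q := fun r => (ex r).choose with hF
  have Fspec : ∀ r : ℚ, (r.den : ℤ) • F r = r.num • d := fun r => (ex r).choose_spec
  -- characterization
  have Fchar : ∀ (r : ℚ) (a b : ℤ), b ≠ 0 → r * (b : ℚ) = (a : ℚ) → b • F r = a • d := by
    intro r a b hb h
    have hcross : r.num * b = a * (r.den : ℤ) := by
      have hr : (r.num : ℚ) / (r.den : ℚ) = r := Rat.num_div_den r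
      have hden : ((r.den : ℤ) : ℚ) ≠ 0 := by
        exact_mod_cast (Nat.cast_ne_zero (R := ℚ)).mpr r.den_nz
      have : ((r.num * b : ℤ) : ℚ) = ((a * (r.den : ℤ) : ℤ) : ℚ) := by
        push_cast
        field_simp at h ⊢
        rw [← hr] at h
        field_simp at h
        linarith [h]
      exact_mod_cast this
    apply cancel (r.den : ℤ) (by exact_mod_cast r.den_nz)
    rw [smul_comm, Fspec, ← mul_smul, ← mul_smul]
    congr 1
    linarith [hcross]
  have Fadd : ∀ r s : ℚ, F (r + s) = F r + F s := by
    intro r s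
    set b : ℤ := (r.den : ℤ) * (s.den : ℤ) with hb
    have hbne : b ≠ 0 := by
      simp [hb, r.den_nz, s.den_nz]
    set a : ℤ := r.num * s.den + s.num * r.den with ha
    have h1 : (r + s) * (b : ℚ) = (a : ℚ) := by
      rw [hb, ha]
      push_cast
      calc (r + s) * ((r.den : ℚ) * (s.den : ℚ))
          = r * (r.den : ℚ) * (s.den : ℚ) + s * (s.den : ℚ) * (r.den : ℚ) := by ring
        _ = (r.num : ℚ) * (s.den : ℚ) + (s.num : ℚ) * (r.den : ℚ) := by
            rw [Rat.mul_den_eq_num, Rat.mul_den_eq_num]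
    have h2 : b • F (r + s) = a • d := Fchar _ a b hbne h1
    have h3 : b • (F r + F s) = a • d := by
      have e1 : b • F r = (s.den : ℤ) • ((r.num : ℤ) • d) := by
        rw [hb, mul_comm, mul_smul, Fspec]
      have e2 : b • F s = (r.den : ℤ) • ((s.num : ℤ) • d) := by
        rw [hb, mul_smul, Fspec]
      rw [smul_add, e1, e2, ← mul_smul, ← mul_smul, ha, add_smul,
        mul_comm ((s.den:ℤ)) r.num, mul_comm ((r.den:ℤ)) s.num]
    exact cancel b hbne _ _ (h2.trans h3.symm)
  set f : ℚ →+ Q := AddMonoidHom.mk' F Fadd with hf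
  have hinj : Function.Injective f := by
    rw [injective_iff_map_eq_zero]
    intro r hr
    have : (r.den : ℤ) • F r = r.num • d := Fspec r
    rw [show F r = f r from rfl, hr, smul_zero] at this
    have hnum : r.num = 0 := by
      by_contra hne
      exact hd (tf r.num hne d this.symm)
    exact Rat.zero_of_num_zero hnum
  exact ⟨f.range, ⟨(AddMonoidHom.ofInjective hinj).symm⟩⟩

open Finset

variable {Q : Type*} [AddCommGroup Q]

lemma exists_padic_subgroup (p : ℕ) (hp : p.Prime) [Fact p.Prime]
    (tf : ∀ n : ℤ, n ≠ 0 → ∀ q : Q, n • q = 0 → q = 0)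
    (hC : ∀ g : ℕ → Q, ∃ s : Q, ∀ N : ℕ, ∃ u : Q,
      s - ∑ n ∈ range N, (n.factorial : ℤ) • g n = (N.factorial : ℤ) • u)
    (hH : ∀ q : Q, (∀ n : ℕ, 0 < n → ∃ r : Q, q = (n : ℤ) • r) → q = 0)
    (q0 : Q) (hq0 : ¬ ∃ r : Q, q0 = (p : ℤ) • r) :
    ∃ H : AddSubgroup Q, Nonempty (H ≃+ PadicInt p) := by
  -- the p-part and p'-part of N!
  set e : ℕ → ℕ := fun N => (N.factorial).factorization p with he
  set m : ℕ → ℕ := fun N => N.factorial / p ^ (e N) with hm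
  have hem : ∀ N, p ^ (e N) * m N = N.factorial := fun N =>
    Nat.ordProj_mul_ordCompl_eq_self (N.factorial) p
  have hpm : ∀ N, ¬ p ∣ m N := fun N =>
    Nat.not_dvd_ordCompl hp (Nat.factorial_ne_zero N)
  have hcop : ∀ N, IsCoprime ((p : ℤ) ^ (e N)) ((m N : ℤ)) := by
    intro N
    have h1 : Nat.Coprime p (m N) := (hp.coprime_iff_not_dvd).mpr (hpm N)
    have h2 : Nat.Coprime (p ^ (e N)) (m N) := Nat.Coprime.pow_left _ h1
    have := Nat.isCoprime_iff_coprime.mpr h2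
    exact_mod_cast this
  -- Bezout coefficients
  have bez : ∀ N, ∃ x : ℤ, ∃ y : ℤ, x * (p : ℤ) ^ (e N) + y * (m N : ℤ) = 1 := by
    intro N
    obtain ⟨x, y, hxy⟩ := hcop N
    exact ⟨x, y, hxy⟩
  choose X Y hXY using bez
  -- the approximating integers
  set c : PadicInt p → ℕ → ℤ :=
    fun α N => (PadicInt.appr α (e N) : ℤ) * (1 - X N * (p : ℤ) ^ (e N)) with hc
  have P1 : ∀ α N, ((p : ℤ) ^ (e N)) ∣ (c α N - (PadicInt.appr α (e N) : ℤ)) := by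
    intro α N
    refine ⟨-(PadicInt.appr α (e N) : ℤ) * X N, ?_⟩
    rw [hc]; ring
  have P2 : ∀ α N, ((m N : ℤ)) ∣ c α N := by
    intro α N
    refine ⟨(PadicInt.appr α (e N) : ℤ) * Y N, ?_⟩
    have h1 : (1 : ℤ) - X N * (p : ℤ) ^ (e N) = Y N * (m N : ℤ) := by
      linarith [hXY N]
    rw [hc]; dsimp only; rw [h1]; ring
  -- approximation in ℤ_[p]
  have D4 : ∀ α N, ((p : PadicInt p) ^ (e N)) ∣ ((c α N : ℤ) : PadicInt p) - α := by
    intro α N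
    have h1 : ((p : PadicInt p) ^ (e N)) ∣ ((c α N : ℤ) : PadicInt p)
        - ((PadicInt.appr α (e N) : ℤ) : PadicInt p) := by
      obtain ⟨t, ht⟩ := P1 α N
      refine ⟨(t : PadicInt p), ?_⟩
      have h := congrArg (fun z : ℤ => ((z : PadicInt p))) ht
      push_cast at h ⊢
      exact h
    have h2 : ((p : PadicInt p) ^ (e N)) ∣ α - ((PadicInt.appr α (e N) : ℤ) : PadicInt p) := by
      have h2' := PadicInt.appr_spec (e N) α
      rw [Ideal.mem_span_singleton] at h2'
      push_cast
      push_cast at h2'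
      exact h2'
    have h3 := dvd_sub h1 h2
    convert h3 using 1
    ring
  -- transfer of divisibility from ℤ_[p] to ℤ
  have tr : ∀ (z : ℤ) (k : ℕ), ((p : PadicInt p) ^ k ∣ ((z : ℤ) : PadicInt p)) → ((p : ℤ) ^ k ∣ z) := by
    intro z k h
    have := (PadicInt.pow_p_dvd_int_iff k z).mp h
    exact_mod_cast this
  -- monotonicity of e and m
  have emono : ∀ {M N : ℕ}, M ≤ N → e M ≤ e N := by
    intro M N hMN
    have h1 : p ^ (e M) ∣ M.factorial := Nat.ordProj_dvd _ _
    have h2 : p ^ (e M) ∣ N.factorial :=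
      h1.trans (Nat.factorial_dvd_factorial hMN)
    exact (Nat.Prime.pow_dvd_iff_le_factorization hp (Nat.factorial_ne_zero N)).mp h2
  have mmono : ∀ {M N : ℕ}, M ≤ N → m M ∣ m N := by
    intro M N hMN
    exact Nat.ordCompl_dvd_ordCompl_of_dvd (Nat.factorial_dvd_factorial hMN) p
  -- a general divisibility combination
  have comb : ∀ (N : ℕ) (z : ℤ), ((p : ℤ) ^ (e N) ∣ z) → ((m N : ℤ) ∣ z) →
      ((N.factorial : ℤ) ∣ z) := by
    intro N z h1 h2
    have h3 := (hcop N).mul_dvd h1 h2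
    have h4 : ((p : ℤ) ^ (e N)) * ((m N : ℤ)) = (N.factorial : ℤ) := by
      exact_mod_cast congrArg (fun n : ℕ => (n : ℤ)) (hem N)
    rwa [h4] at h3
  -- Cauchy property
  have Dcauchy : ∀ (α : PadicInt p) (N : ℕ),
      ((N.factorial : ℤ)) ∣ (c α (N+1) - c α N) := by
    intro α N
    apply comb
    · apply tr
      have h1 : ((p : PadicInt p) ^ (e N)) ∣ ((c α (N+1) : ℤ) : PadicInt p) - α := by
        exact dvd_trans (pow_dvd_pow _ (emono (Nat.le_succ N))) (D4 α (N+1))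
      have h2 := D4 α N
      have h3 := dvd_sub h1 h2
      have h4 : ((c α (N+1) : ℤ) : PadicInt p) - α - (((c α N : ℤ) : PadicInt p) - α)
          = (((c α (N+1) - c α N : ℤ) : PadicInt p)) := by push_cast; ring
      rwa [h4] at h3
    · exact dvd_sub (dvd_trans (Int.natCast_dvd_natCast.mpr (mmono (Nat.le_succ N))) (P2 α (N+1))) (P2 α N)
  -- additivity defect
  have Dadd : ∀ (α β : PadicInt p) (N : ℕ),
      ((N.factorial : ℤ)) ∣ (c α N + c β N - c (α + β) N) := by
    intro α β N
    apply comb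
    · apply tr
      have h1 := dvd_sub (dvd_add (D4 α N) (D4 β N)) (D4 (α + β) N)
      have h2 : ((c α N : ℤ) : PadicInt p) - α + (((c β N : ℤ) : PadicInt p) - β)
          - (((c (α+β) N : ℤ) : PadicInt p) - (α + β))
          = (((c α N + c β N - c (α+β) N : ℤ) : PadicInt p)) := by push_cast; ring
      rwa [h2] at h1
    · exact dvd_sub (dvd_add (P2 α N) (P2 β N)) (P2 (α+β) N)
  -- limits exist
  have hlim : ∀ α : PadicInt p, ∃ s : Q, ∀ N : ℕ, ∃ u : Q,
      s - (c α N) • q0 = (N.factorial : ℤ) • u := by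
    intro α
    choose d hd using fun n => Dcauchy α n
    obtain ⟨s', hs'⟩ := hC (fun n => d n • q0)
    refine ⟨s' + (c α 0) • q0, fun N => ?_⟩
    obtain ⟨u, hu⟩ := hs' N
    refine ⟨u, ?_⟩
    have tel : ∑ n ∈ range N, (n.factorial : ℤ) • (d n • q0)
        = (c α N) • q0 - (c α 0) • q0 := by
      have step : ∀ n, (n.factorial : ℤ) • (d n • q0) = (c α (n+1)) • q0 - (c α n) • q0 := by
        intro n
        rw [← mul_smul, ← hd n, sub_smul]
      rw [Finset.sum_congr rfl (fun n _ => step n)]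
      exact Finset.sum_range_sub (fun n => (c α n) • q0) N
    have lhs_eq : s' + (c α 0) • q0 - (c α N) • q0
        = s' - ∑ n ∈ range N, (n.factorial : ℤ) • (d n • q0) := by
      rw [tel]; abel
    rw [lhs_eq, hu]
  set Φ : PadicInt p → Q := fun α => (hlim α).choose with hΦ
  have spec : ∀ (α : PadicInt p) (N : ℕ), ∃ u : Q,
      Φ α - (c α N) • q0 = (N.factorial : ℤ) • u := fun α => (hlim α).choose_spec
  -- factorial divisibility transfer in Q
  have facdiv : ∀ (v : Q) (n : ℕ), 0 < n → (∃ u : Q, v = (n.factorial : ℤ) • u) →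
      ∃ r : Q, v = (n : ℤ) • r := by
    rintro v n hn ⟨u, hu⟩
    obtain ⟨t, ht⟩ : (n : ℤ) ∣ (n.factorial : ℤ) := by
      exact_mod_cast Int.natCast_dvd_natCast.mpr (Nat.dvd_factorial hn le_rfl)
    exact ⟨t • u, by rw [hu, ht, mul_smul]⟩
  -- additivity
  have hadd : ∀ α β : PadicInt p, Φ (α + β) = Φ α + Φ β := by
    intro α β
    have hδ : Φ α + Φ β - Φ (α + β) = 0 := by
      apply hH
      intro n hn
      apply facdiv _ n hn
      obtain ⟨u1, h1⟩ := spec α n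
      obtain ⟨u2, h2⟩ := spec β n
      obtain ⟨u3, h3⟩ := spec (α + β) n
      obtain ⟨w, hw⟩ := Dadd α β n
      refine ⟨u1 + u2 - u3 + w • q0, ?_⟩
      have e4 : (c α n + c β n - c (α + β) n) • q0 = (n.factorial : ℤ) • (w • q0) := by
        rw [hw, mul_smul]
      have expand : Φ α + Φ β - Φ (α + β)
          = (Φ α - (c α n) • q0) + (Φ β - (c β n) • q0) - (Φ (α + β) - (c (α + β) n) • q0)
            + (c α n + c β n - c (α + β) n) • q0 := by
        simp only [add_smul, sub_smul]
        abel
      rw [expand, h1, h2, h3, e4]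
      simp only [smul_add, smul_sub]
    have := sub_eq_zero.mp hδ
    rw [this]
  set f : PadicInt p →+ Q := AddMonoidHom.mk' Φ hadd with hfdef
  have hinj : Function.Injective f := by
    rw [injective_iff_map_eq_zero]
    intro α hα0
    have hΦα : Φ α = 0 := hα0
    -- c α N • q0 ∈ N! Q for all N
    have hcN : ∀ N, ∃ u : Q, (c α N) • q0 = (N.factorial : ℤ) • u := by
      intro N
      obtain ⟨u, hu⟩ := spec α N
      rw [hΦα, zero_sub] at hu
      exact ⟨-u, by rw [← neg_neg ((c α N) • q0), hu, smul_neg]⟩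
    -- α is divisible by all powers of p
    have hdiv : ∀ k : ℕ, (p : PadicInt p) ^ k ∣ α := by
      intro k
      induction k with
      | zero => simpa using one_dvd α
      | succ k ih =>
        by_contra hnk
        set N := p ^ (k + 1) with hN
        have hNfac : p ^ (k + 1) ∣ N.factorial :=
          Nat.dvd_factorial (pow_pos hp.pos _) le_rfl
        have hek : k + 1 ≤ e N :=
          (Nat.Prime.pow_dvd_iff_le_factorization hp (Nat.factorial_ne_zero N)).mp hNfac
        -- p^k divides c α N in ℤ
        have hck : (p : ℤ) ^ k ∣ c α N := by
          apply tr
          have h1 : (p : PadicInt p) ^ k ∣ ((c α N : ℤ) : PadicInt p) - α :=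
            dvd_trans (pow_dvd_pow _ (le_trans (Nat.le_succ k) hek)) (D4 α N)
          have h2 := dvd_add h1 ih
          have h3 : ((c α N : ℤ) : PadicInt p) - α + α = ((c α N : ℤ) : PadicInt p) := by ring
          rwa [h3] at h2
        obtain ⟨a, ha⟩ := hck
        have hpa : ¬ (p : ℤ) ∣ a := by
          intro ⟨b, hb⟩
          apply hnk
          have hc1 : (p : PadicInt p) ^ (k + 1) ∣ ((c α N : ℤ) : PadicInt p) := by
            refine ⟨(b : PadicInt p), ?_⟩
            have : c α N = (p : ℤ) ^ (k + 1) * b := by rw [ha, hb]; ring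
            have h := congrArg (fun z : ℤ => ((z : PadicInt p))) this
            push_cast at h ⊢
            exact h
          have hc2 : (p : PadicInt p) ^ (k + 1) ∣ ((c α N : ℤ) : PadicInt p) - α :=
            dvd_trans (pow_dvd_pow _ hek) (D4 α N)
          have h4 := dvd_sub hc1 hc2
          have h5 : ((c α N : ℤ) : PadicInt p) - (((c α N : ℤ) : PadicInt p) - α) = α := by ring
          rwa [h5] at h4
        -- now derive q0 ∈ pQ, contradiction
        obtain ⟨u, hu⟩ := hcN N
        obtain ⟨t, ht⟩ : ((p : ℤ)) ^ (k + 1) ∣ (N.factorial : ℤ) := by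
          exact_mod_cast Int.natCast_dvd_natCast.mpr hNfac
        have hcancel : a • q0 = (p : ℤ) • (t • u) := by
          have lhs : (p : ℤ) ^ k • a • q0 = (c α N) • q0 := by
            rw [← mul_smul, ← ha]
          have rhs : (p : ℤ) ^ k • ((p : ℤ) • t • u) = (N.factorial : ℤ) • u := by
            rw [← mul_smul, ← mul_smul, ← pow_succ, ← ht]
          have hsub : (p : ℤ) ^ k • (a • q0 - (p : ℤ) • t • u) = 0 := by
            rw [smul_sub, lhs, rhs, hu, sub_self]
          have := tf ((p : ℤ) ^ k)
            (pow_ne_zero k (by exact_mod_cast hp.ne_zero)) _ hsub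
          exact sub_eq_zero.mp this
        have hpint : Prime (p : ℤ) := Nat.prime_iff_prime_int.mp hp
        have hco : IsCoprime ((p : ℤ)) a := (hpint.coprime_iff_not_dvd).mpr hpa
        obtain ⟨x, y, hxy2⟩ := hco
        apply hq0
        refine ⟨x • q0 + y • (t • u), ?_⟩
        calc q0 = (1 : ℤ) • q0 := (one_smul ℤ q0).symm
          _ = (x * (p : ℤ) + y * a) • q0 := by rw [hxy2]
          _ = (p : ℤ) • (x • q0 + y • (t • u)) := by
              rw [add_smul, mul_comm x ((p : ℤ)), mul_smul, mul_smul, hcancel,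
                smul_add, smul_comm y ((p : ℤ))]
    -- conclude α = 0
    by_contra hα
    have hmem : α ∈ Ideal.span {(p : PadicInt p) ^ (α.valuation + 1)} :=
      Ideal.mem_span_singleton.mpr (hdiv _)
    have hle := (PadicInt.mem_span_pow_iff_le_valuation α hα (α.valuation + 1)).mp hmem
    have heq : (α.valuation : ℤ) = α.valuation := rfl
    have hle' : (α.valuation : ℤ) + 1 ≤ α.valuation := by exact_mod_cast hle
    rw [heq] at hle'
    omega
  exact ⟨f.range, ⟨(AddMonoidHom.ofInjective hinj).symm⟩⟩

end Helpers

/-- if a subgroup `A` of `ℤ^ω` contains `ℤ^(ω)` and `ℤ^ω/A` is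
cotorsionfree, then `A = ⊤`. -/
theorem statement4 (A : AddSubgroup (ℕ → ℤ)) (hA : finSuppSubgroup ≤ A)
    (hcf : Cotorsionfree ((ℕ → ℤ) ⧸ A)) : A = ⊤ := by
  by_contra hne
  -- get an element outside A
  obtain ⟨x, hx⟩ : ∃ x : ℕ → ℤ, x ∉ A := by
    by_contra h
    push_neg at h
    exact hne (AddSubgroup.eq_top_iff' A |>.mpr h)
  set Q := (ℕ → ℤ) ⧸ A with hQ
  set q1 : Q := QuotientAddGroup.mk' A x with hq1
  have hq1ne : q1 ≠ 0 := by
    intro h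
    exact hx ((QuotientAddGroup.eq_zero_iff x).mp h)
  -- the completeness property
  have hC : ∀ g : ℕ → Q, ∃ s : Q, ∀ N : ℕ, ∃ u : Q,
      s - ∑ n ∈ Finset.range N, (n.factorial : ℤ) • g n = (N.factorial : ℤ) • u :=
    specker_complete A hA
  -- case 1 : torsion
  by_cases tf : ∀ n : ℤ, n ≠ 0 → ∀ q : Q, n • q = 0 → q = 0
  · -- torsionfree case
    by_cases hdiv : ∃ d : Q, d ≠ 0 ∧ ∀ n : ℕ, 0 < n → ∃ r : Q, d = (n : ℤ) • r
    · obtain ⟨d, hd, hdvd⟩ := hdiv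
      exact hcf.1 (exists_rat_subgroup tf d hd hdvd)
    · push_neg at hdiv
      have hH : ∀ q : Q, (∀ n : ℕ, 0 < n → ∃ r : Q, q = (n : ℤ) • r) → q = 0 := by
        intro q hq
        by_contra hqne
        obtain ⟨n, hn, hnr⟩ := hdiv q hqne
        obtain ⟨r, hr⟩ := hq n hn
        exact hnr r hr
      -- find a prime p with q0 not p-divisible
      by_cases hpr : ∀ pp : ℕ, pp.Prime → ∀ q : Q, ∃ r : Q, q = (pp : ℤ) • r
      · -- then everything is divisible by everything: contradiction
        have hall : ∀ n : ℕ, 0 < n → ∀ q : Q, ∃ r : Q, q = (n : ℤ) • r := by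
          intro n
          induction n using Nat.strong_induction_on with
          | _ n ih =>
            intro hn q
            rcases eq_or_lt_of_le (Nat.one_le_iff_ne_zero.mpr (Nat.pos_iff_ne_zero.mp hn)) with h1 | h1
            · exact ⟨q, by rw [← h1]; simp⟩
            · set pp := n.minFac with hpp
              have hppp : pp.Prime := Nat.minFac_prime (by omega)
              have hppd : pp ∣ n := Nat.minFac_dvd n
              obtain ⟨r, hr⟩ := hpr pp hppp q
              have hlt : n / pp < n := Nat.div_lt_self hn hppp.one_lt
              have hpos : 0 < n / pp := Nat.div_pos (Nat.minFac_le hn) hppp.pos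
              obtain ⟨r', hr'⟩ := ih (n / pp) hlt hpos r
              refine ⟨r', ?_⟩
              rw [hr, hr', ← mul_smul]
              congr 1
              have : pp * (n / pp) = n := Nat.mul_div_cancel' hppd
              exact_mod_cast congrArg (fun k : ℕ => (k : ℤ)) this
        exact hq1ne (hH q1 (fun n hn => hall n hn q1))
      · push_neg at hpr
        obtain ⟨pp, hppp, q0, hq0⟩ := hpr
        haveI : Fact pp.Prime := ⟨hppp⟩
        exact hcf.2.2 pp (exists_padic_subgroup pp hppp tf hC hH q0 (by
          intro ⟨r, hr⟩
          exact hq0 r hr))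
  · -- torsion case
    push_neg at tf
    obtain ⟨n, hn0, q, hq, hqne⟩ := tf
    have hq' : n.natAbs • q = 0 := by
      rcases Int.natAbs_eq n with h | h
      · rw [← natCast_zsmul, ← h, hq]
      · rw [← natCast_zsmul, ← neg_neg ((n.natAbs : ℤ)), ← h, neg_smul, hq, neg_zero]
    obtain ⟨P, hP, H, hHe⟩ := exists_zmod_subgroup q hqne n.natAbs
      (Int.natAbs_pos.mpr hn0) hq'
    exact hcf.2.1 P hP ⟨H, hHe⟩
end

section
/- There is no ordinal δ and no increasing chain ⟨A_α : α < δ⟩ of proper subgroups of the Baer-Specker group ℤ^ω such that each A_α is a direct summand of ℤ^ω and ⋃_{α<δ} A_α = ℤ^ω. -/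
namespace Statement5Aux

open Finset

def e (n : ℕ) : ℕ → ℤ := Pi.single n 1

def tail (N : ℕ) (y : ℕ → ℤ) : ℕ → ℤ := fun j => if j < N then 0 else y j

lemma tail_eq_zero (N : ℕ) (y : ℕ → ℤ) {j : ℕ} (h : j < N) : tail N y j = 0 := if_pos h

lemma funcOfSummand (A C : AddSubgroup (ℕ → ℤ)) (h1 : A ⊓ C = ⊥) (h2 : A ⊔ C = ⊤)
    (h3 : A ≠ ⊤) :
    ∃ (g : (ℕ → ℤ) →+ ℤ) (y : ℕ → ℤ), (∀ a ∈ A, g a = 0) ∧ g y ≠ 0 := by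
  classical
  -- C is nonzero
  have hC : C ≠ ⊥ := by
    rintro rfl
    rw [sup_bot_eq] at h2
    exact h3 h2
  obtain ⟨c, hcC, hc0⟩ : ∃ c ∈ C, c ≠ 0 := by
    by_contra h
    push_neg at h
    exact hC (by ext x; simp only [AddSubgroup.mem_bot]; exact ⟨h x, fun hx => hx ▸ C.zero_mem⟩)
  obtain ⟨i, hci⟩ : ∃ i, c i ≠ 0 := by
    by_contra h
    push_neg at h
    exact hc0 (funext h)
  set A' := AddSubgroup.toIntSubmodule A with hA'
  set C' := AddSubgroup.toIntSubmodule C with hC'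
  have hcompl : IsCompl C' A' := by
    constructor
    · rw [disjoint_iff]
      apply_fun AddSubgroup.toIntSubmodule at h1
      rw [inf_comm] at h1
      simpa using h1
    · rw [codisjoint_iff]
      apply_fun AddSubgroup.toIntSubmodule at h2
      rw [sup_comm] at h2
      simpa using h2
  set π := Submodule.linearProjOfIsCompl C' A' hcompl
  refine ⟨(Pi.evalAddMonoidHom (fun _ => ℤ) i).comp
      ((C'.subtype.comp π).toAddMonoidHom), c, ?_, ?_⟩
  · intro a ha
    have : π a = 0 := Submodule.linearProjOfIsCompl_apply_right hcompl ⟨a, ha⟩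
    simp [this]
  · have : π c = ⟨c, hcC⟩ := Submodule.linearProjOfIsCompl_apply_left hcompl ⟨c, hcC⟩
    simpa [this] using hci

lemma head_decomp (N : ℕ) (y : ℕ → ℤ) :
    y = (∑ j ∈ range N, y j • e j) + tail N y := by
  funext j
  have h1 : (∑ i ∈ range N, y i • e i) j = ∑ i ∈ range N, y i * (e i j) := by
    simp [Finset.sum_apply]
  have h2 : ∀ i, y i * e i j = if j = i then y i else 0 := by
    intro i
    simp only [e, Pi.single_apply]
    split <;> simp
  have h3 : (∑ i ∈ range N, y i • e i) j = if j ∈ range N then y j else 0 := by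
    rw [h1, Finset.sum_congr rfl (fun i _ => h2 i), Finset.sum_ite_eq]
  by_cases h : j < N
  · rw [Pi.add_apply, h3, if_pos (mem_range.2 h), tail_eq_zero _ _ h, add_zero]
  · simp only [Pi.add_apply, h3, tail]
    rw [if_neg (by simpa using h), if_neg h]
    ring

lemma hom_tail (g : (ℕ → ℤ) →+ ℤ) (N : ℕ) (y : ℕ → ℤ)
    (he : ∀ j < N, g (e j) = 0) : g (tail N y) = g y := by
  conv_rhs => rw [head_decomp N y]
  rw [map_add, map_sum]
  have : ∀ j ∈ range N, g (y j • e j) = 0 := by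
    intro j hj
    rw [map_zsmul, he j (mem_range.1 hj)]
    simp
  rw [Finset.sum_congr rfl this]
  simp

lemma lemZ (x : ℕ → (ℕ → ℤ)) (hx : ∀ k j, j < k → x k j = 0)
    (Q : ℕ → ℤ) (g : (ℕ → ℤ) →+ ℤ) (K : ℕ) :
    ∃ r : ℤ, g (fun j => ∑ k ∈ range (j+1), (∏ i ∈ range k, Q i) * x k j)
      = (∑ k ∈ range K, (∏ i ∈ range k, Q i) * g (x k)) + (∏ i ∈ range K, Q i) * r := by
  classical
  set M : ℕ → ℤ := fun k => ∏ i ∈ range k, Q i with hM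
  set w : ℕ → ℤ := fun j => ∑ k ∈ range (j+1),
      (if K ≤ k then (∏ i ∈ Ico K k, Q i) * x k j else 0) with hw
  refine ⟨g w, ?_⟩
  have key : (fun j => ∑ k ∈ range (j+1), M k * x k j)
      = (∑ k ∈ range K, M k • x k) + M K • w := by
    funext j
    set B := max K (j+1) with hB
    have hKB : K ≤ B := le_max_left _ _
    have hjB : j + 1 ≤ B := le_max_right _ _
    have hMk : ∀ k, K ≤ k → M K * ∏ i ∈ Ico K k, Q i = M k := by
      intro k hk
      exact Finset.prod_range_mul_prod_Ico Q hk
    -- z j as sum over range B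
    have hz : ∑ k ∈ range (j+1), M k * x k j = ∑ k ∈ range B, M k * x k j := by
      apply Finset.sum_subset (Finset.range_subset_range.2 hjB)
      intro k _ hk
      rw [hx k j (by simpa using hk), mul_zero]
    -- first part
    have h1 : (∑ k ∈ range K, M k • x k) j = ∑ k ∈ range B, (if k < K then M k * x k j else 0) := by
      rw [Finset.sum_apply]
      rw [← Finset.sum_subset (Finset.range_subset_range.2 hKB)
        (fun k _ hk => if_neg (by simpa using hk))]
      apply Finset.sum_congr rfl
      intro k hk
      rw [if_pos (mem_range.1 hk)]
      simp
    -- second part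
    have h2 : (M K • w) j = ∑ k ∈ range B, (if K ≤ k then M k * x k j else 0) := by
      have : (M K • w) j = ∑ k ∈ range (j+1),
          (if K ≤ k then M k * x k j else 0) := by
        simp only [Pi.smul_apply, hw, smul_eq_mul, Finset.mul_sum]
        apply Finset.sum_congr rfl
        intro k _
        split
        · rename_i h
          rw [← mul_assoc, hMk k h]
        · rw [mul_zero]
      rw [this]
      apply Finset.sum_subset (Finset.range_subset_range.2 hjB)
      intro k _ hk
      split
      · rw [hx k j (by simpa using hk), mul_zero]
      · rfl
    rw [Pi.add_apply, h1, h2, ← Finset.sum_add_distrib, hz]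
    apply Finset.sum_congr rfl
    intro k _
    by_cases h : k < K
    · rw [if_pos h, if_neg (by omega), add_zero]
    · rw [if_neg h, if_pos (by omega), zero_add]
  rw [key, map_add, map_sum]
  congr 1
  · apply Finset.sum_congr rfl
    intro k _
    rw [map_zsmul]
    simp [hM]
  · rw [map_zsmul]
    simp [hM]

lemma lemA (g : (ℕ → ℤ) →+ ℤ) (y : ℕ → ℤ) (hgy : g y ≠ 0)
    (he : ∀ j, g (e j) = 0) : False := by
  classical
  set c : ℤ := g y with hc
  have hc1 : 1 ≤ |c| := Int.one_le_abs hgy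
  set q : ℤ := 2 * |c| + 1 with hq
  have hq3 : 3 ≤ q := by omega
  set x : ℕ → (ℕ → ℤ) := fun k => tail k y with hx
  have hx0 : ∀ k j, j < k → x k j = 0 := fun k j h => tail_eq_zero k y h
  have hgx : ∀ k, g (x k) = c := fun k => hom_tail g k y (fun j _ => he j)
  have hprod : ∀ k, (∏ i ∈ range k, (fun _ => q) i) = q ^ k := by
    intro k; rw [Finset.prod_const, Finset.card_range]
  set t : ℕ → ℤ := fun K => ∑ k ∈ range K, q ^ k with ht
  have hgeom : ∀ K, 2 * |c| * t K = q ^ K - 1 := by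
    intro K
    calc 2 * |c| * t K = t K * (q - 1) := by rw [hq]; ring
      _ = q ^ K - 1 := geom_sum_mul q K
  have htnn : ∀ K, 0 ≤ t K := by
    intro K
    apply Finset.sum_nonneg
    intro i _
    positivity
  have hqK : ∀ K : ℕ, (K : ℤ) + 1 ≤ q ^ K := by
    intro K
    induction K with
    | zero => simp
    | succ n ih =>
      have h2 : (0:ℤ) < q ^ n := by positivity
      calc ((n:ℤ)+1) + 1 ≤ q ^ n + q ^ n := by omega
        _ ≤ q ^ n * q := by nlinarith
        _ = q ^ (n+1) := by ring
  set z : ℕ → ℤ := fun j => ∑ k ∈ range (j+1), (∏ i ∈ range k, (fun _ => q) i) * x k j with hz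
  set t0 : ℤ := g z with ht0
  have key : ∀ K, ∃ r : ℤ, t0 = c * t K + q ^ K * r := by
    intro K
    obtain ⟨r, hr⟩ := lemZ x hx0 (fun _ => q) g K
    refine ⟨r, ?_⟩
    rw [ht0, hz, hr, hprod]
    congr 1
    rw [ht, Finset.mul_sum, Finset.sum_congr rfl]
    intro k _
    rw [hprod, hgx, mul_comm]
  have main : ∀ K, 2 * |t0| < q ^ K → t0 = c * t K := by
    intro K hK
    obtain ⟨r, hr⟩ := key K
    have habs : |c * t K| ≤ |c| * t K := by
      rw [abs_mul, abs_of_nonneg (htnn K)]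
    have h1 : |q ^ K * r| < q ^ K := by
      have hrr : q ^ K * r = t0 - c * t K := by linarith
      rw [hrr]
      have h2 : |t0 - c * t K| ≤ |t0| + |c * t K| := abs_sub _ _
      have h3 := hgeom K
      linarith
    have hr0 : r = 0 := by
      by_contra h
      have hpos : (0:ℤ) < q ^ K := by positivity
      have h2 : 1 ≤ |r| := Int.one_le_abs h
      rw [abs_mul, abs_of_nonneg (le_of_lt hpos)] at h1
      nlinarith
    rw [hr0, mul_zero, add_zero] at hr
    exact hr
  set K : ℕ := (2 * |t0|).toNat + 1 with hK
  have hbig : 2 * |t0| < q ^ K := by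
    have h1 := hqK K
    have h2 : 2 * |t0| < (K : ℤ) + 1 := by
      rw [hK]; push_cast; omega
    omega
  have hbig' : 2 * |t0| < q ^ (K + 1) := by
    have hpos : (0:ℤ) < q ^ K := by positivity
    have hstep : q ^ K ≤ q ^ (K+1) := by
      calc q ^ K = q ^ K * 1 := by ring
        _ ≤ q ^ K * q := by nlinarith
        _ = q ^ (K+1) := by ring
    omega
  have e1 := main K hbig
  have e2 := main (K+1) hbig'
  have hstep : t (K+1) = t K + q ^ K := by
    rw [ht]; simp [Finset.sum_range_succ]
  have hcq : c * q ^ K = 0 := by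
    rw [hstep] at e2
    nlinarith [e1, e2]
  have hc0 : c = 0 := by
    have hpos : (0:ℤ) < q ^ K := by positivity
    rcases mul_eq_zero.1 hcq with h | h
    · exact h
    · omega
  exact hgy hc0

lemma omegaCase (B : ℕ → AddSubgroup (ℕ → ℤ)) (hmono : Monotone B)
    (hcov : ∀ v : ℕ → ℤ, ∃ n, v ∈ B n)
    (g : ℕ → ((ℕ → ℤ) →+ ℤ)) (hg0 : ∀ n, ∀ a ∈ B n, g n a = 0)
    (y : ℕ → (ℕ → ℤ)) (hgy : ∀ n, g n (y n) ≠ 0) : False := by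
  classical
  choose m hm using hcov
  -- the recursively defined indices
  let n : ℕ → ℕ := fun k => Nat.rec (m (e 0))
    (fun k nk => max (max (nk + 1) (m (tail k (y nk)))) (m (e (k+1)))) k
  have hn0 : n 0 = m (e 0) := rfl
  have hnsucc : ∀ k, n (k+1)
      = max (max (n k + 1) (m (tail k (y (n k))))) (m (e (k+1))) := fun k => rfl
  set x : ℕ → (ℕ → ℤ) := fun k => tail k (y (n k)) with hxdef
  have hnlt : ∀ k, n k < n (k+1) := by
    intro k
    have := hnsucc k
    omega
  have hnmono : ∀ j k, j ≤ k → n j ≤ n k := by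
    intro j k hjk
    induction k with
    | zero =>
      have hj0 : j = 0 := Nat.le_zero.1 hjk
      rw [hj0]
    | succ i ih =>
      rcases Nat.lt_or_ge j (i+1) with h | h
      · exact le_trans (ih (by omega)) (le_of_lt (hnlt i))
      · have : j = i + 1 := by omega
        rw [this]
  have hnk : ∀ k, k ≤ n k := by
    intro k
    induction k with
    | zero => omega
    | succ i ih =>
      have := hnlt i
      omega
  have hej : ∀ j, m (e j) ≤ n j := by
    intro j
    cases j with
    | zero => omega
    | succ i =>
      have := hnsucc i
      omega
  have hxj : ∀ j, m (x j) ≤ n (j+1) := by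
    intro j
    have h := hnsucc j
    show m (tail j (y (n j))) ≤ n (j+1)
    omega
  -- g (n k) kills e j for j < k
  have hge : ∀ k, ∀ j, j < k → g (n k) (e j) = 0 := by
    intro k j hj
    apply hg0
    exact hmono (le_trans (hej j) (hnmono j k (le_of_lt hj))) (hm (e j))
  -- g (n k) kills x j for j < k
  have hgx : ∀ k, ∀ j, j < k → g (n k) (x j) = 0 := by
    intro k j hj
    apply hg0
    exact hmono (le_trans (hxj j) (hnmono (j+1) k hj)) (hm (x j))
  set c : ℕ → ℤ := fun k => g (n k) (x k) with hcdef
  have hc : ∀ k, c k ≠ 0 := by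
    intro k
    have : g (n k) (x k) = g (n k) (y (n k)) :=
      hom_tail (g (n k)) k (y (n k)) (fun j hj => hge k j hj)
    rw [hcdef]
    simp only
    rw [this]
    exact hgy (n k)
  have hxk0 : ∀ k j, j < k → x k j = 0 := fun k j h => tail_eq_zero k (y (n k)) h
  set Q : ℕ → ℤ := fun k => |c k| + 1 with hQdef
  have hQpos : ∀ k, 0 < Q k := by
    intro k
    have := abs_nonneg (c k)
    rw [hQdef]
    simp only
    omega
  set M : ℕ → ℤ := fun k => ∏ i ∈ range k, Q i with hMdef
  have hMpos : ∀ k, 0 < M k := by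
    intro k
    apply Finset.prod_pos
    intro i _
    exact hQpos i
  set z : ℕ → ℤ := fun j => ∑ k ∈ range (j+1), (∏ i ∈ range k, Q i) * x k j with hzdef
  -- the final contradiction at stage k := m z
  set k : ℕ := m z with hkdef
  have hzB : g (n k) z = 0 := hg0 (n k) z (hmono (hnk k) (hm z))
  obtain ⟨r, hr⟩ := lemZ x hxk0 Q (g (n k)) (k+1)
  rw [hzdef] at hzB
  rw [hzB] at hr
  have hsum : (∑ j ∈ range (k+1), (∏ i ∈ range j, Q i) * g (n k) (x j)) = M k * c k := by
    rw [Finset.sum_range_succ]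
    have h0 : (∑ j ∈ range k, (∏ i ∈ range j, Q i) * g (n k) (x j)) = 0 := by
      apply Finset.sum_eq_zero
      intro j hj
      rw [hgx k j (mem_range.1 hj), mul_zero]
    rw [h0, zero_add, hMdef, hcdef]
  rw [hsum] at hr
  have hMsucc : (∏ i ∈ range (k+1), Q i) = M k * Q k := by
    rw [Finset.prod_range_succ, hMdef]
  rw [hMsucc] at hr
  -- 0 = M k * c k + M k * Q k * r
  have hfac : M k * (c k + Q k * r) = 0 := by linarith
  have hck : c k + Q k * r = 0 := by
    rcases mul_eq_zero.1 hfac with h | h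
    · exact absurd h (hMpos k).ne'
    · exact h
  rcases eq_or_ne r 0 with h | h
  · rw [h, mul_zero, add_zero] at hck
    exact hc k hck
  · have h1 : 1 ≤ |r| := Int.one_le_abs h
    have h2 : |c k| = Q k * |r| := by
      have : c k = -(Q k * r) := by omega
      rw [this, abs_neg, abs_mul, abs_of_pos (hQpos k)]
    have h3 : Q k ≤ Q k * |r| := by nlinarith [hQpos k]
    rw [hQdef] at h3 h2
    simp only at h3 h2
    omega

end Statement5Aux

open Statement5Aux in
/-- the Baer-Specker group `ℤ^ω` is never the union of an increasing chain
`⟨A_α : α < δ⟩` of proper subgroups each of which is a direct summand of `ℤ^ω`. -/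
theorem statement5 :
    ¬ ∃ (δ : Ordinal) (A : Ordinal → AddSubgroup (ℕ → ℤ)),
      (∀ α β : Ordinal, α ≤ β → β < δ → A α ≤ A β) ∧
      (∀ α < δ, A α ≠ ⊤) ∧
      (∀ α < δ, ∃ C : AddSubgroup (ℕ → ℤ), A α ⊓ C = ⊥ ∧ A α ⊔ C = ⊤) ∧
      (⋃ α ∈ Set.Iio δ, (A α : Set (ℕ → ℤ))) = Set.univ := by
  classical
  rintro ⟨δ, A, hchain, hproper, hsummand, hcov⟩
  have hix : ∀ v : ℕ → ℤ, ∃ α, α < δ ∧ v ∈ A α := by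
    intro v
    have hv : v ∈ ⋃ α ∈ Set.Iio δ, (A α : Set (ℕ → ℤ)) := hcov ▸ Set.mem_univ v
    simpa using hv
  choose ix hixlt hixmem using hix
  have hfun : ∀ α, α < δ → ∃ (g : (ℕ → ℤ) →+ ℤ) (y : ℕ → ℤ),
      (∀ a ∈ A α, g a = 0) ∧ g y ≠ 0 := by
    intro α hα
    obtain ⟨C, h1, h2⟩ := hsummand α hα
    exact funcOfSummand (A α) C h1 h2 (hproper α hα)
  by_cases hcof : ∃ φ : ℕ → Ordinal, (∀ k, φ k < δ) ∧ ∀ γ, γ < δ → ∃ k, γ ≤ φ k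
  · obtain ⟨φ, hφlt, hφcof⟩ := hcof
    let β : ℕ → Ordinal := fun k => Nat.rec (φ 0) (fun k b => max b (φ (k+1))) k
    have hβ0 : β 0 = φ 0 := rfl
    have hβsucc : ∀ k, β (k+1) = max (β k) (φ (k+1)) := fun _ => rfl
    have hβlt : ∀ k, β k < δ := by
      intro k
      induction k with
      | zero => exact hφlt 0
      | succ i ih => rw [hβsucc]; exact max_lt ih (hφlt (i+1))
    have hβmono : Monotone β := monotone_nat_of_le_succ
      (fun k => by rw [hβsucc]; exact le_max_left _ _)
    have hφβ : ∀ k, φ k ≤ β k := by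
      intro k
      cases k with
      | zero => exact le_of_eq rfl
      | succ i => rw [hβsucc]; exact le_max_right _ _
    have hBmono : Monotone (fun k => A (β k)) :=
      fun j k h => hchain (β j) (β k) (hβmono h) (hβlt k)
    have hBcov : ∀ v : ℕ → ℤ, ∃ n, v ∈ A (β n) := by
      intro v
      obtain ⟨k, hk⟩ := hφcof (ix v) (hixlt v)
      exact ⟨k, hchain (ix v) (β k) (le_trans hk (hφβ k)) (hβlt k) (hixmem v)⟩
    choose g y hg0 hgy using fun k => hfun (β k) (hβlt k)
    exact omegaCase (fun k => A (β k)) hBmono hBcov g hg0 y hgy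
  · push_neg at hcof
    obtain ⟨γ, hγδ, hγ⟩ := hcof (fun n => ix (e n)) (fun n => hixlt _)
    obtain ⟨g, y, hg0, hgy⟩ := hfun γ hγδ
    apply lemA g y hgy
    intro j
    exact hg0 _ (hchain _ _ (le_of_lt (hγ j)) hγδ (hixmem (e j)))
end

section
/- There is no ordinal δ and no increasing chain ⟨A_α : α < δ⟩ of subgroups of the Baer-Specker group ℤ^ω such that each A_α is a slender group and a direct summand of ℤ^ω, and ⋃_{α<δ} A_α = ℤ^ω. -/
/-- An abelian group `G` is slender if every homomorphism `ℤ^ω → G` kills all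
functions vanishing below some `n`. -/
def Slender (G : Type*) [AddCommGroup G] : Prop :=
  ∀ f : (ℕ → ℤ) →+ G, ∃ n : ℕ, ∀ x : ℕ → ℤ, (∀ i < n, x i = 0) → f x = 0

/-- the Baer-Specker group `ℤ^ω` is never the union of an increasing chain
`⟨A_α : α < δ⟩` of subgroups each of which is slender and a direct summand of `ℤ^ω`. -/
theorem statement6 :
    ¬ ∃ (δ : Ordinal) (A : Ordinal → AddSubgroup (ℕ → ℤ)),
      (∀ α β : Ordinal, α ≤ β → β < δ → A α ≤ A β) ∧
      (∀ α < δ, Slender (A α)) ∧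
      (∀ α < δ, ∃ C : AddSubgroup (ℕ → ℤ), A α ⊓ C = ⊥ ∧ A α ⊔ C = ⊤) ∧
      (⋃ α ∈ Set.Iio δ, (A α : Set (ℕ → ℤ))) = Set.univ := by
  rintro ⟨δ, A, hchain, hslender, hsummand, hcover⟩
  classical
  -- Step 1: each A α intersects some tail subgroup trivially
  have key : ∀ α, α < δ → ∃ n : ℕ, ∀ x ∈ A α, (∀ i < n, x i = 0) → x = 0 := by
    intro α hα
    obtain ⟨C, hinf, hsup⟩ := hsummand α hα
    have uniq : ∀ a₁ a₂ c₁ c₂ : ℕ → ℤ, a₁ ∈ A α → a₂ ∈ A α → c₁ ∈ C → c₂ ∈ C →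
        a₁ + c₁ = a₂ + c₂ → a₁ = a₂ := by
      intro a₁ a₂ c₁ c₂ h₁ h₂ h₃ h₄ h
      have hm : a₁ - a₂ ∈ A α ⊓ C := by
        have heq : a₁ - a₂ = c₂ - c₁ := by
          have : a₁ + c₁ = c₂ + a₂ := h.trans (add_comm _ _)
          rw [sub_eq_sub_iff_add_eq_add]; exact this
        refine AddSubgroup.mem_inf.mpr ⟨sub_mem h₁ h₂, ?_⟩
        rw [heq]; exact sub_mem h₄ h₃
      rw [hinf] at hm
      have := AddSubgroup.mem_bot.mp hm
      exact sub_eq_zero.mp this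
    have decomp : ∀ x : ℕ → ℤ, ∃ a, a ∈ A α ∧ ∃ c, c ∈ C ∧ a + c = x := by
      intro x
      have hx : x ∈ A α ⊔ C := by rw [hsup]; trivial
      simpa using AddSubgroup.mem_sup.mp hx
    choose a ha c hc hac using decomp
    have ha0 : a 0 = 0 :=
      uniq (a 0) 0 (c 0) 0 (ha 0) (zero_mem _) (hc 0) (zero_mem _)
        (by rw [hac 0]; simp)
    have hadd : ∀ x y : ℕ → ℤ, a (x + y) = a x + a y := by
      intro x y
      refine uniq _ _ (c (x + y)) (c x + c y) (ha _) (add_mem (ha x) (ha y))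
        (hc _) (add_mem (hc x) (hc y)) ?_
      linear_combination hac (x + y) - hac x - hac y
    let f : (ℕ → ℤ) →+ (A α) :=
      { toFun := fun x => ⟨a x, ha x⟩
        map_zero' := by ext i; simp [ha0]
        map_add' := by intro x y; ext i; simp [hadd] }
    obtain ⟨n, hn⟩ := hslender α hα f
    refine ⟨n, fun x hx hx0 => ?_⟩
    have h1 : a x = 0 := by
      have := hn x hx0
      simpa [f, Subtype.ext_iff] using this
    have h2 : a x = x :=
      uniq (a x) x (c x) 0 (ha x) hx (hc x) (zero_mem _) (by rw [hac x, add_zero])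
    rw [← h2, h1]
  choose! nn hnn using key
  -- Step 2: bucket the chain by the tail bound
  set Dset : ℕ → Set (ℕ → ℤ) :=
    fun n => {y | ∃ α, α < δ ∧ nn α ≤ n ∧ y ∈ A α} with hDset
  have Duniq : ∀ n (y z : ℕ → ℤ), y ∈ Dset n → z ∈ Dset n →
      (∀ i < n, y i = z i) → y = z := by
    rintro n y z ⟨α, hα, hαn, hy⟩ ⟨β, hβ, hβn, hz⟩ hpre
    have sub0 : ∀ γ, γ < δ → nn γ ≤ n → y ∈ A γ → z ∈ A γ → y = z := by
      intro γ hγ hγn hy' hz'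
      have : y - z = 0 := by
        refine hnn γ hγ (y - z) (sub_mem hy' hz') (fun i hi => ?_)
        have := hpre i (lt_of_lt_of_le hi hγn)
        simp [this]
      exact sub_eq_zero.mp this
    rcases le_total α β with hle | hle
    · exact sub0 β hβ hβn (hchain α β hle hβ hy) hz
    · exact sub0 α hα hαn hy (hchain β α hle hα hz)
  -- Step 3: diagonalize
  let step : ℕ → (ℕ → ℤ) → ℤ := fun n p =>
    if h : ∃ y, y ∈ Dset n ∧ ∀ i < n, y i = p i then (Classical.choose h) n + 1 else 0
  let g : ℕ → ℕ → ℤ := fun n =>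
    Nat.rec (fun _ => 0) (fun m gm => Function.update gm m (step m gm)) n
  let x : ℕ → ℤ := fun n => g (n + 1) n
  have gsucc : ∀ n, g (n + 1) = Function.update (g n) n (step n (g n)) := fun n => rfl
  have gstable : ∀ m n, n < m → g m n = x n := by
    intro m
    induction m with
    | zero => intro n hn; omega
    | succ m ih =>
      intro n hn
      rcases Nat.lt_succ_iff_lt_or_eq.mp hn with h | h
      · rw [gsucc, Function.update_of_ne (by omega : n ≠ m)]
        exact ih n h
      · subst h; rfl
  have hni : ∀ n, x ∉ Dset n := by
    intro n hx
    have hpre : ∀ i < n, x i = g n i := fun i hi => (gstable n i hi).symm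
    have h : ∃ y, y ∈ Dset n ∧ ∀ i < n, y i = g n i := ⟨x, hx, hpre⟩
    have hy := Classical.choose_spec h
    have hxy : x = Classical.choose h :=
      Duniq n x _ hx hy.1 (fun i hi => (hpre i hi).trans (hy.2 i hi).symm)
    have hxn : x n = Classical.choose h n + 1 := by
      show g (n + 1) n = _
      rw [gsucc, Function.update_self]
      show step n (g n) = _
      simp only [step, dif_pos h]
    rw [← hxy] at hxn
    omega
  obtain ⟨α, hα, hxA⟩ : ∃ α, α < δ ∧ x ∈ A α := by
    have : x ∈ ⋃ α ∈ Set.Iio δ, (A α : Set (ℕ → ℤ)) := by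
      rw [hcover]; trivial
    simpa using this
  exact hni (nn α) ⟨α, hα, le_refl _, hxA⟩
end

section
/- Let U be a non-principal ultrafilter on ℕ and let K_U = {x ∈ ℤ^ω : {n ∈ ℕ : x(n) = 0} ∈ U}, a subgroup of ℤ^ω. Then the ultrapower ℤ^ω/K_U is never the union of an increasing chain ⟨B_α : α < δ⟩ of proper subgroups such that (ℤ^ω/K_U)/B_α is cotorsionfree for every α < δ. -/
/-- For an ultrafilter `U` on `ℕ`, the subgroup `K_U = {x ∈ ℤ^ω : {n : x n = 0} ∈ U}`
of the Baer-Specker group; `ℤ^ω / K_U` is the ultrapower `ℤ^ω/U`. -/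
def KU (U : Ultrafilter ℕ) : AddSubgroup (ℕ → ℤ) where
  carrier := {x | {n | x n = 0} ∈ U}
  zero_mem' := by
    have h : {n : ℕ | (0 : ℕ → ℤ) n = 0} = Set.univ := by ext n; simp
    show {n : ℕ | (0 : ℕ → ℤ) n = 0} ∈ U
    rw [h]
    exact Filter.univ_mem
  add_mem' := by
    intro a b ha hb
    show {n : ℕ | (a + b) n = 0} ∈ U
    refine Filter.mem_of_superset (Filter.inter_mem ha hb) ?_
    intro n hn
    have h1 : a n = 0 := hn.1
    have h2 : b n = 0 := hn.2
    simp [Set.mem_setOf_eq, h1, h2]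
  neg_mem' := by
    intro a ha
    show {n : ℕ | (-a) n = 0} ∈ U
    have h : {n : ℕ | (-a) n = 0} = {n | a n = 0} := by ext n; simp
    rw [h]; exact ha



/-- In a torsionfree group, zsmul by a nonzero integer is cancellative. -/
lemma my_cancel {H : Type*} [AddCommGroup H]
    (tf : ∀ (x : H) (n : ℤ), n ≠ 0 → n • x = 0 → x = 0)
    (n : ℤ) (hn : n ≠ 0) (a b : H) (h : n • a = n • b) : a = b := by
  have := tf (a - b) n hn (by rw [smul_sub, h, sub_self])
  exact sub_eq_zero.mp this

/-- A nonzero element killed by a positive integer yields a `ZMod p` subgroup. -/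
lemma my_zmod {H : Type*} [AddCommGroup H] (x : H) (n : ℕ) (hn : 0 < n) (hx : x ≠ 0)
    (hnx : (n : ℤ) • x = 0) :
    ∃ p : ℕ, p.Prime ∧ ∃ S : AddSubgroup H, Nonempty (S ≃+ ZMod p) := by
  -- first find a nonzero element killed by a prime
  have key : ∀ n : ℕ, ∀ x : H, 0 < n → x ≠ 0 → (n : ℤ) • x = 0 →
      ∃ p : ℕ, p.Prime ∧ ∃ y : H, y ≠ 0 ∧ (p : ℤ) • y = 0 := by
    intro n
    induction n using Nat.strong_induction_on with
    | _ n ih =>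
      intro x hn hx0 hnx
      rcases eq_or_ne n 1 with rfl | hn1
      · simp at hnx; exact absurd hnx hx0
      · have hpp : n.minFac.Prime := Nat.minFac_prime hn1
        have hpd : n.minFac ∣ n := Nat.minFac_dvd n
        rcases eq_or_ne (((n / n.minFac : ℕ) : ℤ) • x) 0 with h0 | h0
        · exact ih (n / n.minFac) (Nat.div_lt_self hn hpp.one_lt) x
            (Nat.div_pos (Nat.minFac_le hn) hpp.pos) hx0 h0
        · refine ⟨n.minFac, hpp, ((n / n.minFac : ℕ) : ℤ) • x, h0, ?_⟩
          rw [smul_smul, ← Nat.cast_mul, Nat.mul_div_cancel' hpd]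
          exact hnx
  obtain ⟨p, hpp, y, hy0, hpy⟩ := key n x hn hx hnx
  have hfp : (zmultiplesHom H y) ((p : ℕ) : ℤ) = 0 := by simpa using hpy
  set f : ZMod p →+ H := ZMod.lift p ⟨zmultiplesHom H y, hfp⟩ with hf
  have hinj : Function.Injective f := by
    rw [ZMod.lift_injective]
    intro m hm
    simp only [zmultiplesHom_apply] at hm
    rw [ZMod.intCast_zmod_eq_zero_iff_dvd]
    by_contra hnd
    have hnd' : ¬ p ∣ m.natAbs := by
      intro hd
      exact hnd (dvd_trans (Int.natCast_dvd_natCast.mpr hd) (Int.natAbs_dvd.mpr dvd_rfl))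
    have hcop : IsCoprime (p : ℤ) m := by
      rw [Int.isCoprime_iff_gcd_eq_one]
      have : Int.gcd (p : ℤ) m = Nat.gcd p m.natAbs := by simp [Int.gcd]
      rw [this]
      exact (Nat.Prime.coprime_iff_not_dvd hpp).mpr hnd'
    obtain ⟨u, v, huv⟩ := hcop
    apply hy0
    calc y = (1 : ℤ) • y := (one_smul _ _).symm
    _ = (u * p + v * m) • y := by rw [huv]
    _ = u • ((p : ℤ) • y) + v • (m • y) := by rw [add_smul, mul_smul, mul_smul]
    _ = 0 := by rw [hpy, hm, smul_zero, smul_zero, add_zero]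
  exact ⟨p, hpp, f.range, ⟨(AddMonoidHom.ofInjective hinj).symm⟩⟩

/-- A nonzero divisible element in a torsionfree group yields a `ℚ` subgroup. -/
lemma my_rat {H : Type*} [AddCommGroup H]
    (tf : ∀ (x : H) (n : ℤ), n ≠ 0 → n • x = 0 → x = 0)
    (x : H) (hx : x ≠ 0) (hdiv : ∀ n : ℕ, 0 < n → ∃ y : H, (n : ℤ) • y = x) :
    ∃ S : AddSubgroup H, Nonempty (S ≃+ ℚ) := by
  choose Y hY using hdiv
  set y : ℕ → H := fun n => if hn : 0 < n then Y n hn else 0 with hydef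
  have hy : ∀ n : ℕ, 0 < n → (n : ℤ) • y n = x := by
    intro n hn; simp only [hydef, dif_pos hn]; exact hY n hn
  set F : ℚ → H := fun q => q.num • y q.den with hF
  have hden : ∀ q : ℚ, (q.den : ℤ) • F q = q.num • x := by
    intro q
    rw [hF]
    dsimp only
    rw [smul_comm, hy q.den q.pos]
  have hnum : ∀ s : ℚ, (s.num : ℚ) = s * s.den := by
    intro s
    exact (div_eq_iff (by exact_mod_cast s.den_nz : ((s.den : ℚ)) ≠ 0)).mp (Rat.num_div_den s)
  have hadd : ∀ q r : ℚ, F (q + r) = F q + F r := by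
    intro q r
    have hqd : ((q.den : ℤ)) ≠ 0 := by exact_mod_cast q.den_nz
    have hrd : ((r.den : ℤ)) ≠ 0 := by exact_mod_cast r.den_nz
    have hsd : (((q + r).den : ℤ)) ≠ 0 := by exact_mod_cast (q + r).den_nz
    apply my_cancel tf ((q.den : ℤ) * r.den * (q + r).den)
      (by exact mul_ne_zero (mul_ne_zero hqd hrd) hsd)
    have hid : ((q + r).num * (q.den * r.den) : ℤ) =
        (q.num * r.den + r.num * q.den) * (q + r).den := by
      have : (((q + r).num * (q.den * r.den) : ℤ) : ℚ) =
          (((q.num * r.den + r.num * q.den) * (q + r).den : ℤ) : ℚ) := by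
        push_cast
        rw [hnum (q + r), hnum q, hnum r]
        ring
      exact_mod_cast this
    have e1 : ((q.den : ℤ) * r.den * (q + r).den) • F (q + r)
        = ((q + r).num * (q.den * r.den)) • x := by
      rw [mul_smul, hden (q + r), smul_smul]
      ring_nf
    have e2 : ((q.den : ℤ) * r.den * (q + r).den) • (F q + F r)
        = ((q.num * r.den + r.num * q.den) * (q + r).den) • x := by
      rw [smul_add]
      have eq1 : ((q.den : ℤ) * r.den * (q + r).den) • F q
          = (q.num * (r.den * (q + r).den)) • x := by
        rw [show ((q.den : ℤ) * r.den * (q + r).den) = (r.den * (q + r).den) * q.den by ring,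
          mul_smul, hden q, smul_smul]
        ring_nf
      have eq2 : ((q.den : ℤ) * r.den * (q + r).den) • F r
          = (r.num * (q.den * (q + r).den)) • x := by
        rw [show ((q.den : ℤ) * r.den * (q + r).den) = (q.den * (q + r).den) * r.den by ring,
          mul_smul, hden r, smul_smul]
        ring_nf
      rw [eq1, eq2, ← add_smul]
      congr 1
      ring
    rw [e1, e2, hid]
  set Fhom : ℚ →+ H := AddMonoidHom.mk' F hadd with hFhom
  have hinj : Function.Injective Fhom := by
    rw [injective_iff_map_eq_zero]
    intro q hq0
    have h1 : (q.num : ℤ) • x = 0 := by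
      rw [← hden q]
      have : F q = 0 := hq0
      rw [this, smul_zero]
    have h2 : q.num = 0 := by
      by_contra hne
      exact hx (tf x q.num hne h1)
    exact Rat.num_eq_zero.mp h2
  exact ⟨Fhom.range, ⟨(AddMonoidHom.ofInjective hinj).symm⟩⟩

/-- Reduction: from a non-divisible nonzero element to a prime-indivisible one. -/
lemma my_reduce {H : Type*} [AddCommGroup H] :
    ∀ n : ℕ, ∀ x : H, 0 < n → x ≠ 0 → (¬ ∃ y : H, (n : ℤ) • y = x) →
      ∃ p : ℕ, p.Prime ∧ ∃ h : H, h ≠ 0 ∧ ¬ ∃ z : H, (p : ℤ) • z = h := by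
  intro n
  induction n using Nat.strong_induction_on with
  | _ n ih =>
    intro x hn hx0 hnx
    rcases eq_or_ne n 1 with rfl | hn1
    · exact absurd ⟨x, by simpa using one_smul ℤ x⟩ hnx
    · have hpp : n.minFac.Prime := Nat.minFac_prime hn1
      by_cases hpx : ∃ z : H, ((n.minFac : ℕ) : ℤ) • z = x
      · obtain ⟨z, hz⟩ := hpx
        have hz0 : z ≠ 0 := by
          rintro rfl
          rw [smul_zero] at hz
          exact hx0 hz.symm
        refine ih (n / n.minFac) (Nat.div_lt_self hn hpp.one_lt) z
          (Nat.div_pos (Nat.minFac_le hn) hpp.pos) hz0 ?_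
        rintro ⟨y, hy⟩
        refine hnx ⟨y, ?_⟩
        rw [show ((n : ℕ) : ℤ) = ((n.minFac : ℕ) : ℤ) * ((n / n.minFac : ℕ) : ℤ) by
          rw [← Nat.cast_mul, Nat.mul_div_cancel' (Nat.minFac_dvd n)], mul_smul, hy, hz]
      · exact ⟨n.minFac, hpp, x, hx0, hpx⟩

lemma my_natAbs {H : Type*} [AddCommGroup H] (x : H) (n : ℤ) (hnx : n • x = 0) :
    ((n.natAbs : ℕ) : ℤ) • x = 0 := by
  rcases Int.natAbs_eq n with h | h
  · rw [← h]; exact hnx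
  · have he : ((n.natAbs : ℕ) : ℤ) = -n := by omega
    rw [he, neg_zsmul, hnx, neg_zero]



lemma my_cofinite (U : Ultrafilter ℕ) (hU : ∀ a : ℕ, ({a} : Set ℕ) ∉ U)
    {s : Set ℕ} (hs : sᶜ.Finite) : s ∈ U := by
  have h1 : sᶜ ∉ U := by
    intro h
    have h2 : (⋃ a ∈ sᶜ, ({a} : Set ℕ)) ∈ U := by
      rwa [Set.biUnion_of_singleton]
    rcases (Ultrafilter.finite_biUnion_mem_iff hs).mp h2 with ⟨a, _, ha⟩
    exact hU a ha
  by_contra hmem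
  exact h1 (Ultrafilter.compl_mem_iff_notMem.mpr hmem)

section Padic

variable {H : Type*} [AddCommGroup H] (U : Ultrafilter ℕ)

/-- The P-adic embedding lemma. -/
lemma my_padic (hU : ∀ a : ℕ, ({a} : Set ℕ) ∉ U) (π : (ℕ → ℤ) →+ H)
    (hπeq : ∀ w w' : ℕ → ℤ, {n | w n = w' n} ∈ U → π w = π w')
    (tf : ∀ (x : H) (n : ℤ), n ≠ 0 → n • x = 0 → x = 0)
    (nodiv : ∀ x : H, (∀ n : ℕ, 0 < n → ∃ y : H, (n : ℤ) • y = x) → x = 0)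
    (p : ℕ) [hpf : Fact p.Prime] (g : ℕ → ℤ) (hh0 : π g ≠ 0)
    (hnph : ¬ ∃ z : H, (p : ℤ) • z = π g) :
    ∃ S : AddSubgroup H, Nonempty (S ≃+ PadicInt p) := by
  have hpp : p.Prime := hpf.out
  -- divisibility on a large set gives divisibility of the image
  have πdvd : ∀ (w : ℕ → ℤ) (m : ℤ), {n | m ∣ w n} ∈ U → ∃ y : H, m • y = π w := by
    intro w m hs
    refine ⟨π (fun n => w n / m), ?_⟩
    rw [← map_zsmul]
    apply hπeq _ w
    refine Filter.mem_of_superset hs ?_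
    intro n hn
    show (m • fun k => w k / m) n = w n
    simp only [Pi.smul_apply, smul_eq_mul]
    exact Int.mul_ediv_cancel' hn
  -- the prime-free part of n!
  set c : ℕ → ℕ := fun n => (n.factorial / p ^ (n.factorial).factorization p) with hc
  have hccop : ∀ n, Nat.Coprime p (c n) := fun n =>
    Nat.coprime_ordCompl hpp (Nat.factorial_ne_zero n)
  -- approximation integers
  have exr : ∀ (a : ℤ_[p]) (n : ℕ), ∃ r : ℤ, (c n : ℤ) ∣ r ∧ (p : ℤ_[p]) ^ n ∣ (a - r) := by
    intro a n
    have hunit : IsUnit ((c n : ℤ) : ℤ_[p]) := by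
      rw [PadicInt.isUnit_iff]
      refine le_antisymm (PadicInt.norm_le_one _) ?_
      by_contra hlt
      push_neg at hlt
      have h1 : (p : ℤ) ∣ ((c n : ℕ) : ℤ) := (PadicInt.norm_int_lt_one_iff_dvd _).mp hlt
      have h2 : p ∣ c n := by exact_mod_cast h1
      exact hpp.ne_one (Nat.dvd_one.mp ((hccop n) ▸ Nat.dvd_gcd dvd_rfl h2))
    obtain ⟨u, hu⟩ := hunit
    refine ⟨(c n : ℤ) * (((↑u⁻¹ : ℤ_[p]) * a).appr n), ⟨_, rfl⟩, ?_⟩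
    have hspec := PadicInt.appr_spec n ((↑u⁻¹ : ℤ_[p]) * a)
    rw [Ideal.mem_span_singleton] at hspec
    obtain ⟨d, hd⟩ := hspec
    refine ⟨(u : ℤ_[p]) * d, ?_⟩
    have hcast : (((c n : ℤ) * (((↑u⁻¹ : ℤ_[p]) * a).appr n) : ℤ) : ℤ_[p])
        = (u : ℤ_[p]) * ((((↑u⁻¹ : ℤ_[p]) * a).appr n : ℕ) : ℤ_[p]) := by
      push_cast at hu ⊢
      rw [← hu]
    rw [hcast]
    calc a - (u : ℤ_[p]) * ((((↑u⁻¹ : ℤ_[p]) * a).appr n : ℕ) : ℤ_[p])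
        = (u : ℤ_[p]) * (((↑u⁻¹ : ℤ_[p]) * a) - ((((↑u⁻¹ : ℤ_[p]) * a).appr n : ℕ) : ℤ_[p])) := by
          rw [mul_sub, Units.mul_inv_cancel_left]
      _ = (u : ℤ_[p]) * ((p : ℤ_[p]) ^ n * d) := by rw [hd]
      _ = (p : ℤ_[p]) ^ n * ((u : ℤ_[p]) * d) := by ring
  choose r hr1 hr2 using exr
  -- transfer of p-power divisibility
  have trans : ∀ (k : ℕ) (m : ℤ), ((p : ℤ_[p]) ^ k ∣ (m : ℤ_[p])) ↔ ((p : ℤ) ^ k ∣ m) :=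
    fun k m => PadicInt.pow_p_dvd_int_iff k m
  -- additivity
  have hFadd : ∀ a b : ℤ_[p], π (fun n => r (a + b) n * g n)
      = π (fun n => r a n * g n) + π (fun n => r b n * g n) := by
    intro a b
    have hdiff : ∀ m : ℕ, 0 < m → ∃ y : H, ((m : ℕ) : ℤ) • y =
        π (fun n => r a n * g n) + π (fun n => r b n * g n)
          - π (fun n => r (a + b) n * g n) := by
      intro m hm
      have hre : π (fun n => r a n * g n) + π (fun n => r b n * g n)
          - π (fun n => r (a + b) n * g n)
          = π (fun n => (r a n + r b n - r (a + b) n) * g n) := by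
        rw [← map_add, ← map_sub]
        congr 1
        funext n
        simp only [Pi.add_apply, Pi.sub_apply]
        ring
      rw [hre]
      apply πdvd
      apply my_cofinite U hU
      refine Set.Finite.subset (Set.finite_Iio (max m (m.factorization p))) ?_
      intro n hn
      simp only [Set.mem_compl_iff, Set.mem_setOf_eq] at hn
      by_contra hlt
      apply hn
      have hnm : max m (m.factorization p) ≤ n := by
        simp only [Set.mem_Iio, not_lt] at hlt
        exact hlt
      have hmn : m ≤ n := le_trans (le_max_left _ _) hnm
      have hαn : m.factorization p ≤ n := le_trans (le_max_right _ _) hnm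
      have hs1 : ((p : ℤ)) ^ n ∣ (r a n + r b n - r (a + b) n) := by
        rw [← trans]
        have hc1 : ((r a n + r b n - r (a + b) n : ℤ) : ℤ_[p])
            = ((a + b) - r (a + b) n) - ((a - r a n) + (b - r b n)) := by
          push_cast; ring
        rw [hc1]
        exact dvd_sub (hr2 (a + b) n) (dvd_add (hr2 a n) (hr2 b n))
      have hs2 : (c n : ℤ) ∣ (r a n + r b n - r (a + b) n) :=
        dvd_sub (dvd_add (hr1 a n) (hr1 b n)) (hr1 (a + b) n)
      have hβ : (m / p ^ m.factorization p) ∣ c n := by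
        have h1 : (m / p ^ m.factorization p) ∣ n.factorial :=
          dvd_trans (Nat.ordCompl_dvd m p) (Nat.dvd_factorial hm hmn)
        have h2 : Nat.Coprime (m / p ^ m.factorization p) (p ^ (n.factorial).factorization p) :=
          Nat.Coprime.pow_right _ (Nat.coprime_ordCompl hpp hm.ne').symm
        apply Nat.Coprime.dvd_of_dvd_mul_left h2
        simp only [hc]
        rwa [Nat.ordProj_mul_ordCompl_eq_self]
      have hmd : ((m : ℕ) : ℤ) ∣ (r a n + r b n - r (a + b) n) := by
        have hcopint : IsCoprime ((p ^ m.factorization p : ℕ) : ℤ)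
            ((m / p ^ m.factorization p : ℕ) : ℤ) :=
          Nat.isCoprime_iff_coprime.mpr
            ((Nat.coprime_ordCompl hpp hm.ne').pow_left _)
        have hd1 : ((p ^ m.factorization p : ℕ) : ℤ) ∣ (r a n + r b n - r (a + b) n) := by
          push_cast
          exact dvd_trans (pow_dvd_pow _ hαn) hs1
        have hd2 : ((m / p ^ m.factorization p : ℕ) : ℤ) ∣ (r a n + r b n - r (a + b) n) :=
          dvd_trans (Int.natCast_dvd_natCast.mpr hβ) hs2
        have hmul := hcopint.mul_dvd hd1 hd2
        rwa [← Nat.cast_mul, Nat.ordProj_mul_ordCompl_eq_self] at hmul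
      exact Dvd.dvd.mul_right hmd (g n)
    have h0 := nodiv _ (fun m hm => hdiff m hm)
    have := sub_eq_zero.mp h0
    exact this.symm
  -- approximation at level k
  have happr : ∀ (a : ℤ_[p]) (k : ℕ), ∃ y : H,
      ((p : ℤ) ^ k) • y = π (fun n => r a n * g n) - (r a k) • (π g) := by
    intro a k
    have hre : π (fun n => r a n * g n) - (r a k) • (π g)
        = π (fun n => (r a n - r a k) * g n) := by
      rw [← map_zsmul, ← map_sub]
      congr 1
      funext n
      simp only [Pi.sub_apply, Pi.smul_apply, smul_eq_mul]
      ring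
    rw [hre]
    apply πdvd
    apply my_cofinite U hU
    refine Set.Finite.subset (Set.finite_Iio k) ?_
    intro n hn
    simp only [Set.mem_compl_iff, Set.mem_setOf_eq] at hn
    by_contra hlt
    apply hn
    have hkn : k ≤ n := by
      simp only [Set.mem_Iio, not_lt] at hlt
      exact hlt
    have hs1 : ((p : ℤ)) ^ k ∣ (r a n - r a k) := by
      rw [← trans]
      have hc1 : ((r a n - r a k : ℤ) : ℤ_[p]) = (a - r a k) - (a - r a n) := by
        push_cast; ring
      rw [hc1]
      exact dvd_sub (hr2 a k) (dvd_trans (pow_dvd_pow _ hkn) (hr2 a n))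
    exact Dvd.dvd.mul_right hs1 (g n)
  -- the homomorphism
  set Ψ : ℤ_[p] →+ H := AddMonoidHom.mk' (fun a => π (fun n => r a n * g n))
    (fun a b => hFadd a b) with hΨ
  have hinj : Function.Injective Ψ := by
    rw [injective_iff_map_eq_zero]
    intro a ha
    by_contra ha0
    have hΨa : π (fun n => r a n * g n) = 0 := ha
    set M := a.valuation with hM
    have hvM : (M : ℤ) = a.valuation := rfl
    have hdvd_iff : ∀ k : ℕ, ((p : ℤ_[p]) ^ k ∣ a ↔ (k : ℤ) ≤ a.valuation) := by
      intro k
      rw [← Ideal.mem_span_singleton, ← PadicInt.norm_le_pow_iff_mem_span_pow,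
        PadicInt.norm_le_pow_iff_le_valuation a ha0, Nat.cast_le]
    have hdM : (p : ℤ_[p]) ^ M ∣ a := (hdvd_iff M).mpr (le_of_eq hvM)
    have hdM1 : ¬ (p : ℤ_[p]) ^ (M + 1) ∣ a := by
      rw [hdvd_iff, ← hvM]
      push_cast
      omega
    obtain ⟨y, hy⟩ := happr a (M + 1)
    rw [hΨa, zero_sub] at hy
    have hRh : (r a (M + 1)) • (π g) = ((p : ℤ) ^ (M + 1)) • (-y) := by
      rw [smul_neg, hy, neg_neg]
    have hpR : ((p : ℤ)) ^ M ∣ r a (M + 1) := by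
      rw [← trans]
      have hc1 : ((r a (M + 1) : ℤ) : ℤ_[p]) = a - (a - r a (M + 1)) := by ring
      rw [hc1]
      exact dvd_sub hdM (dvd_trans (pow_dvd_pow _ (Nat.le_succ M)) (hr2 a (M + 1)))
    have hpR1 : ¬ ((p : ℤ)) ^ (M + 1) ∣ r a (M + 1) := by
      intro hdvd
      apply hdM1
      have hc1 : a = (a - r a (M + 1)) + r a (M + 1) := by ring
      rw [hc1]
      exact dvd_add (hr2 a (M + 1)) ((trans _ _).mpr hdvd)
    obtain ⟨s, hs⟩ := hpR
    have hps : ¬ (p : ℤ) ∣ s := by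
      intro hd
      apply hpR1
      rw [hs, pow_succ]
      exact mul_dvd_mul_left _ hd
    have hcop : IsCoprime ((p : ℤ)) s := by
      rw [Int.isCoprime_iff_gcd_eq_one]
      have hgcd : Int.gcd (p : ℤ) s = Nat.gcd p s.natAbs := by simp [Int.gcd]
      rw [hgcd]
      refine (Nat.Prime.coprime_iff_not_dvd hpp).mpr ?_
      intro hd
      exact hps (dvd_trans (Int.natCast_dvd_natCast.mpr hd) (Int.natAbs_dvd.mpr dvd_rfl))
    obtain ⟨u, v, huv⟩ := hcop
    have hRs : (((p : ℤ) ^ M * s)) • (π g) = ((p : ℤ) ^ (M + 1)) • (-y) := by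
      rw [← hs]; exact hRh
    have e1 : ((p : ℤ) ^ M) • (π g)
        = (u * (p : ℤ) ^ (M + 1)) • (π g) + v • (((p : ℤ) ^ M * s) • (π g)) := by
      rw [smul_smul, ← add_smul]
      congr 1
      linear_combination (-((p : ℤ) ^ M)) * huv
    have e2 : ((p : ℤ) ^ M) • (π g)
        = (u * (p : ℤ) ^ (M + 1)) • (π g) + v • (((p : ℤ) ^ (M + 1)) • (-y)) := by
      rw [e1, hRs]
    have e3 : (u * (p : ℤ) ^ (M + 1)) • (π g) + v • (((p : ℤ) ^ (M + 1)) • (-y))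
        = ((p : ℤ) ^ M) • ((p : ℤ) • (u • (π g) + v • (-y))) := by
      module
    have e : ((p : ℤ) ^ M) • (π g) = ((p : ℤ) ^ M) • ((p : ℤ) • (u • (π g) + v • (-y))) := by
      rw [e2, e3]
    have hfin : π g = (p : ℤ) • (u • (π g) + v • (-y)) :=
      my_cancel tf ((p : ℤ) ^ M) (pow_ne_zero _ (by exact_mod_cast hpp.ne_zero)) _ _ e
    exact hnph ⟨u • (π g) + v • (-y), hfin.symm⟩
  exact ⟨Ψ.range, ⟨(AddMonoidHom.ofInjective hinj).symm⟩⟩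

end Padic

/-- for a non-principal ultrafilter `U` on `ℕ`, the ultrapower `ℤ^ω/U`
is never the union of an increasing chain `⟨B_α : α < δ⟩` of proper subgroups with
all quotients `(ℤ^ω/U)/B_α` cotorsionfree. -/
theorem statement7 (U : Ultrafilter ℕ) (hU : ∀ a : ℕ, ({a} : Set ℕ) ∉ U) :
    ¬ ∃ (δ : Ordinal) (B : Ordinal → AddSubgroup ((ℕ → ℤ) ⧸ KU U)),
      (∀ α β : Ordinal, α ≤ β → β < δ → B α ≤ B β) ∧
      (∀ α < δ, B α ≠ ⊤) ∧
      (∀ α < δ, Cotorsionfree (((ℕ → ℤ) ⧸ KU U) ⧸ B α)) ∧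
      (⋃ α ∈ Set.Iio δ, (B α : Set ((ℕ → ℤ) ⧸ KU U))) = Set.univ := by
  rintro ⟨δ, B, -, hproper, hcf, hunion⟩
  have h0 : (0 : (ℕ → ℤ) ⧸ KU U) ∈ ⋃ α ∈ Set.Iio δ, (B α : Set ((ℕ → ℤ) ⧸ KU U)) := by
    rw [hunion]; exact Set.mem_univ 0
  rw [Set.mem_iUnion₂] at h0
  obtain ⟨α, hα, -⟩ := h0
  obtain ⟨hq, hzmod, hpadic⟩ := hcf α hα
  let π : (ℕ → ℤ) →+ (((ℕ → ℤ) ⧸ KU U) ⧸ B α) :=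
    (QuotientAddGroup.mk' (B α)).comp (QuotientAddGroup.mk' (KU U))
  have πsurj : Function.Surjective π :=
    (QuotientAddGroup.mk'_surjective (B α)).comp (QuotientAddGroup.mk'_surjective (KU U))
  have πeq : ∀ w w' : ℕ → ℤ, {n | w n = w' n} ∈ U → π w = π w' := by
    intro w w' hs
    have h1 : (QuotientAddGroup.mk' (KU U)) w = (QuotientAddGroup.mk' (KU U)) w' := by
      rw [QuotientAddGroup.mk'_eq_mk']
      refine ⟨w' - w, ?_, by abel⟩
      show {n | (w' - w) n = 0} ∈ U
      refine Filter.mem_of_superset hs ?_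
      intro n hn
      simp only [Set.mem_setOf_eq] at hn ⊢
      simp [hn]
    show (QuotientAddGroup.mk' (B α)) ((QuotientAddGroup.mk' (KU U)) w)
      = (QuotientAddGroup.mk' (B α)) ((QuotientAddGroup.mk' (KU U)) w')
    rw [h1]
  obtain ⟨x0, hx0⟩ : ∃ x : (((ℕ → ℤ) ⧸ KU U) ⧸ B α), x ≠ 0 := by
    by_contra hall
    push_neg at hall
    apply hproper α hα
    rw [AddSubgroup.eq_top_iff']
    intro z
    exact (QuotientAddGroup.eq_zero_iff z).mp (hall _)
  have tf : ∀ (x : (((ℕ → ℤ) ⧸ KU U) ⧸ B α)) (n : ℤ), n ≠ 0 → n • x = 0 → x = 0 := by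
    intro x n hn hnx
    by_contra hx
    have hnat : ((n.natAbs : ℕ) : ℤ) • x = 0 := my_natAbs x n hnx
    obtain ⟨p, hpp, S, hS⟩ := my_zmod x n.natAbs (Int.natAbs_pos.mpr hn) hx hnat
    exact hzmod p hpp ⟨S, hS⟩
  have nodiv : ∀ x : (((ℕ → ℤ) ⧸ KU U) ⧸ B α),
      (∀ n : ℕ, 0 < n → ∃ y, (n : ℤ) • y = x) → x = 0 := by
    intro x hdiv
    by_contra hx
    obtain ⟨S, hS⟩ := my_rat tf x hx hdiv
    exact hq ⟨S, hS⟩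
  obtain ⟨n0, hn0, hn0x⟩ : ∃ n : ℕ, 0 < n ∧ ¬ ∃ y, (n : ℤ) • y = x0 := by
    by_contra hall
    push_neg at hall
    exact hx0 (nodiv x0 (fun n hn => hall n hn))
  obtain ⟨p, hpp, h, hh0, hnph⟩ := my_reduce n0 x0 hn0 hx0 hn0x
  obtain ⟨g, hg⟩ := πsurj h
  haveI : Fact p.Prime := ⟨hpp⟩
  obtain ⟨S, hS⟩ := my_padic (H := ((ℕ → ℤ) ⧸ KU U) ⧸ B α) U hU π πeq tf nodiv p g
    (by rw [hg]; exact hh0) (by rw [hg]; exact hnph)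
  exact hpadic p ⟨S, hS⟩
end
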